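/- arXiv:1805.11645 — 6 statements merged into one kernel-verified Lean document; each statement's English description precedes it below -/
import Mathlib

section
/- Suppose in addition that ρ_i and β_i are continuous on [0, b̄_i] for every i ∈ I and that p is finite on all of ℝ^K. Then for every λ ∈ ℝ^K, the subdifferential of the dual function Q at λ equals the convex hull of the set { y − Σ_{i ∈ I} v_i(x_i, b_i) : (x_i, b_i) ∈ S_i*(λ) for each i ∈ I, and y is a subgradient of p at λ }. -/
open scoped BigOperators Classical
open Set Filter

set_option maxHeartbeats 1000000

section AuxStmt4

lemma clm_repr {K : Type*} [Fintype K] [DecidableEq K] (f : (K → ℝ) →L[ℝ] ℝ) (x : K → ℝ) :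
    f x = ∑ k, x k * f (Pi.single k 1) := by
  have hx : x = ∑ k, x k • (Pi.single k (1:ℝ) : K → ℝ) := by
    ext j
    simp [Pi.single_apply, Finset.sum_apply, mul_ite]
  conv_lhs => rw [hx]
  rw [map_sum]
  simp [smul_eq_mul]

lemma sum_extend {n : ℕ} {ι : Type*} [Fintype ι] {M : Type*} [AddCommMonoid M] (e : ι ↪ Fin n)
    (f : Fin n → M) (g : ι → M)
    (h1 : ∀ i, f (e i) = g i) (h2 : ∀ j, (¬ ∃ i, e i = j) → f j = 0) :
    ∑ j, f j = ∑ i, g i := by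
  classical
  rw [← Finset.sum_subset (Finset.subset_univ (Finset.univ.image e))
    (fun j _ hj => h2 j (by simpa using hj))]
  rw [Finset.sum_image (fun i _ j _ hij => e.injective hij)]
  exact Finset.sum_congr rfl fun i _ => h1 i

lemma isCompact_convexHull'' {E : Type*} [NormedAddCommGroup E] [NormedSpace ℝ E]
    [FiniteDimensional ℝ E] {s : Set E} (hs : IsCompact s) (hne : s.Nonempty) :
    IsCompact (convexHull ℝ s) := by
  obtain ⟨x₀, hx₀⟩ := hne
  set n := Module.finrank ℝ E + 1 with hn
  have himg : convexHull ℝ s =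
      (fun q : (Fin n → ℝ) × (Fin n → E) => ∑ j, q.1 j • q.2 j) ''
        (stdSimplex ℝ (Fin n) ×ˢ Set.univ.pi fun _ => s) := by
    apply Set.Subset.antisymm
    · intro x hx
      obtain ⟨ι, hι, z, w, hzs, hai, hw0, hw1, hwx⟩ :=
        eq_pos_convex_span_of_mem_convexHull hx
      have hcard : Fintype.card ι ≤ n := by
        refine le_trans hai.card_le_finrank_succ ?_
        have := Submodule.finrank_le (vectorSpan ℝ (Set.range z))
        omega
      obtain ⟨e⟩ : Nonempty (ι ↪ Fin n) := by
        rw [Function.Embedding.nonempty_iff_card_le]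
        simpa using hcard
      classical
      set w' : Fin n → ℝ := Function.extend e w 0 with hw'
      set z' : Fin n → E := Function.extend e z (fun _ => x₀) with hz'
      have hwe : ∀ i, w' (e i) = w i := fun i => e.injective.extend_apply w 0 i
      have hze : ∀ i, z' (e i) = z i := fun i => e.injective.extend_apply z _ i
      have hw0' : ∀ j, (¬ ∃ i, e i = j) → w' j = 0 := fun j hj => by
        rw [hw', Function.extend_apply' _ _ _ hj]; rfl
      have hz0' : ∀ j, (¬ ∃ i, e i = j) → z' j = x₀ := fun j hj => by
        rw [hz', Function.extend_apply' _ _ _ hj]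
      refine ⟨⟨w', z'⟩, ⟨⟨fun j => ?_, ?_⟩, fun j _ => ?_⟩, ?_⟩
      · show 0 ≤ w' j
        by_cases hj : ∃ i, e i = j
        · obtain ⟨i, rfl⟩ := hj; rw [hwe]; exact (hw0 i).le
        · rw [hw0' j hj]
      · show ∑ j, w' j = 1
        rw [sum_extend e w' w hwe hw0']; exact hw1
      · show z' j ∈ s
        by_cases hj : ∃ i, e i = j
        · obtain ⟨i, rfl⟩ := hj; rw [hze]; exact hzs ⟨i, rfl⟩
        · rw [hz0' j hj]; exact hx₀
      · show ∑ j, w' j • z' j = x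
        rw [← hwx]
        exact sum_extend e _ _ (fun i => by rw [hwe, hze])
          (fun j hj => by rw [hw0' j hj, zero_smul])
    · intro x hx
      obtain ⟨q, hq, hqx⟩ := hx
      have hw := (Set.mem_prod.mp hq).1
      have hz := (Set.mem_prod.mp hq).2
      rw [← hqx]
      exact (convex_convexHull ℝ s).sum_mem (fun j _ => hw.1 j) hw.2
        fun j _ => subset_convexHull ℝ s (hz j trivial)
  rw [himg]
  exact (((isCompact_stdSimplex _ _).prod (isCompact_univ_pi fun _ => hs)).image
    (continuous_finset_sum _ fun j _ =>
      ((continuous_apply j).comp continuous_fst).smul ((continuous_apply j).comp continuous_snd)))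
-- assume a1 lemmas present
variable {K : Type*} [Fintype K] [DecidableEq K]

lemma mem_convexHull_of_dot_le {W : Set (K → ℝ)} (hW : IsCompact W) (hne : W.Nonempty)
    {g : K → ℝ} (hg : ∀ d : K → ℝ, ∃ w ∈ W, ∑ k, g k * d k ≤ ∑ k, w k * d k) :
    g ∈ convexHull ℝ W := by
  by_contra hgc
  obtain ⟨f, u, hfa, hfg⟩ := geometric_hahn_banach_closed_point (convex_convexHull ℝ W)
    ((isCompact_convexHull'' hW hne).isClosed) hgc
  obtain ⟨w, hwW, hle⟩ := hg (fun k => f (Pi.single k 1))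
  have h1 : f w < u := hfa w (subset_convexHull ℝ W hwW)
  have h2 := clm_repr f g
  have h3 := clm_repr f w
  linarith

lemma subgrad_add {f₁ f₂ : (K → ℝ) → ℝ}
    (h₁ : ConvexOn ℝ Set.univ f₁) (h₂ : ConvexOn ℝ Set.univ f₂) (hc : Continuous f₁)
    {lam g : K → ℝ}
    (hg : ∀ mu, f₁ lam + f₂ lam + ∑ k, g k * (mu k - lam k) ≤ f₁ mu + f₂ mu) :
    ∃ g₁ g₂ : K → ℝ, (∀ mu, f₁ lam + ∑ k, g₁ k * (mu k - lam k) ≤ f₁ mu) ∧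
      (∀ mu, f₂ lam + ∑ k, g₂ k * (mu k - lam k) ≤ f₂ mu) ∧ g = g₁ + g₂ := by
  set D₁ : (K → ℝ) → ℝ := fun a => f₁ (lam + a) - f₁ lam - ∑ k, g k * a k with hD₁
  set D₂ : (K → ℝ) → ℝ := fun a => f₂ (lam + a) - f₂ lam with hD₂
  have hg' : ∀ a, -D₂ a ≤ D₁ a := by
    intro a
    have := hg (lam + a)
    simp only [Pi.add_apply, add_sub_cancel_left] at this
    simp only [hD₁, hD₂]
    linarith
  have hconv : ∀ (f : (K → ℝ) → ℝ), ConvexOn ℝ Set.univ f →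
      ∀ (a b : K → ℝ) (θ σ : ℝ), 0 ≤ θ → 0 ≤ σ → θ + σ = 1 →
      f (lam + (θ • a + σ • b)) ≤ θ * f (lam + a) + σ * f (lam + b) := by
    intro f hf a b θ σ hθ hσ hθσ
    have key : lam + (θ • a + σ • b) = θ • (lam + a) + σ • (lam + b) := by
      rw [smul_add, smul_add]
      rw [show θ • lam + θ • a + (σ • lam + σ • b) = (θ • lam + σ • lam) + (θ • a + σ • b) by abel]
      rw [← add_smul, hθσ, one_smul]
    rw [key]
    exact hf.2 (mem_univ _) (mem_univ _) hθ hσ hθσ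
  have hlin : ∀ (a b : K → ℝ) (θ σ : ℝ),
      ∑ k, g k * (θ • a + σ • b) k = θ * ∑ k, g k * a k + σ * ∑ k, g k * b k := by
    intro a b θ σ
    rw [Finset.mul_sum, Finset.mul_sum, ← Finset.sum_add_distrib]
    refine Finset.sum_congr rfl fun k _ => by simp [smul_eq_mul]; ring
  have hD₁conv : ∀ (a b : K → ℝ) (θ σ : ℝ), 0 ≤ θ → 0 ≤ σ → θ + σ = 1 →
      D₁ (θ • a + σ • b) ≤ θ * D₁ a + σ * D₁ b := by
    intro a b θ σ hθ hσ hθσ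
    have := hconv f₁ h₁ a b θ σ hθ hσ hθσ
    have hl := hlin a b θ σ
    simp only [hD₁]
    have : f₁ lam = (θ + σ) * f₁ lam := by rw [hθσ, one_mul]
    nlinarith [hconv f₁ h₁ a b θ σ hθ hσ hθσ]
  have hD₂conv : ∀ (a b : K → ℝ) (θ σ : ℝ), 0 ≤ θ → 0 ≤ σ → θ + σ = 1 →
      D₂ (θ • a + σ • b) ≤ θ * D₂ a + σ * D₂ b := by
    intro a b θ σ hθ hσ hθσ
    have := hconv f₂ h₂ a b θ σ hθ hσ hθσ
    simp only [hD₂]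
    have h2 : f₂ lam = (θ + σ) * f₂ lam := by rw [hθσ, one_mul]
    nlinarith
  set A : Set ((K → ℝ) × ℝ) := {q | D₁ q.1 < q.2} with hA
  set B : Set ((K → ℝ) × ℝ) := {q | q.2 ≤ -D₂ q.1} with hB
  have hAopen : IsOpen A := by
    have hcD : Continuous fun q : (K → ℝ) × ℝ => D₁ q.1 := by
      apply Continuous.sub
      apply Continuous.sub
      · exact hc.comp (continuous_const.add continuous_fst)
      · exact continuous_const
      · exact continuous_finset_sum _ fun k _ =>
          continuous_const.mul ((continuous_apply k).comp continuous_fst)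
    exact isOpen_lt hcD continuous_snd
  have hAconv : Convex ℝ A := by
    rintro ⟨a, t⟩ ha ⟨b, t'⟩ hb θ σ hθ hσ hθσ
    simp only [hA, mem_setOf_eq] at ha hb ⊢
    calc D₁ (θ • a + σ • b) ≤ θ * D₁ a + σ * D₁ b := hD₁conv a b θ σ hθ hσ hθσ
      _ < θ * t + σ * t' := by
        rcases eq_or_lt_of_le hθ with h0 | h0
        · rw [← h0] at hθσ ⊢
          simp only [zero_mul, zero_add] at hθσ ⊢
          rw [hθσ]; simpa using hb
        · rcases eq_or_lt_of_le hσ with h0' | h0'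
          · rw [← h0'] at hθσ ⊢
            simp only [zero_mul, add_zero] at hθσ ⊢
            rw [hθσ]; simpa using ha
          · exact add_lt_add (by exact (mul_lt_mul_iff_right₀ h0).mpr ha)
              ((mul_lt_mul_iff_right₀ h0').mpr hb)
      _ = (θ • (a, t) + σ • (b, t')).2 := by simp [smul_eq_mul]
  have hBconv : Convex ℝ B := by
    rintro ⟨a, t⟩ ha ⟨b, t'⟩ hb θ σ hθ hσ hθσ
    simp only [hB, mem_setOf_eq] at ha hb ⊢
    have h2 := hD₂conv a b θ σ hθ hσ hθσ
    have : θ * t + σ * t' ≤ θ * (-D₂ a) + σ * (-D₂ b) :=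
      add_le_add (mul_le_mul_of_nonneg_left ha hθ) (mul_le_mul_of_nonneg_left hb hσ)
    simp only [smul_eq_mul, Prod.snd_add, Prod.smul_snd, Prod.fst_add, Prod.smul_fst]
    have e1 : θ * -D₂ a = -(θ * D₂ a) := by ring
    have e2 : σ * -D₂ b = -(σ * D₂ b) := by ring
    linarith
  have hdisj : Disjoint A B := by
    rw [Set.disjoint_left]
    rintro ⟨a, t⟩ ha hb
    simp only [hA, hB, mem_setOf_eq] at ha hb
    have := hg' a
    linarith
  obtain ⟨f, u, hfa, hfb⟩ := geometric_hahn_banach_open hAconv hAopen hBconv hdisj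
  set ℓ : (K → ℝ) →L[ℝ] ℝ := f.comp (ContinuousLinearMap.inl ℝ (K → ℝ) ℝ) with hℓ
  set α : ℝ := f (0, 1) with hα
  have hsplit : ∀ (a : K → ℝ) (t : ℝ), f (a, t) = ℓ a + t * α := by
    intro a t
    have : (a, t) = (a, (0:ℝ)) + t • ((0 : K → ℝ), (1:ℝ)) := by
      simp [Prod.ext_iff]
    rw [this, map_add, map_smul]
    simp [hℓ, smul_eq_mul, hα]
  have hD₁0 : D₁ 0 = 0 := by simp [hD₁]
  have hD₂0 : D₂ 0 = 0 := by simp [hD₂]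
  have hmA : ∀ (a : K → ℝ) (ε : ℝ), 0 < ε → ℓ a + (D₁ a + ε) * α < u := by
    intro a ε hε
    have : (a, D₁ a + ε) ∈ A := by simp [hA]; linarith
    have := hfa _ this
    rwa [hsplit] at this
  have hmB : ∀ a : K → ℝ, u ≤ ℓ a + (-D₂ a) * α := by
    intro a
    have : (a, -D₂ a) ∈ B := by simp [hB]
    have := hfb _ this
    rwa [hsplit] at this
  have hu0 : u ≤ 0 := by
    have h := hmB 0
    simp only [hD₂0, map_zero, neg_zero, zero_mul, add_zero, zero_add] at h
    exact h
  have hαneg : α < 0 := by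
    rcases lt_trichotomy α 0 with h | h | h
    · exact h
    · exfalso
      have h2 := hmA 0 1 one_pos
      simp only [hD₁0, map_zero, zero_add, one_mul, h, mul_zero, add_zero] at h2
      linarith
    · exfalso
      have := hmA 0 ((|u| + 1) / α) (by positivity)
      simp only [map_zero, hD₁0, zero_add] at this
      rw [div_mul_cancel₀ _ (ne_of_gt h)] at this
      cases abs_cases u with
      | inl hc => linarith [hc.1]
      | inr hc => linarith [hc.1]
  have hα0 : α ≠ 0 := ne_of_lt hαneg
  have hkey1 : ∀ a : K → ℝ, ℓ a + D₁ a * α ≤ u := by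
    intro a
    by_contra hX
    push_neg at hX
    have hε : 0 < (ℓ a + D₁ a * α - u) / (-α) := by
      apply div_pos (by linarith) (by linarith)
    have := hmA a _ hε
    have heq : (D₁ a + (ℓ a + D₁ a * α - u) / (-α)) * α
        = D₁ a * α - (ℓ a + D₁ a * α - u) := by
      rw [add_mul, div_mul_eq_mul_div, mul_div_assoc, div_neg, div_self hα0]
      ring
    rw [heq] at this
    linarith
  have hu0' : 0 ≤ u := by
    have h := hkey1 0
    simp only [hD₁0, map_zero, zero_mul, add_zero, zero_add] at h
    exact h
  have huz : u = 0 := le_antisymm hu0 hu0'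
  set e : K → ℝ := fun k => ℓ (Pi.single k 1) / (-α) with he
  have hℓe : ∀ a : K → ℝ, ℓ a = (-α) * ∑ k, a k * e k := by
    intro a
    rw [clm_repr ℓ a, Finset.mul_sum]
    refine Finset.sum_congr rfl fun k _ => ?_
    rw [he]
    field_simp
  have hkeyA : ∀ a : K → ℝ, ∑ k, a k * e k ≤ D₁ a := by
    intro a
    have := hkey1 a
    rw [hℓe, huz] at this
    have h2 : (-α) * ∑ k, a k * e k ≤ (-α) * D₁ a := by nlinarith
    exact le_of_mul_le_mul_left h2 (by linarith)
  have hkeyB : ∀ a : K → ℝ, -∑ k, a k * e k ≤ D₂ a := by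
    intro a
    have := hmB a
    rw [hℓe, huz] at this
    have h2 : (-α) * (-∑ k, a k * e k) ≤ (-α) * D₂ a := by nlinarith
    exact le_of_mul_le_mul_left h2 (by linarith)
  refine ⟨g + e, -e, ?_, ?_, by ext k; simp⟩
  · intro mu
    have := hkeyA (mu - lam)
    simp only [hD₁, add_sub_cancel, Pi.sub_apply] at this
    have hs : ∑ k, (g + e) k * (mu k - lam k)
        = ∑ k, g k * (mu k - lam k) + ∑ k, (mu k - lam k) * e k := by
      rw [← Finset.sum_add_distrib]
      exact Finset.sum_congr rfl fun k _ => by simp [Pi.add_apply]; ring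
    rw [hs]
    linarith
  · intro mu
    have := hkeyB (mu - lam)
    simp only [hD₂, add_sub_cancel, Pi.sub_apply] at this
    have hs : ∑ k, (-e) k * (mu k - lam k) = -∑ k, (mu k - lam k) * e k := by
      rw [← Finset.sum_neg_distrib]
      exact Finset.sum_congr rfl fun k _ => by simp; ring
    rw [hs]
    linarith

variable {K : Type*} [Fintype K] [DecidableEq K]

lemma ereal_coe_sum {ι : Type*} (s : Finset ι) (f : ι → ℝ) :
    ((∑ i ∈ s, f i : ℝ) : EReal) = ∑ i ∈ s, ((f i : ℝ) : EReal) := by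
  classical
  induction s using Finset.induction_on with
  | empty => simp
  | insert a t hns ih => rw [Finset.sum_insert hns, Finset.sum_insert hns,
      EReal.coe_add, ih]

lemma convexOn_finset_sum {ι : Type*} (s : Finset ι) {F : ι → (K → ℝ) → ℝ}
    (hF : ∀ i ∈ s, ConvexOn ℝ Set.univ (F i)) :
    ConvexOn ℝ Set.univ (fun x => ∑ i ∈ s, F i x) := by
  classical
  induction s using Finset.induction_on with
  | empty => simpa using convexOn_const (0:ℝ) convex_univ
  | insert a t hns ih =>
      simp only [Finset.sum_insert hns]
      exact (hF a (Finset.mem_insert_self a t)).add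
        (ih fun i hi => hF i (Finset.mem_insert_of_mem hi))

lemma subgrad_finset_sum {ι : Type*} (s : Finset ι) {F : ι → (K → ℝ) → ℝ}
    (hF : ∀ i ∈ s, ConvexOn ℝ Set.univ (F i)) (hFc : ∀ i ∈ s, Continuous (F i))
    {G : (K → ℝ) → ℝ} (hG : ConvexOn ℝ Set.univ G) {lam g : K → ℝ}
    (hg : ∀ mu, (G lam + ∑ i ∈ s, F i lam) + ∑ k, g k * (mu k - lam k)
      ≤ G mu + ∑ i ∈ s, F i mu) :
    ∃ (y : K → ℝ) (gg : ι → (K → ℝ)),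
      (∀ mu, G lam + ∑ k, y k * (mu k - lam k) ≤ G mu) ∧
      (∀ i ∈ s, ∀ mu, F i lam + ∑ k, gg i k * (mu k - lam k) ≤ F i mu) ∧
      g = y + ∑ i ∈ s, gg i := by
  classical
  induction s using Finset.induction_on generalizing g with
  | empty =>
      refine ⟨g, fun _ => 0, fun mu => by simpa using hg mu, by simp, by simp⟩
  | insert a t hns ih =>
      have h1 : ∀ mu, F a mu + (G mu + ∑ i ∈ t, F i mu)
          = G mu + ∑ i ∈ insert a t, F i mu := by
        intro mu; rw [Finset.sum_insert hns]; ring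
      obtain ⟨g₁, g₂, hg₁, hg₂, hsum⟩ := subgrad_add
        (f₁ := F a) (f₂ := fun mu => G mu + ∑ i ∈ t, F i mu)
        (hF a (Finset.mem_insert_self a t))
        (hG.add (convexOn_finset_sum t fun i hi => hF i (Finset.mem_insert_of_mem hi)))
        (hFc a (Finset.mem_insert_self a t))
        (fun mu => by rw [h1, h1]; exact hg mu)
      obtain ⟨y, gg, hy, hgg, hgsum⟩ := ih
        (fun i hi => hF i (Finset.mem_insert_of_mem hi))
        (fun i hi => hFc i (Finset.mem_insert_of_mem hi)) hg₂
      refine ⟨y, fun i => if i = a then g₁ else gg i, hy, ?_, ?_⟩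
      · intro i hi mu
        rcases Finset.mem_insert.mp hi with rfl | hi'
        · simpa using hg₁ mu
        · have hne : i ≠ a := fun hia => hns (hia ▸ hi')
          simpa [hne] using hgg i hi' mu
      · rw [Finset.sum_insert hns, if_pos rfl]
        have : ∑ i ∈ t, (if i = a then g₁ else gg i) = ∑ i ∈ t, gg i :=
          Finset.sum_congr rfl fun i hi => by
            have hne : i ≠ a := fun hia => hns (hia ▸ hi)
            simp [hne]
        rw [this, hsum, hgsum]
        ext k; simp; ring

variable {K : Type*} [Fintype K] [DecidableEq K]

lemma danskin {C : Type*} [TopologicalSpace C] [FirstCountableTopology C]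
    {T : Set C} (hT : IsCompact T)
    (a : C → ℝ) (w : C → (K → ℝ)) (ha : ContinuousOn a T) (hw : ContinuousOn w T)
    (f : (K → ℝ) → ℝ)
    (hf : ∀ mu, ∃ c ∈ T, a c + ∑ k, w c k * mu k = f mu)
    (hub : ∀ mu, ∀ c ∈ T, a c + ∑ k, w c k * mu k ≤ f mu)
    {lam g : K → ℝ}
    (hg : ∀ mu, f lam + ∑ k, g k * (mu k - lam k) ≤ f mu) :
    g ∈ convexHull ℝ (w '' {c | c ∈ T ∧ a c + ∑ k, w c k * lam k = f lam}) := by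
  have hTsp : CompactSpace ↥T := isCompact_iff_compactSpace.mp hT
  set Targ : Set C := {c | c ∈ T ∧ a c + ∑ k, w c k * lam k = f lam} with hTarg
  have hFlamcont : Continuous (fun x : ↥T => a x.1 + ∑ k, w x.1 k * lam k) := by
    refine Continuous.add (ContinuousOn.restrict ha) ?_
    exact continuous_finset_sum _ fun k _ =>
      (Continuous.comp (continuous_apply k) (ContinuousOn.restrict hw)).mul continuous_const
  have hWcomp : IsCompact (w '' Targ) := by
    have hS : IsClosed {x : ↥T | a x.1 + ∑ k, w x.1 k * lam k = f lam} :=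
      isClosed_eq hFlamcont continuous_const
    have hSc : IsCompact {x : ↥T | a x.1 + ∑ k, w x.1 k * lam k = f lam} :=
      hS.isCompact
    have himg : w '' Targ =
        (fun x : ↥T => w x.1) '' {x : ↥T | a x.1 + ∑ k, w x.1 k * lam k = f lam} := by
      ext v
      constructor
      · rintro ⟨c, ⟨hcT, hceq⟩, rfl⟩
        exact ⟨⟨c, hcT⟩, hceq, rfl⟩
      · rintro ⟨x, hx, rfl⟩
        exact ⟨x.1, ⟨x.2, hx⟩, rfl⟩
    rw [himg]
    exact hSc.image (ContinuousOn.restrict hw)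
  obtain ⟨c₀, hc₀T, hc₀eq⟩ := hf lam
  have hWne : (w '' Targ).Nonempty := ⟨w c₀, c₀, ⟨hc₀T, hc₀eq⟩, rfl⟩
  apply mem_convexHull_of_dot_le hWcomp hWne
  intro d
  set t : ℕ → ℝ := fun n => 1 / (n + 1) with ht
  have htpos : ∀ n, 0 < t n := fun n => by positivity
  have ht0 : Tendsto t atTop (nhds 0) := tendsto_one_div_add_atTop_nhds_zero_nat
  choose c hcT hceq using fun n => hf (lam + t n • d)
  obtain ⟨cbar, hcbarT, φ, hφ, hconv⟩ := hT.tendsto_subseq hcT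
  -- expand the affine sums
  have hexp : ∀ (cc : C) (n : ℕ), ∑ k, w cc k * (lam + t n • d) k
      = ∑ k, w cc k * lam k + t n * ∑ k, w cc k * d k := by
    intro cc n
    rw [Finset.mul_sum, ← Finset.sum_add_distrib]
    refine Finset.sum_congr rfl fun k _ => by
      simp only [Pi.add_apply, Pi.smul_apply, smul_eq_mul]; ring
  have hglin : ∀ n, ∑ k, g k * ((lam + t n • d) k - lam k) = t n * ∑ k, g k * d k := by
    intro n
    rw [Finset.mul_sum]
    refine Finset.sum_congr rfl fun k _ => by
      simp only [Pi.add_apply, Pi.smul_apply, smul_eq_mul]; ring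
  -- per-n inequality
  have hper : ∀ n, ∑ k, g k * d k ≤ ∑ k, w (c n) k * d k := by
    intro n
    have h1 := hg (lam + t n • d)
    rw [hglin n] at h1
    have h2 := hceq n
    rw [hexp (c n) n] at h2
    have h3 := hub lam (c n) (hcT n)
    have := htpos n
    nlinarith
  -- limit of w along subsequence
  have htend_in : Tendsto (fun n => c (φ n)) atTop (nhdsWithin cbar T) :=
    tendsto_nhdsWithin_iff.mpr ⟨hconv, Eventually.of_forall fun n => hcT (φ n)⟩
  have hwc : Tendsto (fun n => w (c (φ n))) atTop (nhds (w cbar)) :=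
    (hw cbar hcbarT).tendsto.comp htend_in
  have hac : Tendsto (fun n => a (c (φ n))) atTop (nhds (a cbar)) :=
    (ha cbar hcbarT).tendsto.comp htend_in
  have hdotcont : Continuous (fun v : K → ℝ => ∑ k, v k * d k) :=
    continuous_finset_sum _ fun k _ => (continuous_apply k).mul continuous_const
  have htendd : Tendsto (fun n => ∑ k, w (c (φ n)) k * d k) atTop
      (nhds (∑ k, w cbar k * d k)) := (hdotcont.tendsto _).comp hwc
  have htenddlam : Tendsto (fun n => ∑ k, w (c (φ n)) k * lam k) atTop
      (nhds (∑ k, w cbar k * lam k)) := by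
    have : Continuous (fun v : K → ℝ => ∑ k, v k * lam k) :=
      continuous_finset_sum _ fun k _ => (continuous_apply k).mul continuous_const
    exact (this.tendsto _).comp hwc
  have htφ : Tendsto (fun n => t (φ n)) atTop (nhds 0) :=
    ht0.comp hφ.tendsto_atTop
  -- cbar is a maximizer at lam
  have hcbarMax : a cbar + ∑ k, w cbar k * lam k = f lam := by
    have hle : a cbar + ∑ k, w cbar k * lam k ≤ f lam := hub lam cbar hcbarT
    have hlow : ∀ n, f lam + t (φ n) * (∑ k, g k * d k - ∑ k, w (c (φ n)) k * d k)
        ≤ a (c (φ n)) + ∑ k, w (c (φ n)) k * lam k := by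
      intro n
      have h1 := hg (lam + t (φ n) • d)
      rw [hglin (φ n)] at h1
      have h2 := hceq (φ n)
      rw [hexp (c (φ n)) (φ n)] at h2
      nlinarith [htpos (φ n)]
    have hL : Tendsto (fun n => f lam + t (φ n) *
        (∑ k, g k * d k - ∑ k, w (c (φ n)) k * d k)) atTop (nhds (f lam)) := by
      have h0 : Tendsto (fun n => t (φ n) *
          ((∑ k, g k * d k) - ∑ k, w (c (φ n)) k * d k)) atTop
          (nhds (0 * ((∑ k, g k * d k) - ∑ k, w cbar k * d k))) :=
        htφ.mul ((tendsto_const_nhds (x := ∑ k, g k * d k) (f := atTop)).sub htendd)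
      rw [zero_mul] at h0
      have : Tendsto (fun n => t (φ n) *
          (∑ k, g k * d k - ∑ k, w (c (φ n)) k * d k)) atTop (nhds 0) := h0
      simpa using tendsto_const_nhds.add this
    have hR : Tendsto (fun n => a (c (φ n)) + ∑ k, w (c (φ n)) k * lam k) atTop
        (nhds (a cbar + ∑ k, w cbar k * lam k)) := hac.add htenddlam
    have hge : f lam ≤ a cbar + ∑ k, w cbar k * lam k :=
      le_of_tendsto_of_tendsto' hL hR hlow
    linarith
  refine ⟨w cbar, ⟨cbar, ⟨hcbarT, hcbarMax⟩, rfl⟩, ?_⟩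
  exact le_of_tendsto_of_tendsto' tendsto_const_nhds htendd fun n => hper (φ n)

end AuxStmt4

theorem stmt_4
    {I K : Type*} [Fintype I] [Fintype K] [DecidableEq I] [DecidableEq K]
    (E : Finset (I × K))
    (bbar : I → ℝ) (hbbar : ∀ i, 0 < bbar i)
    (ρ β : I → ℝ → ℝ)
    (hρmono : ∀ i, MonotoneOn (ρ i) (Set.Icc 0 (bbar i)))
    (hβmono : ∀ i, MonotoneOn (β i) (Set.Icc 0 (bbar i)))
    (hρ01 : ∀ i, ∀ b ∈ Set.Icc (0:ℝ) (bbar i), ρ i b ∈ Set.Icc (0:ℝ) 1)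
    (hβb : ∀ i, ∀ b ∈ Set.Icc (0:ℝ) (bbar i), β i b ∈ Set.Icc (0:ℝ) b)
    (s : I → ℝ) (hs : ∀ i, 0 < s i)
    (r : I → K → ℝ) (hr : ∀ i k, (i, k) ∈ E → 0 < r i k)
    (h : I → ℝ → ℝ → ℝ)
    (hdef : ∀ i z b, h i z b = (z - β i b) * ρ i b)
    (hρcont : ∀ i, ContinuousOn (ρ i) (Set.Icc 0 (bbar i)))
    (hβcont : ∀ i, ContinuousOn (β i) (Set.Icc 0 (bbar i)))
    (u : (K → ℝ) → ℝ) (hu : ConcaveOn ℝ Set.univ u)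
    (p : (K → ℝ) → EReal)
    (hp : ∀ lam, p lam = ⨆ w : K → ℝ, (((∑ k, lam k * w k) + u w : ℝ) : EReal))
    (hpfin : ∀ lam, p lam ≠ ⊤)
    (Si : I → Set ((K → ℝ) × (K → ℝ)))
    (hSi : ∀ i, Si i = {xb | (∀ k, (i, k) ∈ E → 0 ≤ xb.1 k) ∧
      (∑ k ∈ Finset.univ.filter (fun k => (i, k) ∈ E), xb.1 k) ≤ 1 ∧
      (∀ k, (i, k) ∈ E → xb.2 k ∈ Set.Icc (0:ℝ) (bbar i))})
    (obji : I → (K → ℝ) → (K → ℝ) → (K → ℝ) → ℝ)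
    (hobji : ∀ i lam x b, obji i lam x b =
      ∑ k ∈ Finset.univ.filter (fun k => (i, k) ∈ E), h i (r i k * (1 - lam k)) (b k) * s i * x k)
    (Sistar : I → (K → ℝ) → Set ((K → ℝ) × (K → ℝ)))
    (hSistar : ∀ i lam, Sistar i lam =
      {xb | xb ∈ Si i ∧ ∀ yb ∈ Si i, obji i lam yb.1 yb.2 ≤ obji i lam xb.1 xb.2})
    (vi : I → (K → ℝ) → (K → ℝ) → K → ℝ)
    (hvi : ∀ i x b k, vi i x b k = if (i, k) ∈ E then r i k * s i * x k * ρ i (b k) else 0)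
    (psi : I → (K → ℝ) → EReal)
    (hpsi : ∀ i lam, psi i lam = ⨆ xb ∈ Si i, ((obji i lam xb.1 xb.2 : ℝ) : EReal))
    (Q : (K → ℝ) → EReal)
    (hQ : ∀ lam, Q lam = (∑ i, psi i lam) + p lam)
    (lam : K → ℝ) :
    {g : K → ℝ | ∀ mu, Q lam + (((∑ k, g k * (mu k - lam k)) : ℝ) : EReal) ≤ Q mu} =
      convexHull ℝ {g : K → ℝ | ∃ y : K → ℝ,
        (∀ mu, p lam + (((∑ k, y k * (mu k - lam k)) : ℝ) : EReal) ≤ p mu) ∧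
        ∃ xb : I → (K → ℝ) × (K → ℝ), (∀ i, xb i ∈ Sistar i lam) ∧
          g = fun k => y k - ∑ i, vi i (xb i).1 (xb i).2 k} := by
  classical
  -- the compact core of Si i
  set TT : I → Set ((K → ℝ) × (K → ℝ)) := fun i =>
    ((Set.univ.pi fun k => if (i, k) ∈ E then Set.Icc (0:ℝ) 1 else {0}) ∩
      {x : K → ℝ | (∑ k, x k) ≤ 1}) ×ˢ
    (Set.univ.pi fun k => if (i, k) ∈ E then Set.Icc (0:ℝ) (bbar i) else {0}) with hTT
  have hTmem : ∀ i (c : (K → ℝ) × (K → ℝ)), c ∈ TT i ↔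
      ((∀ k, 0 ≤ c.1 k ∧ c.1 k ≤ 1) ∧ (∀ k, (i, k) ∉ E → c.1 k = 0) ∧ (∑ k, c.1 k) ≤ 1 ∧
       (∀ k, 0 ≤ c.2 k ∧ c.2 k ≤ bbar i) ∧ (∀ k, (i, k) ∉ E → c.2 k = 0)) := by
    intro i c
    constructor
    · rintro ⟨⟨hx, hxs⟩, hb⟩
      rw [Set.mem_pi] at hx hb
      refine ⟨fun k => ?_, fun k hk => ?_, hxs, fun k => ?_, fun k hk => ?_⟩
      · have := hx k trivial
        by_cases hk : (i, k) ∈ E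
        · rw [if_pos hk] at this; exact this
        · rw [if_neg hk] at this; rw [Set.mem_singleton_iff] at this
          rw [this]; norm_num
      · have := hx k trivial
        rw [if_neg hk] at this; exact this
      · have := hb k trivial
        by_cases hk : (i, k) ∈ E
        · rw [if_pos hk] at this; exact this
        · rw [if_neg hk] at this; rw [Set.mem_singleton_iff] at this
          rw [this]; exact ⟨le_refl _, (hbbar i).le⟩
      · have := hb k trivial
        rw [if_neg hk] at this; exact this
    · rintro ⟨h1, h2, h3, h4, h5⟩
      refine ⟨⟨Set.mem_pi.mpr fun k _ => ?_, h3⟩, Set.mem_pi.mpr fun k _ => ?_⟩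
      · by_cases hk : (i, k) ∈ E
        · rw [if_pos hk]; exact ⟨(h1 k).1, (h1 k).2⟩
        · rw [if_neg hk]; exact h2 k hk
      · by_cases hk : (i, k) ∈ E
        · rw [if_pos hk]; exact ⟨(h4 k).1, (h4 k).2⟩
        · rw [if_neg hk]; exact h5 k hk
  have hTcomp : ∀ i, IsCompact (TT i) := by
    intro i
    refine IsCompact.prod (IsCompact.inter_right ?_ ?_) ?_
    · exact isCompact_univ_pi fun k => by
        split
        · exact isCompact_Icc
        · exact isCompact_singleton
    · exact isClosed_le (continuous_finset_sum _ fun k _ => continuous_apply k) continuous_const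
    · exact isCompact_univ_pi fun k => by
        split
        · exact isCompact_Icc
        · exact isCompact_singleton
  have hTne : ∀ i, (TT i).Nonempty := by
    intro i
    refine ⟨((fun _ => 0), (fun _ => 0)), (hTmem i _).mpr ?_⟩
    refine ⟨fun k => by norm_num, fun k _ => rfl, by simp, fun k => ⟨le_refl _, (hbbar i).le⟩,
      fun k _ => rfl⟩
  have hfilter_eq : ∀ (i : I) (x : K → ℝ), (∀ k, (i, k) ∉ E → x k = 0) →
      ∑ k ∈ Finset.univ.filter (fun k => (i, k) ∈ E), x k = ∑ k, x k := by
    intro i x hx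
    rw [← Finset.sum_filter_add_sum_filter_not Finset.univ (fun k => (i, k) ∈ E) x]
    have : ∑ k ∈ Finset.univ.filter (fun k => ¬ (i, k) ∈ E), x k = 0 :=
      Finset.sum_eq_zero fun k hk => hx k (Finset.mem_filter.mp hk).2
    rw [this, add_zero]
  have hTSi : ∀ i, TT i ⊆ Si i := by
    intro i c hc
    obtain ⟨h1, h2, h3, h4, h5⟩ := (hTmem i c).mp hc
    rw [hSi]
    refine ⟨fun k _ => (h1 k).1, ?_, fun k _ => Set.mem_Icc.mpr ⟨(h4 k).1, (h4 k).2⟩⟩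
    rw [hfilter_eq i c.1 h2]
    exact h3
  have hproj : ∀ i, ∀ c ∈ Si i, ∃ c' ∈ TT i, ∀ mu, obji i mu c'.1 c'.2 = obji i mu c.1 c.2 := by
    intro i c hc
    rw [hSi] at hc
    obtain ⟨h1, h2, h3⟩ := hc
    set c' : (K → ℝ) × (K → ℝ) :=
      ((fun k => if (i, k) ∈ E then c.1 k else 0), (fun k => if (i, k) ∈ E then c.2 k else 0))
      with hc'def
    have hxle : ∀ k, (i, k) ∈ E → c.1 k ≤ 1 := by
      intro k hk
      calc c.1 k ≤ ∑ j ∈ Finset.univ.filter (fun j => (i, j) ∈ E), c.1 j :=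
            Finset.single_le_sum (fun j hj => h1 j (Finset.mem_filter.mp hj).2)
              (Finset.mem_filter.mpr ⟨Finset.mem_univ k, hk⟩)
        _ ≤ 1 := h2
    have hsumc' : ∑ k, c'.1 k = ∑ k ∈ Finset.univ.filter (fun k => (i, k) ∈ E), c.1 k := by
      rw [Finset.sum_filter]
    refine ⟨c', (hTmem i c').mpr ?_, ?_⟩
    · refine ⟨fun k => ?_, fun k hk => if_neg hk, ?_, fun k => ?_, fun k hk => if_neg hk⟩
      · show 0 ≤ (if (i, k) ∈ E then c.1 k else 0) ∧ (if (i, k) ∈ E then c.1 k else 0) ≤ 1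
        by_cases hk : (i, k) ∈ E
        · rw [if_pos hk]; exact ⟨h1 k hk, hxle k hk⟩
        · rw [if_neg hk]; norm_num
      · rw [hsumc']; exact h2
      · show 0 ≤ (if (i, k) ∈ E then c.2 k else 0) ∧ (if (i, k) ∈ E then c.2 k else 0) ≤ bbar i
        by_cases hk : (i, k) ∈ E
        · rw [if_pos hk]
          have := h3 k hk
          rw [Set.mem_Icc] at this
          exact this
        · rw [if_neg hk]; exact ⟨le_refl _, (hbbar i).le⟩
    · intro mu
      rw [hobji, hobji]
      refine Finset.sum_congr rfl fun k hk => ?_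
      have hkE : (i, k) ∈ E := (Finset.mem_filter.mp hk).2
      show h i _ (if (i, k) ∈ E then c.2 k else 0) * s i * (if (i, k) ∈ E then c.1 k else 0) = _
      rw [if_pos hkE, if_pos hkE]
  have hIccMap : ∀ (i : I) k, ∀ c ∈ TT i, c.2 k ∈ Set.Icc (0:ℝ) (bbar i) := by
    intro i k c hc
    obtain ⟨_, _, _, h4, _⟩ := (hTmem i c).mp hc
    exact Set.mem_Icc.mpr ⟨(h4 k).1, (h4 k).2⟩
  have hρcomp : ∀ (i : I) k, ContinuousOn (fun c : (K → ℝ) × (K → ℝ) => ρ i (c.2 k)) (TT i) := by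
    intro i k
    refine ContinuousOn.comp (hρcont i) ?_ ?_
    · exact ((continuous_apply k).comp continuous_snd).continuousOn
    · intro c hc; exact hIccMap i k c hc
  have hβcomp : ∀ (i : I) k, ContinuousOn (fun c : (K → ℝ) × (K → ℝ) => β i (c.2 k)) (TT i) := by
    intro i k
    refine ContinuousOn.comp (hβcont i) ?_ ?_
    · exact ((continuous_apply k).comp continuous_snd).continuousOn
    · intro c hc; exact hIccMap i k c hc
  have hcont : ∀ i mu, ContinuousOn (fun c : (K → ℝ) × (K → ℝ) => obji i mu c.1 c.2) (TT i) := by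
    intro i mu
    have : (fun c : (K → ℝ) × (K → ℝ) => obji i mu c.1 c.2)
        = fun c => ∑ k ∈ Finset.univ.filter (fun k => (i, k) ∈ E),
            (r i k * (1 - mu k) - β i (c.2 k)) * ρ i (c.2 k) * s i * c.1 k := by
      funext c
      rw [hobji]
      exact Finset.sum_congr rfl fun k _ => by rw [hdef]
    rw [this]
    refine continuousOn_finset_sum _ fun k _ => ?_
    refine ContinuousOn.mul (ContinuousOn.mul (ContinuousOn.mul ?_ (hρcomp i k)) ?_) ?_
    · exact (continuousOn_const).sub (hβcomp i k)
    · exact continuousOn_const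
    · exact ((continuous_apply k).comp continuous_fst).continuousOn
  have hmax : ∀ i mu, ∃ c ∈ TT i, ∀ c' ∈ Si i, obji i mu c'.1 c'.2 ≤ obji i mu c.1 c.2 := by
    intro i mu
    obtain ⟨c, hcT, hcmax⟩ := (hTcomp i).exists_isMaxOn (hTne i) (hcont i mu)
    refine ⟨c, hcT, fun c' hc' => ?_⟩
    obtain ⟨c'', hc''T, hc''eq⟩ := hproj i c' hc'
    calc obji i mu c'.1 c'.2 = obji i mu c''.1 c''.2 := (hc''eq mu).symm
      _ ≤ obji i mu c.1 c.2 := hcmax hc''T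
  set Psi : I → (K → ℝ) → ℝ := fun i mu =>
    sSup ((fun c : (K → ℝ) × (K → ℝ) => obji i mu c.1 c.2) '' Si i) with hPsidef
  have hPsiGreat : ∀ i mu, IsGreatest
      ((fun c : (K → ℝ) × (K → ℝ) => obji i mu c.1 c.2) '' Si i) (Psi i mu) := by
    intro i mu
    obtain ⟨c, hcT, hcmax⟩ := hmax i mu
    have hG : IsGreatest ((fun c : (K → ℝ) × (K → ℝ) => obji i mu c.1 c.2) '' Si i)
        (obji i mu c.1 c.2) := by
      constructor
      · exact ⟨c, hTSi i hcT, rfl⟩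
      · rintro x ⟨c', hc', rfl⟩
        exact hcmax c' hc'
    have : Psi i mu = obji i mu c.1 c.2 := hG.csSup_eq
    rw [this]
    exact hG
  have hPsiT : ∀ i mu, ∃ c ∈ TT i, obji i mu c.1 c.2 = Psi i mu := by
    intro i mu
    obtain ⟨c, hcT, hcmax⟩ := hmax i mu
    refine ⟨c, hcT, le_antisymm ((hPsiGreat i mu).2 ⟨c, hTSi i hcT, rfl⟩) ?_⟩
    obtain ⟨c', hc', heq⟩ := (hPsiGreat i mu).1
    calc Psi i mu = obji i mu c'.1 c'.2 := heq.symm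
      _ ≤ obji i mu c.1 c.2 := hcmax c' hc'
  have hpsiCoe : ∀ i mu, psi i mu = ((Psi i mu : ℝ) : EReal) := by
    intro i mu
    rw [hpsi]
    apply le_antisymm
    · exact iSup₂_le fun xb hxb => EReal.coe_le_coe_iff.mpr ((hPsiGreat i mu).2 ⟨xb, hxb, rfl⟩)
    · obtain ⟨c, hcT, hceq⟩ := hPsiT i mu
      calc ((Psi i mu : ℝ) : EReal) = ((obji i mu c.1 c.2 : ℝ) : EReal) := by rw [hceq]
        _ ≤ _ := le_iSup₂ (f := fun (xb : (K → ℝ) × (K → ℝ)) (_ : xb ∈ Si i) =>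
            ((obji i mu xb.1 xb.2 : ℝ) : EReal)) c (hTSi i hcT)
  set P : (K → ℝ) → ℝ := fun mu => (p mu).toReal with hPdef
  have hpne_bot : ∀ mu, p mu ≠ ⊥ := by
    intro mu hb
    have : (((∑ k, mu k * (0:K→ℝ) k) + u 0 : ℝ) : EReal) ≤ p mu := by
      rw [hp]
      exact le_iSup (fun w : K → ℝ => (((∑ k, mu k * w k) + u w : ℝ) : EReal)) 0
    rw [hb] at this
    exact (EReal.bot_lt_coe _).not_ge this
  have hPcoe : ∀ mu, p mu = ((P mu : ℝ) : EReal) := by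
    intro mu
    exact (EReal.coe_toReal (hpfin mu) (hpne_bot mu)).symm
  set Qr : (K → ℝ) → ℝ := fun mu => (∑ i, Psi i mu) + P mu with hQrdef
  have hQcoe : ∀ mu, Q mu = ((Qr mu : ℝ) : EReal) := by
    intro mu
    rw [hQ, hQrdef]
    have h1 : (∑ i, psi i mu) = ((∑ i, Psi i mu : ℝ) : EReal) := by
      rw [ereal_coe_sum]
      exact Finset.sum_congr rfl fun i _ => hpsiCoe i mu
    rw [h1, hPcoe, ← EReal.coe_add]
  -- subgradient sets in real form
  have hsg : ∀ (f : (K → ℝ) → EReal) (fr : (K → ℝ) → ℝ), (∀ mu, f mu = ((fr mu : ℝ) : EReal)) →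
      ∀ y : K → ℝ, (∀ mu, f lam + (((∑ k, y k * (mu k - lam k)) : ℝ) : EReal) ≤ f mu) ↔
        (∀ mu, fr lam + ∑ k, y k * (mu k - lam k) ≤ fr mu) := by
    intro f fr hf y
    constructor
    · intro hy mu
      have := hy mu
      rw [hf, hf, ← EReal.coe_add, EReal.coe_le_coe_iff] at this
      exact this
    · intro hy mu
      rw [hf, hf, ← EReal.coe_add, EReal.coe_le_coe_iff]
      exact hy mu
  -- affine identity
  have haff : ∀ (i : I) (x b m1 m2 : K → ℝ), obji i m2 x b
      = obji i m1 x b - ∑ k, vi i x b k * (m2 k - m1 k) := by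
    intro i x b m1 m2
    have hz : ∑ k, vi i x b k * (m2 k - m1 k)
        = ∑ k ∈ Finset.univ.filter (fun k => (i, k) ∈ E), vi i x b k * (m2 k - m1 k) := by
      rw [Finset.sum_filter]
      refine Finset.sum_congr rfl fun k _ => ?_
      by_cases hk : (i, k) ∈ E
      · rw [if_pos hk]
      · rw [if_neg hk, hvi, if_neg hk, zero_mul]
    rw [hobji, hobji, hz, ← Finset.sum_sub_distrib]
    refine Finset.sum_congr rfl fun k hk => ?_
    have hkE : (i, k) ∈ E := (Finset.mem_filter.mp hk).2
    rw [hdef, hdef, hvi, if_pos hkE]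
    ring
  -- affinity in mu (combination form)
  have hobjaff : ∀ (i : I) (x b m1 m2 : K → ℝ) (θ σ : ℝ), θ + σ = 1 →
      obji i (θ • m1 + σ • m2) x b = θ * obji i m1 x b + σ * obji i m2 x b := by
    intro i x b m1 m2 θ σ hθσ
    rw [hobji, hobji, hobji, Finset.mul_sum, Finset.mul_sum, ← Finset.sum_add_distrib]
    refine Finset.sum_congr rfl fun k _ => ?_
    rw [hdef, hdef, hdef]
    have hσ : σ = 1 - θ := by linarith
    subst hσ
    simp only [Pi.add_apply, Pi.smul_apply, smul_eq_mul]
    ring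
  have hPsiconv : ∀ i, ConvexOn ℝ Set.univ (Psi i) := by
    intro i
    refine ⟨convex_univ, fun m1 _ m2 _ θ σ hθ hσ hθσ => ?_⟩
    obtain ⟨c, hcSi, hceq⟩ := (hPsiGreat i (θ • m1 + σ • m2)).1
    have hceq' : obji i (θ • m1 + σ • m2) c.1 c.2 = Psi i (θ • m1 + σ • m2) := hceq
    rw [smul_eq_mul, smul_eq_mul, ← hceq', hobjaff i c.1 c.2 m1 m2 θ σ hθσ]
    have h1 : obji i m1 c.1 c.2 ≤ Psi i m1 := (hPsiGreat i m1).2 ⟨c, hcSi, rfl⟩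
    have h2 : obji i m2 c.1 c.2 ≤ Psi i m2 := (hPsiGreat i m2).2 ⟨c, hcSi, rfl⟩
    exact add_le_add (mul_le_mul_of_nonneg_left h1 hθ) (mul_le_mul_of_nonneg_left h2 hσ)
  have hPconv : ConvexOn ℝ Set.univ P := by
    refine ⟨convex_univ, fun m1 _ m2 _ θ σ hθ hσ hθσ => ?_⟩
    have key : p (θ • m1 + σ • m2) ≤ ((θ * P m1 + σ * P m2 : ℝ) : EReal) := by
      rw [hp]
      refine iSup_le fun w => ?_
      have h1 : (∑ k, m1 k * w k) + u w ≤ P m1 := by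
        have : (((∑ k, m1 k * w k) + u w : ℝ) : EReal) ≤ p m1 := by
          rw [hp]
          exact le_iSup (fun w : K → ℝ => (((∑ k, m1 k * w k) + u w : ℝ) : EReal)) w
        rw [hPcoe m1, EReal.coe_le_coe_iff] at this
        exact this
      have h2 : (∑ k, m2 k * w k) + u w ≤ P m2 := by
        have : (((∑ k, m2 k * w k) + u w : ℝ) : EReal) ≤ p m2 := by
          rw [hp]
          exact le_iSup (fun w : K → ℝ => (((∑ k, m2 k * w k) + u w : ℝ) : EReal)) w
        rw [hPcoe m2, EReal.coe_le_coe_iff] at this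
        exact this
      rw [EReal.coe_le_coe_iff]
      have hsum : ∑ k, (θ • m1 + σ • m2) k * w k
          = θ * ∑ k, m1 k * w k + σ * ∑ k, m2 k * w k := by
        rw [Finset.mul_sum, Finset.mul_sum, ← Finset.sum_add_distrib]
        refine Finset.sum_congr rfl fun k _ => by
          simp only [Pi.add_apply, Pi.smul_apply, smul_eq_mul]; ring
      have huw : u w = (θ + σ) * u w := by rw [hθσ, one_mul]
      have hb1 : θ * ((∑ k, m1 k * w k) + u w) ≤ θ * P m1 := mul_le_mul_of_nonneg_left h1 hθ
      have hb2 : σ * ((∑ k, m2 k * w k) + u w) ≤ σ * P m2 := mul_le_mul_of_nonneg_left h2 hσ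
      rw [hsum]
      nlinarith
    rw [hPcoe, EReal.coe_le_coe_iff] at key
    simpa [smul_eq_mul] using key
  have hPsicont : ∀ i, Continuous (Psi i) := by
    intro i
    rw [← continuousOn_univ]
    exact (hPsiconv i).continuousOn isOpen_univ
  have hObjPsilam : ∀ i, ∀ c ∈ Sistar i lam, obji i lam c.1 c.2 = Psi i lam := by
    intro i c hc
    rw [hSistar] at hc
    obtain ⟨hcSi, hcdom⟩ := hc
    refine le_antisymm ((hPsiGreat i lam).2 ⟨c, hcSi, rfl⟩) ?_
    obtain ⟨c', hc', heq⟩ := (hPsiGreat i lam).1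
    calc Psi i lam = obji i lam c'.1 c'.2 := heq.symm
      _ ≤ obji i lam c.1 c.2 := hcdom c' hc'
  -- rewrite the LHS in real form
  have hLHSeq : {g : K → ℝ | ∀ mu, Q lam + (((∑ k, g k * (mu k - lam k)) : ℝ) : EReal) ≤ Q mu}
      = {g : K → ℝ | ∀ mu, Qr lam + ∑ k, g k * (mu k - lam k) ≤ Qr mu} :=
    Set.ext fun g => hsg Q Qr hQcoe g
  rw [hLHSeq]
  apply Set.Subset.antisymm
  · -- hard direction
    intro g hgQ
    simp only [Set.mem_setOf_eq] at hgQ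
    have hgQ' : ∀ mu, (P lam + ∑ i, Psi i lam) + ∑ k, g k * (mu k - lam k)
        ≤ P mu + ∑ i, Psi i mu := by
      intro mu
      have := hgQ mu
      simp only [hQrdef] at this
      linarith
    obtain ⟨y, gg, hy, hgg, hgsum⟩ := subgrad_finset_sum Finset.univ
      (fun i _ => hPsiconv i) (fun i _ => hPsicont i) hPconv hgQ'
    set wv : I → ((K → ℝ) × (K → ℝ)) → (K → ℝ) := fun i c k => -vi i c.1 c.2 k with hwv
    have hwvcont : ∀ (i : I) k, ContinuousOn (fun c : (K → ℝ) × (K → ℝ) => wv i c k) (TT i) := by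
      intro i k
      by_cases hk : (i, k) ∈ E
      · have : (fun c : (K → ℝ) × (K → ℝ) => wv i c k)
            = fun c => -((r i k * s i * c.1 k) * ρ i (c.2 k)) := by
          funext c
          simp only [hwv, hvi, if_pos hk]
        rw [this]
        refine ContinuousOn.neg (ContinuousOn.mul ?_ (hρcomp i k))
        exact (continuous_const.mul ((continuous_apply k).comp continuous_fst)).continuousOn
      · have : (fun c : (K → ℝ) × (K → ℝ) => wv i c k) = fun _ => (0:ℝ) := by
          funext c
          simp only [hwv, hvi, if_neg hk, neg_zero]
        rw [this]
        exact continuousOn_const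
    have hcalc : ∀ (i : I) (c : (K → ℝ) × (K → ℝ)) (mu : K → ℝ),
        (obji i lam c.1 c.2 - ∑ k, wv i c k * lam k) + ∑ k, wv i c k * mu k
          = obji i mu c.1 c.2 := by
      intro i c mu
      rw [haff i c.1 c.2 lam mu]
      have h1 : ∑ k, vi i c.1 c.2 k * (mu k - lam k)
          = (∑ k, vi i c.1 c.2 k * mu k) - ∑ k, vi i c.1 c.2 k * lam k := by
        rw [← Finset.sum_sub_distrib]
        exact Finset.sum_congr rfl fun k _ => by ring
      have h2 : ∑ k, wv i c k * lam k = -∑ k, vi i c.1 c.2 k * lam k := by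
        rw [← Finset.sum_neg_distrib]
        exact Finset.sum_congr rfl fun k _ => by simp only [hwv]; ring
      have h3 : ∑ k, wv i c k * mu k = -∑ k, vi i c.1 c.2 k * mu k := by
        rw [← Finset.sum_neg_distrib]
        exact Finset.sum_congr rfl fun k _ => by simp only [hwv]; ring
      rw [h1, h2, h3]
      ring
    have hVmem : ∀ i, gg i ∈ convexHull ℝ ((wv i) '' (Sistar i lam)) := by
      intro i
      have hacont : ContinuousOn
          (fun c : (K → ℝ) × (K → ℝ) => obji i lam c.1 c.2 - ∑ k, wv i c k * lam k) (TT i) :=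
        (hcont i lam).sub (continuousOn_finset_sum _ fun k _ => (hwvcont i k).mul continuousOn_const)
      have hwcont : ContinuousOn (wv i) (TT i) := continuousOn_pi.mpr fun k => hwvcont i k
      have hfprop : ∀ mu, ∃ c ∈ TT i,
          (obji i lam c.1 c.2 - ∑ k, wv i c k * lam k) + ∑ k, wv i c k * mu k = Psi i mu := by
        intro mu
        obtain ⟨c, hcT, hceq⟩ := hPsiT i mu
        exact ⟨c, hcT, by rw [hcalc]; exact hceq⟩
      have hubprop : ∀ mu, ∀ c ∈ TT i,
          (obji i lam c.1 c.2 - ∑ k, wv i c k * lam k) + ∑ k, wv i c k * mu k ≤ Psi i mu := by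
        intro mu c hcT
        rw [hcalc]
        exact (hPsiGreat i mu).2 ⟨c, hTSi i hcT, rfl⟩
      have hdk := danskin (hTcomp i)
        (fun c : (K → ℝ) × (K → ℝ) => obji i lam c.1 c.2 - ∑ k, wv i c k * lam k)
        (wv i) hacont hwcont (Psi i) hfprop hubprop (hgg i (Finset.mem_univ i))
      refine convexHull_mono (Set.image_mono ?_) hdk
      rintro c ⟨hcT, hceq⟩
      have hobjeq : obji i lam c.1 c.2 = Psi i lam := by
        have := hcalc i c lam
        rw [this] at hceq
        exact hceq
      rw [hSistar]
      exact ⟨hTSi i hcT, fun yb hyb =>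
        le_trans ((hPsiGreat i lam).2 ⟨yb, hyb, rfl⟩) (le_of_eq hobjeq.symm)⟩
    set Bs : Finset I → Set (K → ℝ) := fun t => {g : K → ℝ | ∃ y : K → ℝ,
        (∀ mu, p lam + (((∑ k, y k * (mu k - lam k)) : ℝ) : EReal) ≤ p mu) ∧
        ∃ xb : I → (K → ℝ) × (K → ℝ), (∀ i ∈ t, xb i ∈ Sistar i lam) ∧
          g = fun k => y k - ∑ i ∈ t, vi i (xb i).1 (xb i).2 k} with hBs
    have hcomb : ∀ (t : Finset I) (y' : K → ℝ),
        (∀ mu, p lam + (((∑ k, y' k * (mu k - lam k)) : ℝ) : EReal) ≤ p mu) →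
        ∀ (gg' : I → K → ℝ), (∀ i ∈ t, gg' i ∈ convexHull ℝ ((wv i) '' (Sistar i lam))) →
        (y' + ∑ i ∈ t, gg' i) ∈ convexHull ℝ (Bs t) := by
      intro t
      induction t using Finset.induction_on with
      | empty =>
          intro y' hy' gg' _
          apply subset_convexHull
          refine ⟨y', hy', fun _ => ((fun _ => 0), (fun _ => 0)), by simp, ?_⟩
          ext k; simp
      | insert a t hns ih =>
          intro y' hy' gg' hgg'
          have h1 : y' + ∑ i ∈ insert a t, gg' i = gg' a + (y' + ∑ i ∈ t, gg' i) := by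
            ext k
            simp only [Pi.add_apply, Finset.sum_apply, Finset.sum_insert hns]
            ring
          rw [h1]
          have hm2 := ih y' hy' gg' (fun i hi => hgg' i (Finset.mem_insert_of_mem hi))
          have hma := hgg' a (Finset.mem_insert_self a t)
          have hsum2 := Set.add_mem_add hma hm2
          rw [← convexHull_add] at hsum2
          refine convexHull_mono ?_ hsum2
          intro z hz
          rw [Set.mem_add] at hz
          obtain ⟨v, hv, b, hb, hzeq⟩ := hz
          obtain ⟨c, hcS, rfl⟩ := hv
          obtain ⟨yy, hyy, xb, hxb, rfl⟩ := hb
          rw [← hzeq]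
          refine ⟨yy, hyy, Function.update xb a c, ?_, ?_⟩
          · intro i hi
            rcases Finset.mem_insert.mp hi with rfl | hi'
            · rw [Function.update_self]; exact hcS
            · rw [Function.update_of_ne (fun hia => hns (by rw [← hia]; exact hi'))]
              exact hxb i hi'
          · ext k
            have hts : ∑ i ∈ t, vi i (Function.update xb a c i).1 (Function.update xb a c i).2 k
                = ∑ i ∈ t, vi i (xb i).1 (xb i).2 k :=
              Finset.sum_congr rfl fun i hi => by
                rw [Function.update_of_ne (fun hia => hns (by rw [← hia]; exact hi))]
            simp only [Pi.add_apply, Finset.sum_insert hns, Function.update_self, hts, hwv]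
            ring
    have hfinal := hcomb Finset.univ y ((hsg p P hPcoe y).mpr hy) gg (fun i _ => hVmem i)
    rw [show g = y + ∑ i, gg i from hgsum]
    refine convexHull_mono ?_ hfinal
    rintro z ⟨yy, hyy, xb, hxb, hzeq⟩
    exact ⟨yy, hyy, xb, fun i => hxb i (Finset.mem_univ i), hzeq⟩
  · -- easy direction
    refine convexHull_min ?_ ?_
    · rintro g ⟨y, hyE, xb, hxb, rfl⟩
      have hyR : ∀ mu, P lam + ∑ k, y k * (mu k - lam k) ≤ P mu := (hsg p P hPcoe y).mp hyE
      intro mu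
      show Qr lam + ∑ k, (y k - ∑ i, vi i (xb i).1 (xb i).2 k) * (mu k - lam k) ≤ Qr mu
      have hsplit : ∑ k, (y k - ∑ i, vi i (xb i).1 (xb i).2 k) * (mu k - lam k)
          = (∑ k, y k * (mu k - lam k))
            - ∑ i, ∑ k, vi i (xb i).1 (xb i).2 k * (mu k - lam k) := by
        have h1 : ∀ k, (y k - ∑ i, vi i (xb i).1 (xb i).2 k) * (mu k - lam k)
            = y k * (mu k - lam k) - ∑ i, vi i (xb i).1 (xb i).2 k * (mu k - lam k) := by
          intro k
          rw [sub_mul, Finset.sum_mul]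
        rw [Finset.sum_congr rfl fun k _ => h1 k, Finset.sum_sub_distrib, Finset.sum_comm]
      have hi : ∀ i : I, Psi i lam - ∑ k, vi i (xb i).1 (xb i).2 k * (mu k - lam k)
          ≤ Psi i mu := by
        intro i
        have hxbSi : xb i ∈ Si i := by
          have := hxb i
          rw [hSistar] at this
          exact this.1
        have hb : obji i mu (xb i).1 (xb i).2 ≤ Psi i mu :=
          (hPsiGreat i mu).2 ⟨xb i, hxbSi, rfl⟩
        rw [haff i (xb i).1 (xb i).2 lam mu, hObjPsilam i (xb i) (hxb i)] at hb
        exact hb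
      have hisum : (∑ i, Psi i lam)
          - ∑ i, ∑ k, vi i (xb i).1 (xb i).2 k * (mu k - lam k) ≤ ∑ i, Psi i mu := by
        rw [← Finset.sum_sub_distrib]
        exact Finset.sum_le_sum fun i _ => hi i
      have hyRmu := hyR mu
      simp only [hQrdef]
      rw [hsplit]
      linarith
    · intro g₁ hg₁ g₂ hg₂ θ σ hθ hσ hθσ
      intro mu
      have e1 := hg₁ mu
      have e2 := hg₂ mu
      have hsum : ∑ k, (θ • g₁ + σ • g₂) k * (mu k - lam k)
          = θ * ∑ k, g₁ k * (mu k - lam k) + σ * ∑ k, g₂ k * (mu k - lam k) := by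
        rw [Finset.mul_sum, Finset.mul_sum, ← Finset.sum_add_distrib]
        refine Finset.sum_congr rfl fun k _ => by
          simp only [Pi.add_apply, Pi.smul_apply, smul_eq_mul]
          ring
      show Qr lam + ∑ k, (θ • g₁ + σ • g₂) k * (mu k - lam k) ≤ Qr mu
      rw [hsum]
      have b1 : θ * (Qr lam + ∑ k, g₁ k * (mu k - lam k)) ≤ θ * Qr mu :=
        mul_le_mul_of_nonneg_left e1 hθ
      have b2 : σ * (Qr lam + ∑ k, g₂ k * (mu k - lam k)) ≤ σ * Qr mu :=
        mul_le_mul_of_nonneg_left e2 hσ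
      have hq1 : Qr lam = θ * Qr lam + σ * Qr lam := by rw [← add_mul, hθσ, one_mul]
      have hq2 : Qr mu = θ * Qr mu + σ * Qr mu := by rw [← add_mul, hθσ, one_mul]
      nlinarith
end

section
/- Suppose p is finite on all of ℝ^K. Let λ* be a minimizer of the dual function Q over ℝ^K, let (x*, b*) ∈ S be a maximizer of (x,b) ↦ π(x,b) − (λ*)ᵀ v(x,b) over S, and suppose that v(x*, b*) is a subgradient of p at λ*. Then Q(λ*) = F(x*, b*). -/
open scoped BigOperators Classical


/-- Supergradient existence for a finite concave function on ℝ^K, stated in the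
    form needed: there is `mu0` with `∑ mu0 k * w k + u w ≤ ∑ mu0 k * w0 k + u w0`. -/
lemma exists_supergrad {K : Type*} [Fintype K] (u : (K → ℝ) → ℝ)
    (hu : ConcaveOn ℝ Set.univ u) (w0 : K → ℝ) :
    ∃ mu0 : K → ℝ, ∀ w, (∑ k, mu0 k * w k) + u w ≤ (∑ k, mu0 k * w0 k) + u w0 := by
  have hcont : Continuous u := by
    rw [← continuousOn_univ]
    exact hu.continuousOn isOpen_univ
  set O : Set ((K → ℝ) × ℝ) := {q | q.2 < u q.1} with hO
  have hOopen : IsOpen O := isOpen_lt continuous_snd (hcont.comp continuous_fst)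
  have hOconv : Convex ℝ O := by
    rintro ⟨w1, t1⟩ h1 ⟨w2, t2⟩ h2 a b ha hb hab
    simp only [hO, Set.mem_setOf_eq] at h1 h2 ⊢
    have := hu.2 (Set.mem_univ w1) (Set.mem_univ w2) ha hb hab
    have h1' : a * t1 ≤ a * u w1 := mul_le_mul_of_nonneg_left h1.le ha
    have h2' : b * t2 ≤ b * u w2 := mul_le_mul_of_nonneg_left h2.le hb
    rcases ha.lt_or_eq with ha' | ha'
    · have h1'' : a * t1 < a * u w1 := by exact (mul_lt_mul_iff_right₀ ha').2 h1
      calc a * t1 + b * t2 < a * u w1 + b * u w2 := by linarith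
        _ ≤ u (a • w1 + b • w2) := by simpa [smul_eq_mul] using this
    · have : b = 1 := by linarith
      subst this
      have ha0 : a = 0 := ha'.symm
      subst ha0
      simp only [zero_mul, zero_add, zero_smul, one_smul, smul_eq_mul]
      have h2'' : (1:ℝ) * t2 < 1 * u w2 := by simpa using h2
      simpa using h2
  have hx0 : ((w0, u w0) : (K → ℝ) × ℝ) ∉ O := by simp [hO]
  obtain ⟨f, hf⟩ := geometric_hahn_banach_open_point hOconv hOopen hx0
  set α : ℝ := f (0, 1) with hα
  have hsplit : ∀ (w : K → ℝ) (t : ℝ), f (w, t) = f (w, 0) + t * α := by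
    intro w t
    have : ((w, t) : (K → ℝ) × ℝ) = (w, 0) + t • ((0 : K → ℝ), (1:ℝ)) := by
      ext <;> simp
    rw [this, map_add, map_smul, smul_eq_mul, hα]
  have hαpos : 0 < α := by
    have := hf (w0, u w0 - 1) (by simp [hO])
    rw [hsplit w0 (u w0 - 1), hsplit w0 (u w0)] at this
    nlinarith
  have key : ∀ w, f (w, 0) + u w * α ≤ f (w0, 0) + u w0 * α := by
    intro w
    refine le_of_forall_pos_le_add fun ε hε => ?_
    have hmem : ((w, u w - ε / α) : (K → ℝ) × ℝ) ∈ O := by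
      simp only [hO, Set.mem_setOf_eq]
      have : 0 < ε / α := div_pos hε hαpos
      linarith
    have := hf _ hmem
    rw [hsplit w (u w - ε / α), hsplit w0 (u w0)] at this
    have hεα : (ε / α) * α = ε := div_mul_cancel₀ ε hαpos.ne'
    nlinarith
  set L : (K → ℝ) →ₗ[ℝ] ℝ := f.toLinearMap.comp (LinearMap.inl ℝ (K → ℝ) ℝ) with hL
  have hLapp : ∀ w, L w = f (w, 0) := fun w => rfl
  refine ⟨fun k => L (fun j => if k = j then 1 else 0) / α, fun w => ?_⟩
  have hsum : ∀ w' : K → ℝ,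
      (∑ k, L (fun j => if k = j then 1 else 0) / α * w' k) = L w' / α := by
    intro w'
    rw [LinearMap.pi_apply_eq_sum_univ L w', Finset.sum_div]
    refine Finset.sum_congr rfl fun k _ => ?_
    simp [smul_eq_mul]; ring
  rw [hsum, hsum]
  have := key w
  rw [← hLapp, ← hLapp] at this
  rw [div_add' _ _ _ hαpos.ne', div_add' _ _ _ hαpos.ne', div_le_div_iff_of_pos_right hαpos]
  linarith

theorem stmt_5
    {I K : Type*} [Fintype I] [Fintype K] [DecidableEq I] [DecidableEq K]
    (E : Finset (I × K))
    (bbar : I → ℝ) (hbbar : ∀ i, 0 < bbar i)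
    (ρ β : I → ℝ → ℝ)
    (hρmono : ∀ i, MonotoneOn (ρ i) (Set.Icc 0 (bbar i)))
    (hβmono : ∀ i, MonotoneOn (β i) (Set.Icc 0 (bbar i)))
    (hρ01 : ∀ i, ∀ b ∈ Set.Icc (0:ℝ) (bbar i), ρ i b ∈ Set.Icc (0:ℝ) 1)
    (hβb : ∀ i, ∀ b ∈ Set.Icc (0:ℝ) (bbar i), β i b ∈ Set.Icc (0:ℝ) b)
    (s : I → ℝ) (hs : ∀ i, 0 < s i)
    (r : I → K → ℝ) (hr : ∀ i k, (i, k) ∈ E → 0 < r i k)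
    (h : I → ℝ → ℝ → ℝ)
    (hdef : ∀ i z b, h i z b = (z - β i b) * ρ i b)
    (S : Set ((I → K → ℝ) × (I → K → ℝ)))
    (hS : S = {xb | (∀ i k, 0 ≤ xb.1 i k) ∧
      (∀ i, (∑ k ∈ Finset.univ.filter (fun k => (i, k) ∈ E), xb.1 i k) ≤ 1) ∧
      (∀ i k, (i, k) ∈ E → xb.2 i k ∈ Set.Icc (0:ℝ) (bbar i))})
    (prof : (I → K → ℝ) → (I → K → ℝ) → ℝ)
    (hprof : ∀ x b, prof x b = ∑ e ∈ E, h e.1 (r e.1 e.2) (b e.1 e.2) * s e.1 * x e.1 e.2)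
    (v : (I → K → ℝ) → (I → K → ℝ) → K → ℝ)
    (hv : ∀ x b k, v x b k =
      ∑ i ∈ Finset.univ.filter (fun i => (i, k) ∈ E), r i k * s i * x i k * ρ i (b i k))
    (u : (K → ℝ) → ℝ) (hu : ConcaveOn ℝ Set.univ u)
    (p : (K → ℝ) → EReal)
    (hp : ∀ lam, p lam = ⨆ w : K → ℝ, (((∑ k, lam k * w k) + u w : ℝ) : EReal))
    (F : (I → K → ℝ) → (I → K → ℝ) → ℝ)
    (hF : ∀ x b, F x b = prof x b + u (v x b))
    (Q : (K → ℝ) → EReal)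
    (hQ : ∀ lam, Q lam =
      (⨆ xb ∈ S, ((prof xb.1 xb.2 - ∑ k, lam k * v xb.1 xb.2 k : ℝ) : EReal)) + p lam)
    (hpfin : ∀ lam, p lam ≠ ⊤)
    (lamstar : K → ℝ) (hlam : ∀ lam, Q lamstar ≤ Q lam)
    (xstar bstar : I → K → ℝ) (hmem : (xstar, bstar) ∈ S)
    (hopt : ∀ xb ∈ S, prof xb.1 xb.2 - ∑ k, lamstar k * v xb.1 xb.2 k ≤
      prof xstar bstar - ∑ k, lamstar k * v xstar bstar k)
    (hsub : ∀ mu, p lamstar +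
      (((∑ k, v xstar bstar k * (mu k - lamstar k)) : ℝ) : EReal) ≤ p mu) :
    Q lamstar = ((F xstar bstar : ℝ) : EReal) := by
  classical
  set vs : K → ℝ := v xstar bstar with hvs
  -- supergradient of u at vs
  obtain ⟨mu0, hmu0⟩ := exists_supergrad u hu vs
  -- p mu0 is bounded above
  have hpmu0 : p mu0 ≤ (((∑ k, mu0 k * vs k) + u vs : ℝ) : EReal) := by
    rw [hp]
    exact iSup_le fun w => EReal.coe_le_coe_iff.2 (hmu0 w)
  -- lower bound for p lamstar
  have hplow : (((∑ k, lamstar k * vs k) + u vs : ℝ) : EReal) ≤ p lamstar := by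
    rw [hp]
    exact le_iSup (fun w : K → ℝ => (((∑ k, lamstar k * w k) + u w : ℝ) : EReal)) vs
  have hpbot : p lamstar ≠ ⊥ := fun hb => by
    rw [hb] at hplow
    exact (EReal.bot_lt_coe _).not_ge hplow
  lift p lamstar to ℝ using ⟨hpfin lamstar, hpbot⟩ with c hc
  -- upper bound for c from the subgradient inequality at mu0
  have hcle : c ≤ (∑ k, lamstar k * vs k) + u vs := by
    have h1 := (hsub mu0).trans hpmu0
    rw [← EReal.coe_add, EReal.coe_le_coe_iff] at h1
    have e1 : (∑ k, vs k * (mu0 k - lamstar k))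
        = (∑ k, mu0 k * vs k) - ∑ k, lamstar k * vs k := by
      rw [← Finset.sum_sub_distrib]
      exact Finset.sum_congr rfl fun k _ => by ring
    rw [e1] at h1
    linarith
  have hcge : (∑ k, lamstar k * vs k) + u vs ≤ c := by
    exact EReal.coe_le_coe_iff.1 hplow
  have hceq : c = (∑ k, lamstar k * vs k) + u vs := le_antisymm hcle hcge
  -- the supremum over S is attained at (xstar, bstar)
  have hsupS : (⨆ xb ∈ S, ((prof xb.1 xb.2 - ∑ k, lamstar k * v xb.1 xb.2 k : ℝ) : EReal))
      = ((prof xstar bstar - ∑ k, lamstar k * vs k : ℝ) : EReal) := by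
    apply le_antisymm
    · exact iSup₂_le fun xb hxb => EReal.coe_le_coe_iff.2 (hopt xb hxb)
    · exact le_iSup₂ (f := fun xb (_ : xb ∈ S) =>
        ((prof xb.1 xb.2 - ∑ k, lamstar k * v xb.1 xb.2 k : ℝ) : EReal)) (xstar, bstar) hmem
  rw [hQ, hsupS, ← hc, ← EReal.coe_add, EReal.coe_eq_coe_iff, hceq, hF]
  ring
end

section
/- Suppose ρ_i and β_i are continuous on [0, b̄_i] for every i ∈ I and p is finite on all of ℝ^K. Let λ* be a minimizer of the dual function Q over ℝ^K, and suppose that for every i ∈ I the set V_i := { v_i(x_i, b_i) : (x_i, b_i) ∈ S_i*(λ*) } ⊆ ℝ^K is convex. Then there exists (x*, b*) ∈ S maximizing (x,b) ↦ π(x,b) − (λ*)ᵀ v(x,b) over S such that F(x*, b*) = Q(λ*). -/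
open Filter Topology Metric

lemma key_danskin {K ι : Type*} [Fintype K] [Fintype ι]
    (A : ι → Set ((K → ℝ) × (K → ℝ)))
    (hAc : ∀ i, IsCompact (A i))
    (c : ι → ((K → ℝ) × (K → ℝ)) → ℝ)
    (w : ι → ((K → ℝ) × (K → ℝ)) → (K → ℝ))
    (hc : ∀ i, ContinuousOn (c i) (A i))
    (hw : ∀ i, ContinuousOn (w i) (A i))
    (φ : ι → (K → ℝ) → ((K → ℝ) × (K → ℝ)) → ℝ)
    (hφ : ∀ i lam y, φ i lam y = c i y - ∑ k, lam k * w i y k)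
    (M : ι → (K → ℝ) → ℝ)
    (hM : ∀ i lam, ∃ y ∈ A i, (∀ z ∈ A i, φ i lam z ≤ φ i lam y) ∧ M i lam = φ i lam y)
    (lamstar : K → ℝ)
    (hmin : ∀ lam ∈ Metric.closedBall lamstar 1, ∑ i, M i lamstar ≤ ∑ i, M i lam)
    (hconv : ∀ i, Convex ℝ (w i '' {y ∈ A i | φ i lamstar y = M i lamstar})) :
    ∃ a : ι → ((K → ℝ) × (K → ℝ)),
      (∀ i, a i ∈ A i ∧ φ i lamstar (a i) = M i lamstar) ∧ ∑ i, w i (a i) = 0 := by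
  classical
  choose y hyA hymax hyM using hM
  set Arg : ι → Set ((K → ℝ) × (K → ℝ)) := fun i => {z ∈ A i | φ i lamstar z = M i lamstar}
    with hArg
  -- continuity of φ on A i
  have hφcont : ∀ i lam, ContinuousOn (φ i lam) (A i) := by
    intro i lam
    have : ContinuousOn (fun z => c i z - ∑ k, lam k * w i z k) (A i) := by
      apply (hc i).sub
      apply continuousOn_finset_sum
      intro k _
      exact continuousOn_const.mul ((continuous_apply k).comp_continuousOn (hw i))
    exact this.congr (fun z _ => hφ i lam z)
  have hArgc : ∀ i, IsCompact (Arg i) := by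
    intro i
    have hcl : IsClosed (A i ∩ (φ i lamstar) ⁻¹' {M i lamstar}) :=
      (hφcont i lamstar).preimage_isClosed_of_isClosed (hAc i).isClosed isClosed_singleton
    exact (hAc i).of_isClosed_subset hcl (fun z hz => hz.1)
  have hArgne : ∀ i, (Arg i).Nonempty := fun i => ⟨y i lamstar, hyA i lamstar, (hyM i lamstar).symm⟩
  set V : ι → Set (K → ℝ) := fun i => w i '' Arg i with hV
  have hVc : ∀ i, IsCompact (V i) :=
    fun i => (hArgc i).image_of_continuousOn ((hw i).mono (fun z hz => hz.1))
  have hVne : ∀ i, (V i).Nonempty := fun i => (hArgne i).image _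
  set sumL : (ι → (K → ℝ)) →ₗ[ℝ] (K → ℝ) := ∑ i, LinearMap.proj i with hsumL
  have hsumL_apply : ∀ g : ι → (K → ℝ), sumL g = ∑ i, g i := by
    intro g; simp [hsumL, LinearMap.sum_apply]
  set W : Set (K → ℝ) := sumL '' (Set.univ.pi V) with hW
  have hWconv : Convex ℝ W := (convex_pi (fun i _ => hconv i)).linear_image sumL
  have hWc : IsCompact W := by
    apply (isCompact_univ_pi hVc).image
    exact sumL.continuous_of_finiteDimensional
  have hWne : W.Nonempty := by
    refine ⟨sumL (fun i => (hVne i).choose), Set.mem_image_of_mem _ ?_⟩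
    exact fun i _ => (hVne i).choose_spec
  have h0 : (0 : K → ℝ) ∈ W := by
    by_contra h0
    obtain ⟨f, sep, hf0, hfW⟩ :=
      geometric_hahn_banach_point_closed hWconv hWc.isClosed h0
    rw [map_zero] at hf0
    set d : K → ℝ := fun k => f (Pi.single k 1) with hd
    have hfd : ∀ z : K → ℝ, f z = ∑ k, z k * d k := by
      intro z
      have hz : z = ∑ k, z k • (Pi.single k (1:ℝ) : K → ℝ) := by
        funext k'
        simp [Finset.sum_apply, Pi.single_apply]
      conv_lhs => rw [hz]
      rw [map_sum]
      simp [hd, smul_eq_mul]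
    set t : ℕ → ℝ := fun n => ((n:ℝ)+1)⁻¹ * (1 + ‖d‖)⁻¹ with ht
    have hdpos : (0:ℝ) < 1 + ‖d‖ := by positivity
    have htpos : ∀ n, 0 < t n := by intro n; positivity
    have htball : ∀ n, lamstar + t n • d ∈ Metric.closedBall lamstar 1 := by
      intro n
      have h1 : ‖t n • d‖ = t n * ‖d‖ := by
        rw [norm_smul, Real.norm_eq_abs, abs_of_pos (htpos n)]
      have h2 : t n * ‖d‖ ≤ 1 := by
        have hn : ((n:ℝ)+1)⁻¹ ≤ 1 := by
          rw [inv_le_one_iff₀]; right; linarith [Nat.cast_nonneg (α := ℝ) n]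
        have : (1 + ‖d‖)⁻¹ * ‖d‖ ≤ 1 := by
          rw [inv_mul_le_iff₀ hdpos]; linarith [norm_nonneg d]
        calc t n * ‖d‖ = ((n:ℝ)+1)⁻¹ * ((1 + ‖d‖)⁻¹ * ‖d‖) := by ring
        _ ≤ 1 * 1 := by
            apply mul_le_mul hn this (by positivity) zero_le_one
        _ = 1 := by ring
      rw [Metric.mem_closedBall, dist_eq_norm]
      have he : lamstar + t n • d - lamstar = t n • d := by abel
      rw [he, h1]; exact h2
    have ht0 : Tendsto t atTop (nhds 0) := by
      have : Tendsto (fun n : ℕ => 1 / ((n : ℝ) + 1)) atTop (nhds 0) :=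
        tendsto_one_div_add_atTop_nhds_zero_nat
      have h2 : Tendsto (fun n : ℕ => ((n:ℝ)+1)⁻¹) atTop (nhds 0) := by
        simpa [one_div] using this
      simpa using h2.mul_const ((1 + ‖d‖)⁻¹)
    set lamn : ℕ → (K → ℝ) := fun n => lamstar + t n • d with hlamn
    set a : ℕ → (ι → ((K → ℝ) × (K → ℝ))) := fun n i => y i (lamn n) with ha
    have haA : ∀ n, a n ∈ Set.univ.pi A := fun n i _ => hyA i (lamn n)
    obtain ⟨abar, habar, ψ, hψ, hconvseq⟩ := (isCompact_univ_pi hAc).tendsto_subseq haA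
    have habarA : ∀ i, abar i ∈ A i := fun i => habar i (Set.mem_univ i)
    have hcomp : ∀ i, Tendsto (fun n => a (ψ n) i) atTop (nhds (abar i)) := by
      intro i
      exact ((continuous_apply i).tendsto abar).comp hconvseq
    have htψ : Tendsto (fun n => t (ψ n)) atTop (nhds 0) :=
      ht0.comp hψ.tendsto_atTop
    have hlamψ : ∀ k, Tendsto (fun n => lamn (ψ n) k) atTop (nhds (lamstar k)) := by
      intro k
      have : Tendsto (fun n => lamstar k + t (ψ n) * d k) atTop (nhds (lamstar k + 0 * d k)) :=
        tendsto_const_nhds.add (htψ.mul_const (d k))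
      simpa [hlamn] using this
    -- limits of w and c along the subsequence
    have hwlim : ∀ i, Tendsto (fun n => w i (a (ψ n) i)) atTop (nhds (w i (abar i))) := by
      intro i
      have hwithin : Tendsto (fun n => a (ψ n) i) atTop (nhdsWithin (abar i) (A i)) :=
        tendsto_nhdsWithin_of_tendsto_nhds_of_eventually_within _ (hcomp i)
          (Eventually.of_forall (fun n => hyA i (lamn (ψ n))))
      exact (hw i (abar i) (habarA i)).tendsto.comp hwithin
    have hclim : ∀ i, Tendsto (fun n => c i (a (ψ n) i)) atTop (nhds (c i (abar i))) := by
      intro i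
      have hwithin : Tendsto (fun n => a (ψ n) i) atTop (nhdsWithin (abar i) (A i)) :=
        tendsto_nhdsWithin_of_tendsto_nhds_of_eventually_within _ (hcomp i)
          (Eventually.of_forall (fun n => hyA i (lamn (ψ n))))
      exact (hc i (abar i) (habarA i)).tendsto.comp hwithin
    have hφlim : ∀ i, Tendsto (fun n => φ i (lamn (ψ n)) (a (ψ n) i)) atTop
        (nhds (φ i lamstar (abar i))) := by
      intro i
      have hsum : Tendsto (fun n => ∑ k, lamn (ψ n) k * w i (a (ψ n) i) k) atTop
          (nhds (∑ k, lamstar k * w i (abar i) k)) := by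
        apply tendsto_finset_sum
        intro k _
        exact (hlamψ k).mul (((continuous_apply k).tendsto _).comp (hwlim i))
      simpa [hφ] using (hclim i).sub hsum
    have habarArg : ∀ i, abar i ∈ Arg i := by
      intro i
      refine ⟨habarA i, ?_⟩
      have hub : ∀ z ∈ A i, φ i lamstar z ≤ φ i lamstar (abar i) := by
        intro z hz
        have hn : ∀ n, φ i (lamn (ψ n)) z ≤ φ i (lamn (ψ n)) (a (ψ n) i) :=
          fun n => hymax i (lamn (ψ n)) z hz
        have hzlim : Tendsto (fun n => φ i (lamn (ψ n)) z) atTop (nhds (φ i lamstar z)) := by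
          have hsum : Tendsto (fun n => ∑ k, lamn (ψ n) k * w i z k) atTop
              (nhds (∑ k, lamstar k * w i z k)) := by
            apply tendsto_finset_sum
            intro k _
            exact (hlamψ k).mul_const _
          simpa [hφ] using (tendsto_const_nhds (x := c i z)).sub hsum
        exact le_of_tendsto_of_tendsto hzlim (hφlim i) (Eventually.of_forall hn)
      have h1 : φ i lamstar (abar i) ≤ M i lamstar := by
        rw [hyM i lamstar]; exact hymax i lamstar _ (habarA i)
      have h2 : M i lamstar ≤ φ i lamstar (abar i) := by
        rw [hyM i lamstar]; exact hub _ (hyA i lamstar)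
      exact le_antisymm h1 h2
    -- the key inequality for each n
    have hkey : ∀ n, ∑ i, f (w i (a n i)) ≤ 0 := by
      intro n
      have hMn : ∀ i, M i (lamn n) = φ i lamstar (a n i) - t n * f (w i (a n i)) := by
        intro i
        rw [hyM i (lamn n)]
        rw [hφ, hφ, hfd]
        have : ∑ k, lamn n k * w i (a n i) k
            = (∑ k, lamstar k * w i (a n i) k) + t n * ∑ k, w i (a n i) k * d k := by
          rw [Finset.mul_sum, ← Finset.sum_add_distrib]
          congr 1; funext k
          simp [hlamn]; ring
        rw [this]; ring
      have hle : ∀ i, φ i lamstar (a n i) ≤ M i lamstar := by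
        intro i
        rw [hyM i lamstar]
        exact hymax i lamstar _ (hyA i (lamn n))
      have hmin' := hmin (lamn n) (htball n)
      have : ∑ i, M i lamstar ≤ ∑ i, (M i lamstar - t n * f (w i (a n i))) := by
        calc ∑ i, M i lamstar ≤ ∑ i, M i (lamn n) := hmin'
        _ ≤ ∑ i, (M i lamstar - t n * f (w i (a n i))) := by
            apply Finset.sum_le_sum
            intro i _
            rw [hMn i]
            linarith [hle i]
      rw [Finset.sum_sub_distrib, ← Finset.mul_sum] at this
      nlinarith [htpos n]
    have hlim2 : Tendsto (fun n => ∑ i, f (w i (a (ψ n) i))) atTop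
        (nhds (∑ i, f (w i (abar i)))) := by
      apply tendsto_finset_sum
      intro i _
      exact (f.continuous.tendsto _).comp (hwlim i)
    have hfinal : ∑ i, f (w i (abar i)) ≤ 0 :=
      le_of_tendsto_of_tendsto hlim2 tendsto_const_nhds
        (Eventually.of_forall (fun n => hkey (ψ n)))
    have hmem : ∑ i, w i (abar i) ∈ W := by
      refine ⟨fun i => w i (abar i), fun i _ => ⟨abar i, habarArg i, rfl⟩, ?_⟩
      rw [hsumL_apply]
    have := hfW _ hmem
    rw [← map_sum] at hfinal
    linarith
  obtain ⟨g, hg, hgsum⟩ := h0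
  have hg' : ∀ i, g i ∈ V i := fun i => hg i (Set.mem_univ i)
  choose a haArg hwa using hg'
  refine ⟨a, fun i => ⟨(haArg i).1, (haArg i).2⟩, ?_⟩
  rw [← hgsum, hsumL_apply]
  exact Finset.sum_congr rfl (fun i _ => (hwa i))

open scoped BigOperators Classical

set_option maxHeartbeats 2000000 in
theorem stmt_6
    {I K : Type*} [Fintype I] [Fintype K] [DecidableEq I] [DecidableEq K]
    (E : Finset (I × K))
    (bbar : I → ℝ) (hbbar : ∀ i, 0 < bbar i)
    (ρ β : I → ℝ → ℝ)
    (hρmono : ∀ i, MonotoneOn (ρ i) (Set.Icc 0 (bbar i)))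
    (hβmono : ∀ i, MonotoneOn (β i) (Set.Icc 0 (bbar i)))
    (hρ01 : ∀ i, ∀ b ∈ Set.Icc (0:ℝ) (bbar i), ρ i b ∈ Set.Icc (0:ℝ) 1)
    (hβb : ∀ i, ∀ b ∈ Set.Icc (0:ℝ) (bbar i), β i b ∈ Set.Icc (0:ℝ) b)
    (s : I → ℝ) (hs : ∀ i, 0 < s i)
    (r : I → K → ℝ) (hr : ∀ i k, (i, k) ∈ E → 0 < r i k)
    (h : I → ℝ → ℝ → ℝ)
    (hdef : ∀ i z b, h i z b = (z - β i b) * ρ i b)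
    (hρcont : ∀ i, ContinuousOn (ρ i) (Set.Icc 0 (bbar i)))
    (hβcont : ∀ i, ContinuousOn (β i) (Set.Icc 0 (bbar i)))
    (S : Set ((I → K → ℝ) × (I → K → ℝ)))
    (hS : S = {xb | (∀ i k, 0 ≤ xb.1 i k) ∧
      (∀ i, (∑ k ∈ Finset.univ.filter (fun k => (i, k) ∈ E), xb.1 i k) ≤ 1) ∧
      (∀ i k, (i, k) ∈ E → xb.2 i k ∈ Set.Icc (0:ℝ) (bbar i))})
    (prof : (I → K → ℝ) → (I → K → ℝ) → ℝ)
    (hprof : ∀ x b, prof x b = ∑ e ∈ E, h e.1 (r e.1 e.2) (b e.1 e.2) * s e.1 * x e.1 e.2)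
    (v : (I → K → ℝ) → (I → K → ℝ) → K → ℝ)
    (hv : ∀ x b k, v x b k =
      ∑ i ∈ Finset.univ.filter (fun i => (i, k) ∈ E), r i k * s i * x i k * ρ i (b i k))
    (u : (K → ℝ) → ℝ) (hu : ConcaveOn ℝ Set.univ u)
    (p : (K → ℝ) → EReal)
    (hp : ∀ lam, p lam = ⨆ w : K → ℝ, (((∑ k, lam k * w k) + u w : ℝ) : EReal))
    (F : (I → K → ℝ) → (I → K → ℝ) → ℝ)
    (hF : ∀ x b, F x b = prof x b + u (v x b))
    (Q : (K → ℝ) → EReal)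
    (hQ : ∀ lam, Q lam =
      (⨆ xb ∈ S, ((prof xb.1 xb.2 - ∑ k, lam k * v xb.1 xb.2 k : ℝ) : EReal)) + p lam)
    (hpfin : ∀ lam, p lam ≠ ⊤)
    (Si : I → Set ((K → ℝ) × (K → ℝ)))
    (hSi : ∀ i, Si i = {xb | (∀ k, (i, k) ∈ E → 0 ≤ xb.1 k) ∧
      (∑ k ∈ Finset.univ.filter (fun k => (i, k) ∈ E), xb.1 k) ≤ 1 ∧
      (∀ k, (i, k) ∈ E → xb.2 k ∈ Set.Icc (0:ℝ) (bbar i))})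
    (obji : I → (K → ℝ) → (K → ℝ) → (K → ℝ) → ℝ)
    (hobji : ∀ i lam x b, obji i lam x b =
      ∑ k ∈ Finset.univ.filter (fun k => (i, k) ∈ E), h i (r i k * (1 - lam k)) (b k) * s i * x k)
    (Sistar : I → (K → ℝ) → Set ((K → ℝ) × (K → ℝ)))
    (hSistar : ∀ i lam, Sistar i lam =
      {xb | xb ∈ Si i ∧ ∀ yb ∈ Si i, obji i lam yb.1 yb.2 ≤ obji i lam xb.1 xb.2})
    (vi : I → (K → ℝ) → (K → ℝ) → K → ℝ)
    (hvi : ∀ i x b k, vi i x b k = if (i, k) ∈ E then r i k * s i * x k * ρ i (b k) else 0)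
    (lamstar : K → ℝ) (hlam : ∀ lam, Q lamstar ≤ Q lam)
    (hVconv : ∀ i, Convex ℝ
      {w : K → ℝ | ∃ xb ∈ Sistar i lamstar, w = fun k => vi i xb.1 xb.2 k}) :
    ∃ xstar bstar : I → K → ℝ, (xstar, bstar) ∈ S ∧
      (∀ xb ∈ S, prof xb.1 xb.2 - ∑ k, lamstar k * v xb.1 xb.2 k ≤
        prof xstar bstar - ∑ k, lamstar k * v xstar bstar k) ∧
      ((F xstar bstar : ℝ) : EReal) = Q lamstar := by
  classical
  -- ====== Part 1 : the function P (real version of p), continuity, coercivity ======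
  have hpbot : ∀ lam, p lam ≠ ⊥ := by
    intro lam hbot
    have h1 : (((∑ k, lam k * (0:K→ℝ) k) + u 0 : ℝ) : EReal) ≤ p lam := by
      rw [hp]; exact le_iSup (fun z : K → ℝ => (((∑ k, lam k * z k) + u z : ℝ) : EReal)) 0
    rw [hbot] at h1
    exact (EReal.coe_ne_bot _) (le_bot_iff.mp h1)
  set P : (K → ℝ) → ℝ := fun lam => (p lam).toReal with hPdef
  have hpP : ∀ lam, p lam = ((P lam : ℝ) : EReal) := fun lam =>
    (EReal.coe_toReal (hpfin lam) (hpbot lam)).symm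
  have hPub : ∀ lam (z : K → ℝ), (∑ k, lam k * z k) + u z ≤ P lam := by
    intro lam z
    have h1 : (((∑ k, lam k * z k) + u z : ℝ) : EReal) ≤ p lam := by
      rw [hp]; exact le_iSup (fun z : K → ℝ => (((∑ k, lam k * z k) + u z : ℝ) : EReal)) z
    rw [hpP lam] at h1
    exact_mod_cast h1
  have hucont : Continuous u := by
    have h1 : ConvexOn ℝ Set.univ (-u) := hu.neg
    have h2 := ConvexOn.continuousOn isOpen_univ h1
    have h3 : Continuous (-u) := continuousOn_univ.mp h2
    simpa using h3.neg
  have hPconv : ConvexOn ℝ Set.univ P := by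
    refine ⟨convex_univ, ?_⟩
    intro x _ y _ a b ha hb hab
    have h1 : p (a • x + b • y) ≤ ((a * P x + b * P y : ℝ) : EReal) := by
      rw [hp]; apply iSup_le; intro z
      rw [EReal.coe_le_coe_iff]
      have hsum : ∑ k, (a • x + b • y) k * z k
          = a * (∑ k, x k * z k) + b * (∑ k, y k * z k) := by
        rw [Finset.mul_sum, Finset.mul_sum, ← Finset.sum_add_distrib]
        refine Finset.sum_congr rfl (fun k _ => ?_)
        simp [Pi.add_apply, Pi.smul_apply, smul_eq_mul]; ring
      have h2 := hPub x z
      have h3 := hPub y z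
      have h4 : u z = a * u z + b * u z := by rw [← add_mul, hab, one_mul]
      rw [hsum]
      nlinarith [mul_le_mul_of_nonneg_left h2 ha, mul_le_mul_of_nonneg_left h3 hb]
    rw [hpP] at h1
    have := EReal.coe_le_coe_iff.mp h1
    simpa [smul_eq_mul] using this
  have hPcont : Continuous P :=
    continuousOn_univ.mp (ConvexOn.continuousOn isOpen_univ hPconv)
  obtain ⟨Cb, hCb⟩ : ∃ Cb, ∀ μ ∈ Metric.closedBall lamstar 2, P μ ≤ Cb := by
    obtain ⟨μ0, hμ0, hmax⟩ := (isCompact_closedBall lamstar 2).exists_isMaxOn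
      ⟨lamstar, by simp⟩ hPcont.continuousOn
    exact ⟨P μ0, fun μ hμ => hmax hμ⟩
  set R : ℝ := max 1 (Cb - u 0) with hRdef
  have hR1 : (1:ℝ) ≤ R := le_max_left _ _
  have hR0 : (0:ℝ) < R := lt_of_lt_of_le one_pos hR1
  have hcoer : ∀ lam ∈ Metric.closedBall lamstar 1, ∀ z : K → ℝ, R < ‖z‖ →
      (∑ k, lam k * z k) + u z ≤ u 0 := by
    intro lam hlamb z hz
    have hzne : z ≠ 0 := by
      intro hzz; rw [hzz, norm_zero] at hz; linarith
    have hKne : Nonempty K := ⟨(Function.ne_iff.mp hzne).choose⟩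
    obtain ⟨k0, _, hk0⟩ := Finset.exists_max_image Finset.univ (fun k => |z k|)
      Finset.univ_nonempty
    have hnz : ‖z‖ = |z k0| := by
      refine le_antisymm ?_ ?_
      · exact (pi_norm_le_iff_of_nonneg (abs_nonneg _)).mpr
          (fun k => by simpa [Real.norm_eq_abs] using hk0 k (Finset.mem_univ k))
      · simpa [Real.norm_eq_abs] using norm_le_pi_norm z k0
    set σ : ℝ := if z k0 < 0 then -1 else 1 with hσdef
    have hσz : σ * z k0 = |z k0| := by
      by_cases hzk : z k0 < 0
      · rw [hσdef]; simp [hzk, abs_of_neg hzk]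
      · rw [hσdef]; simp [hzk, abs_of_nonneg (not_lt.mp hzk)]
    have hσ1 : |σ| = 1 := by
      by_cases hzk : z k0 < 0 <;> simp [hσdef, hzk]
    set μ : K → ℝ := lam + σ • (Pi.single k0 (1:ℝ) : K → ℝ) with hμdef
    have hμball : μ ∈ Metric.closedBall lamstar 2 := by
      rw [Metric.mem_closedBall, dist_eq_norm]
      have h1 : μ - lamstar = (lam - lamstar) + σ • (Pi.single k0 (1:ℝ) : K → ℝ) := by
        rw [hμdef]; abel
      have h2 : ‖(Pi.single k0 (1:ℝ) : K → ℝ)‖ ≤ 1 :=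
        (pi_norm_le_iff_of_nonneg zero_le_one).mpr (fun j => by
          rcases eq_or_ne j k0 with hj | hj <;> simp [Pi.single_apply, hj])
      have h3 : ‖σ • (Pi.single k0 (1:ℝ) : K → ℝ)‖ ≤ 1 := by
        rw [norm_smul, Real.norm_eq_abs, hσ1, one_mul]; exact h2
      have h4 : ‖lam - lamstar‖ ≤ 1 := by
        rw [Metric.mem_closedBall, dist_eq_norm] at hlamb; exact hlamb
      calc ‖μ - lamstar‖ ≤ ‖lam - lamstar‖ + ‖σ • (Pi.single k0 (1:ℝ) : K → ℝ)‖ := by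
            rw [h1]; exact norm_add_le _ _
      _ ≤ 2 := by linarith
    have h1 : (∑ k, μ k * z k) + u z ≤ Cb := le_trans (hPub μ z) (hCb μ hμball)
    have h2 : ∑ k, μ k * z k = (∑ k, lam k * z k) + ‖z‖ := by
      rw [hμdef]
      have : ∀ k, (lam + σ • (Pi.single k0 (1:ℝ) : K → ℝ)) k * z k
          = lam k * z k + σ * ((Pi.single k0 (1:ℝ) : K → ℝ) k * z k) := by
        intro k; simp [Pi.add_apply, Pi.smul_apply, smul_eq_mul]; ring
      rw [Finset.sum_congr rfl (fun k _ => this k), Finset.sum_add_distrib, ← Finset.mul_sum]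
      have hsingle : ∑ k, (Pi.single k0 (1:ℝ) : K → ℝ) k * z k = z k0 := by
        rw [Finset.sum_eq_single k0]
        · simp
        · intro j _ hj; simp [Pi.single_apply, hj]
        · intro hnot; exact absurd (Finset.mem_univ k0) hnot
      rw [hsingle, hσz, ← hnz]
    have hRu : Cb - u 0 ≤ R := le_max_right _ _
    rw [h2] at h1
    linarith
  -- max of p over the ball of radius R
  have hMp : ∀ lam ∈ Metric.closedBall lamstar 1, ∃ z0 ∈ Metric.closedBall (0:K→ℝ) R,
      (∀ z : K → ℝ, (∑ k, lam k * z k) + u z ≤ (∑ k, lam k * z0 k) + u z0) ∧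
      P lam = (∑ k, lam k * z0 k) + u z0 := by
    intro lam hlamb
    have hcontf : Continuous (fun z : K → ℝ => (∑ k, lam k * z k) + u z) := by
      exact (continuous_finset_sum _ (fun k _ =>
        (continuous_const.mul (continuous_apply k)))).add hucont
    obtain ⟨z0, hz0b, hz0max⟩ := (isCompact_closedBall (0:K→ℝ) R).exists_isMaxOn
      ⟨0, by simp [hR0.le]⟩ hcontf.continuousOn
    have hglob : ∀ z : K → ℝ, (∑ k, lam k * z k) + u z ≤ (∑ k, lam k * z0 k) + u z0 := by
      intro z
      by_cases hzb : ‖z‖ ≤ R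
      · exact hz0max (by simpa [Metric.mem_closedBall, dist_eq_norm] using hzb)
      · have h1 := hcoer lam hlamb z (not_le.mp hzb)
        have h2 : (∑ k, lam k * (0:K→ℝ) k) + u 0 ≤ (∑ k, lam k * z0 k) + u z0 :=
          hz0max (by simp [Metric.mem_closedBall, hR0.le])
        simp only [Pi.zero_apply, mul_zero, Finset.sum_const_zero, zero_add] at h2
        linarith
    have hPeq : P lam = (∑ k, lam k * z0 k) + u z0 := by
      refine le_antisymm ?_ (hPub lam z0)
      have h1 : p lam ≤ (((∑ k, lam k * z0 k) + u z0 : ℝ) : EReal) := by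
        rw [hp]; exact iSup_le (fun z => EReal.coe_le_coe_iff.mpr (hglob z))
      rw [hpP lam] at h1
      exact_mod_cast h1
    exact ⟨z0, hz0b, hglob, hPeq⟩
  -- ====== Part 2 : instantiation data ======
  set T : I → Set ((K → ℝ) × (K → ℝ)) := fun i =>
    {y | (∀ k, y.1 k ∈ Set.Icc (0:ℝ) 1) ∧
         ((∑ k ∈ Finset.univ.filter (fun k => (i, k) ∈ E), y.1 k) ≤ 1) ∧
         (∀ k, y.2 k ∈ Set.Icc (0:ℝ) (bbar i))} with hTdef
  set AF : Option I → Set ((K → ℝ) × (K → ℝ)) := fun o =>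
    Option.elim o (Metric.closedBall (0:K→ℝ) R ×ˢ ({0} : Set (K → ℝ))) T with hAFdef
  set cF : Option I → ((K → ℝ) × (K → ℝ)) → ℝ := fun o =>
    Option.elim o (fun y => u y.1)
      (fun i y => ∑ k ∈ Finset.univ.filter (fun k => (i, k) ∈ E),
        (r i k - β i (y.2 k)) * ρ i (y.2 k) * s i * y.1 k) with hcFdef
  set wF : Option I → ((K → ℝ) × (K → ℝ)) → (K → ℝ) := fun o =>
    Option.elim o (fun y => -y.1)
      (fun i y k => if (i, k) ∈ E then r i k * s i * y.1 k * ρ i (y.2 k) else 0) with hwFdef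
  set φ : Option I → (K → ℝ) → ((K → ℝ) × (K → ℝ)) → ℝ :=
    fun o lam y => cF o y - ∑ k, lam k * wF o y k with hφdef
  set M : Option I → (K → ℝ) → ℝ := fun o lam => sSup ((φ o lam) '' AF o) with hMdef
  have hAF_some : ∀ i, AF (some i) = T i := fun i => rfl
  have hAF_none : AF none = Metric.closedBall (0:K→ℝ) R ×ˢ ({0} : Set (K → ℝ)) := rfl
  have hcF_some : ∀ i y, cF (some i) y = ∑ k ∈ Finset.univ.filter (fun k => (i, k) ∈ E),
      (r i k - β i (y.2 k)) * ρ i (y.2 k) * s i * y.1 k := fun i y => rfl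
  have hcF_none : ∀ y, cF none y = u y.1 := fun y => rfl
  have hwF_some : ∀ i y k, wF (some i) y k
      = if (i, k) ∈ E then r i k * s i * y.1 k * ρ i (y.2 k) else 0 := fun i y k => rfl
  have hwF_none : ∀ y, wF none y = -y.1 := fun y => rfl
  have hφeq : ∀ o lam y, φ o lam y = cF o y - ∑ k, lam k * wF o y k := by
    intro o lam y; rw [hφdef]
  have hTmem : ∀ i (y : (K → ℝ) × (K → ℝ)), y ∈ T i ↔
      ((∀ k, y.1 k ∈ Set.Icc (0:ℝ) 1) ∧
       ((∑ k ∈ Finset.univ.filter (fun k => (i, k) ∈ E), y.1 k) ≤ 1) ∧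
       (∀ k, y.2 k ∈ Set.Icc (0:ℝ) (bbar i))) := by
    intro i y; rw [hTdef]; rfl
  -- φ at some equals obji ; φ at none
  have hφ_some : ∀ i lam (y : (K → ℝ) × (K → ℝ)), φ (some i) lam y = obji i lam y.1 y.2 := by
    intro i lam y
    rw [hφeq, hcF_some, hobji]
    have h1 : ∑ k, lam k * wF (some i) y k
        = ∑ k ∈ Finset.univ.filter (fun k => (i, k) ∈ E),
            lam k * (r i k * s i * y.1 k * ρ i (y.2 k)) := by
      rw [Finset.sum_filter]
      refine Finset.sum_congr rfl (fun k _ => ?_)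
      rw [hwF_some]
      by_cases hk : (i, k) ∈ E <;> simp [hk]
    rw [h1, ← Finset.sum_sub_distrib]
    refine Finset.sum_congr rfl (fun k hk => ?_)
    rw [hdef]
    ring
  have hφ_none : ∀ lam (y : (K → ℝ) × (K → ℝ)),
      φ none lam y = (∑ k, lam k * y.1 k) + u y.1 := by
    intro lam y
    rw [hφeq, hcF_none]
    have h1 : ∑ k, lam k * wF none y k = -∑ k, lam k * y.1 k := by
      rw [← Finset.sum_neg_distrib]
      refine Finset.sum_congr rfl (fun k _ => ?_)
      rw [hwF_none]; simp
    rw [h1]; ring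
  -- compactness and nonemptiness of AF
  have hAc : ∀ o, IsCompact (AF o) := by
    intro o
    cases o with
    | none => rw [hAF_none]; exact (isCompact_closedBall _ _).prod isCompact_singleton
    | some i =>
      rw [hAF_some]
      have hsub : T i ⊆ (Set.univ.pi fun _ : K => Set.Icc (0:ℝ) 1) ×ˢ
          (Set.univ.pi fun _ : K => Set.Icc (0:ℝ) (bbar i)) := by
        intro y hy
        rw [hTmem] at hy
        exact Set.mem_prod.mpr ⟨fun k _ => hy.1 k, fun k _ => hy.2.2 k⟩
      have hcomp : IsCompact ((Set.univ.pi fun _ : K => Set.Icc (0:ℝ) 1) ×ˢ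
          (Set.univ.pi fun _ : K => Set.Icc (0:ℝ) (bbar i))) :=
        (isCompact_univ_pi fun _ => isCompact_Icc).prod
          (isCompact_univ_pi fun _ => isCompact_Icc)
      have hclosed : IsClosed (T i) := by
        have h1 : T i = (⋂ k, {y : (K → ℝ) × (K → ℝ) | y.1 k ∈ Set.Icc (0:ℝ) 1}) ∩
            ({y : (K → ℝ) × (K → ℝ) |
                (∑ k ∈ Finset.univ.filter (fun k => (i, k) ∈ E), y.1 k) ≤ 1} ∩
             ⋂ k, {y : (K → ℝ) × (K → ℝ) | y.2 k ∈ Set.Icc (0:ℝ) (bbar i)}) := by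
          ext y
          rw [hTmem]
          simp only [Set.mem_inter_iff, Set.mem_iInter, Set.mem_setOf_eq]
        rw [h1]
        refine IsClosed.inter (isClosed_iInter fun k => ?_)
          (IsClosed.inter ?_ (isClosed_iInter fun k => ?_))
        · exact isClosed_Icc.preimage ((continuous_apply k).comp continuous_fst)
        · exact isClosed_le (continuous_finset_sum _ fun k _ =>
            (continuous_apply k).comp continuous_fst) continuous_const
        · exact isClosed_Icc.preimage ((continuous_apply k).comp continuous_snd)
      exact hcomp.of_isClosed_subset hclosed hsub
  have hAne : ∀ o, (AF o).Nonempty := by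
    intro o
    cases o with
    | none =>
      rw [hAF_none]
      exact ⟨(0, 0), Set.mem_prod.mpr ⟨by simp [hR0.le], rfl⟩⟩
    | some i =>
      rw [hAF_some]
      refine ⟨(0, 0), (hTmem i _).mpr ⟨fun k => by simp, by simp, fun k => by
        simp [(hbbar i).le]⟩⟩
  -- continuity
  have hccont : ∀ o, ContinuousOn (cF o) (AF o) := by
    intro o
    cases o with
    | none =>
      have : ContinuousOn (fun y : (K → ℝ) × (K → ℝ) => u y.1) (AF none) :=
        (hucont.comp continuous_fst).continuousOn
      exact this.congr (fun y _ => hcF_none y)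
    | some i =>
      rw [hAF_some]
      have : ContinuousOn (fun y : (K → ℝ) × (K → ℝ) =>
          ∑ k ∈ Finset.univ.filter (fun k => (i, k) ∈ E),
            (r i k - β i (y.2 k)) * ρ i (y.2 k) * s i * y.1 k) (T i) := by
        apply continuousOn_finset_sum
        intro k _
        have hb2 : ContinuousOn (fun y : (K → ℝ) × (K → ℝ) => y.2 k) (T i) :=
          ((continuous_apply k).comp continuous_snd).continuousOn
        have hmaps : ∀ y ∈ T i, y.2 k ∈ Set.Icc (0:ℝ) (bbar i) :=
          fun y hy => ((hTmem i y).mp hy).2.2 k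
        have hβk : ContinuousOn (fun y : (K → ℝ) × (K → ℝ) => β i (y.2 k)) (T i) :=
          (hβcont i).comp hb2 hmaps
        have hρk : ContinuousOn (fun y : (K → ℝ) × (K → ℝ) => ρ i (y.2 k)) (T i) :=
          (hρcont i).comp hb2 hmaps
        exact (((continuousOn_const.sub hβk).mul hρk).mul continuousOn_const).mul
          ((continuous_apply k).comp continuous_fst).continuousOn
      exact this.congr (fun y _ => hcF_some i y)
  have hwcont : ∀ o, ContinuousOn (wF o) (AF o) := by
    intro o
    cases o with
    | none =>
      have : ContinuousOn (fun y : (K → ℝ) × (K → ℝ) => -y.1) (AF none) :=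
        (continuous_fst.neg).continuousOn
      exact this.congr (fun y _ => hwF_none y)
    | some i =>
      rw [hAF_some]
      apply continuousOn_pi.mpr
      intro k
      by_cases hk : (i, k) ∈ E
      · have : ContinuousOn (fun y : (K → ℝ) × (K → ℝ) =>
            r i k * s i * y.1 k * ρ i (y.2 k)) (T i) := by
          have hb2 : ContinuousOn (fun y : (K → ℝ) × (K → ℝ) => y.2 k) (T i) :=
            ((continuous_apply k).comp continuous_snd).continuousOn
          have hmaps : ∀ y ∈ T i, y.2 k ∈ Set.Icc (0:ℝ) (bbar i) :=
            fun y hy => ((hTmem i y).mp hy).2.2 k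
          have hρk : ContinuousOn (fun y : (K → ℝ) × (K → ℝ) => ρ i (y.2 k)) (T i) :=
            (hρcont i).comp hb2 hmaps
          exact (continuousOn_const.mul
            ((continuous_apply k).comp continuous_fst).continuousOn).mul hρk
        exact this.congr (fun y _ => by rw [hwF_some, if_pos hk])
      · exact continuousOn_const.congr (fun y _ => by rw [hwF_some, if_neg hk])
  have hφcont : ∀ o lam, ContinuousOn (φ o lam) (AF o) := by
    intro o lam
    have : ContinuousOn (fun y => cF o y - ∑ k, lam k * wF o y k) (AF o) := by
      apply (hccont o).sub
      apply continuousOn_finset_sum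
      intro k _
      exact continuousOn_const.mul ((continuous_apply k).comp_continuousOn (hwcont o))
    exact this.congr (fun y _ => hφeq o lam y)
  have hMatt : ∀ o lam, ∃ y ∈ AF o, (∀ z ∈ AF o, φ o lam z ≤ φ o lam y) ∧
      M o lam = φ o lam y := by
    intro o lam
    obtain ⟨y, hyA, hymax⟩ := (hAc o).exists_isMaxOn (hAne o) (hφcont o lam)
    refine ⟨y, hyA, fun z hz => hymax hz, ?_⟩
    rw [hMdef]
    exact IsGreatest.csSup_eq ⟨Set.mem_image_of_mem _ hyA, by
      rintro x ⟨z, hz, rfl⟩; exact hymax hz⟩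
  -- projection
  set projm : I → ((K → ℝ) × (K → ℝ)) → ((K → ℝ) × (K → ℝ)) := fun i y =>
    (fun k => if (i, k) ∈ E then y.1 k else 0,
     fun k => if (i, k) ∈ E then y.2 k else 0) with hprojdef
  have hproj1 : ∀ i y k, (projm i y).1 k = if (i, k) ∈ E then y.1 k else 0 := by
    intro i y k; rw [hprojdef]
  have hproj2 : ∀ i y k, (projm i y).2 k = if (i, k) ∈ E then y.2 k else 0 := by
    intro i y k; rw [hprojdef]
  have hprojw : ∀ i y, wF (some i) (projm i y) = wF (some i) y := by
    intro i y
    funext k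
    rw [hwF_some, hwF_some]
    by_cases hk : (i, k) ∈ E
    · rw [if_pos hk, if_pos hk, hproj1, hproj2, if_pos hk, if_pos hk]
    · rw [if_neg hk, if_neg hk]
  have hprojc : ∀ i y, cF (some i) (projm i y) = cF (some i) y := by
    intro i y
    rw [hcF_some, hcF_some]
    refine Finset.sum_congr rfl (fun k hk => ?_)
    have hkE : (i, k) ∈ E := (Finset.mem_filter.mp hk).2
    rw [hproj1, hproj2, if_pos hkE, if_pos hkE]
  have hprojφ : ∀ i lam y, φ (some i) lam (projm i y) = φ (some i) lam y := by
    intro i lam y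
    rw [hφeq, hφeq, hprojc, hprojw]
  have hprojT : ∀ i (y : (K → ℝ) × (K → ℝ)), (∀ k, (i, k) ∈ E → 0 ≤ y.1 k) →
      ((∑ k ∈ Finset.univ.filter (fun k => (i, k) ∈ E), y.1 k) ≤ 1) →
      (∀ k, (i, k) ∈ E → y.2 k ∈ Set.Icc (0:ℝ) (bbar i)) →
      projm i y ∈ T i := by
    intro i y hx hsum hb
    rw [hTmem]
    refine ⟨?_, ?_, ?_⟩
    · intro k
      rw [hproj1]
      by_cases hk : (i, k) ∈ E
      · rw [if_pos hk]
        refine ⟨hx k hk, ?_⟩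
        have h1 : y.1 k ≤ ∑ k' ∈ Finset.univ.filter (fun k' => (i, k') ∈ E), y.1 k' :=
          Finset.single_le_sum (fun k' hk' => hx k' (Finset.mem_filter.mp hk').2)
            (Finset.mem_filter.mpr ⟨Finset.mem_univ k, hk⟩)
        linarith
      · rw [if_neg hk]; exact ⟨le_rfl, zero_le_one⟩
    · have h1 : ∑ k ∈ Finset.univ.filter (fun k => (i, k) ∈ E), (projm i y).1 k
          = ∑ k ∈ Finset.univ.filter (fun k => (i, k) ∈ E), y.1 k :=
        Finset.sum_congr rfl (fun k hk => by
          rw [hproj1, if_pos (Finset.mem_filter.mp hk).2])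
      rw [h1]; exact hsum
    · intro k
      rw [hproj2]
      by_cases hk : (i, k) ∈ E
      · rw [if_pos hk]; exact hb k hk
      · rw [if_neg hk]; exact ⟨le_rfl, (hbbar i).le⟩
  -- ====== Part 3 : decomposition of the objective ======
  have hEsum : ∀ (f : I × K → ℝ), ∑ e ∈ E, f e
      = ∑ i : I, ∑ k ∈ Finset.univ.filter (fun k => (i, k) ∈ E), f (i, k) := by
    intro f
    have h1 : ∑ i : I, ∑ k ∈ Finset.univ.filter (fun k => (i, k) ∈ E), f (i, k)
        = ∑ i : I, ∑ k : K, if (i, k) ∈ E then f (i, k) else 0 :=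
      Finset.sum_congr rfl (fun i _ => Finset.sum_filter _ _)
    have h2 : ∑ i : I, ∑ k : K, (if (i, k) ∈ E then f (i, k) else 0)
        = ∑ e ∈ Finset.univ ×ˢ Finset.univ, (if e ∈ E then f e else 0) :=
      (Finset.sum_product Finset.univ Finset.univ
        (fun e : I × K => if e ∈ E then f e else 0)).symm
    have h3 : ∑ e ∈ Finset.univ ×ˢ Finset.univ, (if e ∈ E then f e else 0)
        = ∑ e ∈ (Finset.univ ×ˢ Finset.univ).filter (fun e => e ∈ E), f e :=
      (Finset.sum_filter _ _).symm
    have h4 : (Finset.univ ×ˢ Finset.univ).filter (fun e => e ∈ E) = E := by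
      ext e; simp
    rw [h1, h2, h3, h4]
  have hprofsum : ∀ x b : I → K → ℝ, prof x b = ∑ i : I, cF (some i) (x i, b i) := by
    intro x b
    rw [hprof, hEsum]
    refine Finset.sum_congr rfl (fun i _ => ?_)
    rw [hcF_some]
    refine Finset.sum_congr rfl (fun k hk => ?_)
    rw [hdef]
  have hvsum : ∀ (lam : K → ℝ) (x b : I → K → ℝ),
      ∑ k, lam k * v x b k = ∑ i : I, ∑ k, lam k * wF (some i) (x i, b i) k := by
    intro lam x b
    have h1 : ∀ k, lam k * v x b k
        = ∑ i : I, lam k * (if (i, k) ∈ E then r i k * s i * x i k * ρ i (b i k) else 0) := by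
      intro k
      rw [hv, Finset.mul_sum]
      rw [show (∑ i ∈ Finset.univ.filter (fun i => (i, k) ∈ E),
          lam k * (r i k * s i * x i k * ρ i (b i k)))
        = ∑ i : I, if (i, k) ∈ E then lam k * (r i k * s i * x i k * ρ i (b i k)) else 0
        from Finset.sum_filter _ _]
      refine Finset.sum_congr rfl (fun i _ => ?_)
      by_cases hik : (i, k) ∈ E <;> simp [hik]
    rw [Finset.sum_congr rfl (fun k _ => h1 k), Finset.sum_comm]
    refine Finset.sum_congr rfl (fun i _ => Finset.sum_congr rfl (fun k _ => ?_))
    rw [hwF_some]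
  have hdecomp : ∀ (lam : K → ℝ) (x b : I → K → ℝ),
      prof x b - ∑ k, lam k * v x b k = ∑ i : I, φ (some i) lam (x i, b i) := by
    intro lam x b
    rw [hprofsum, hvsum, ← Finset.sum_sub_distrib]
  -- each component value is at most the component maximum
  have hcompbound : ∀ (lam : K → ℝ) xb, xb ∈ S → ∀ i : I,
      φ (some i) lam (xb.1 i, xb.2 i) ≤ M (some i) lam := by
    intro lam xb hxb i
    rw [hS] at hxb
    obtain ⟨hx0, hxsum, hxb2⟩ := hxb
    have hT : projm i (xb.1 i, xb.2 i) ∈ T i :=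
      hprojT i _ (fun k _ => hx0 i k) (hxsum i) (fun k hk => hxb2 i k hk)
    obtain ⟨y, hyA, hymax, hyM⟩ := hMatt (some i) lam
    calc φ (some i) lam (xb.1 i, xb.2 i)
        = φ (some i) lam (projm i (xb.1 i, xb.2 i)) := (hprojφ i lam _).symm
    _ ≤ φ (some i) lam y := hymax _ (by rw [hAF_some]; exact hT)
    _ = M (some i) lam := hyM.symm
  -- the inner supremum of Q
  have hinner : ∀ lam : K → ℝ,
      (⨆ xb ∈ S, ((prof xb.1 xb.2 - ∑ k, lam k * v xb.1 xb.2 k : ℝ) : EReal))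
        = (((∑ i : I, M (some i) lam : ℝ)) : EReal) := by
    intro lam
    apply le_antisymm
    · apply iSup₂_le
      intro xb hxb
      rw [EReal.coe_le_coe_iff, hdecomp]
      exact Finset.sum_le_sum (fun i _ => hcompbound lam xb hxb i)
    · choose y hyA hymax hyM using fun i : I => hMatt (some i) lam
      have hyT : ∀ i, y i ∈ T i := fun i => by rw [← hAF_some]; exact hyA i
      set xb0 : (I → K → ℝ) × (I → K → ℝ) := (fun i => (y i).1, fun i => (y i).2) with hxb0
      have hxb0S : xb0 ∈ S := by
        rw [hS]
        refine ⟨fun i k => (((hTmem i (y i)).mp (hyT i)).1 k).1,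
          fun i => ((hTmem i (y i)).mp (hyT i)).2.1,
          fun i k hk => ((hTmem i (y i)).mp (hyT i)).2.2 k⟩
      have hval : prof xb0.1 xb0.2 - ∑ k, lam k * v xb0.1 xb0.2 k = ∑ i : I, M (some i) lam := by
        rw [hdecomp]
        refine Finset.sum_congr rfl (fun i _ => ?_)
        rw [hyM i]
      exact le_iSup₂_of_le xb0 hxb0S (by rw [hval])
  -- M at none equals P on the unit ball around lamstar
  have hMnone : ∀ lam ∈ Metric.closedBall lamstar 1, M none lam = P lam := by
    intro lam hb
    obtain ⟨z0, hz0b, hz0max, hz0P⟩ := hMp lam hb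
    rw [hMdef]
    apply IsGreatest.csSup_eq
    constructor
    · refine ⟨(z0, 0), ?_, ?_⟩
      · rw [hAF_none]; exact Set.mem_prod.mpr ⟨hz0b, rfl⟩
      · rw [hφ_none, hz0P]
    · rintro x ⟨z, hz, rfl⟩
      rw [hφ_none, hz0P]
      exact hz0max z.1
  have hlscenter : lamstar ∈ Metric.closedBall lamstar 1 := Metric.mem_closedBall_self zero_le_one
  -- minimality of the sum of the M's
  have hminkey : ∀ lam ∈ Metric.closedBall lamstar 1,
      ∑ o : Option I, M o lamstar ≤ ∑ o : Option I, M o lam := by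
    intro lam hb
    have h1 := hlam lam
    rw [hQ lamstar, hQ lam, hinner lamstar, hinner lam, hpP lamstar, hpP lam,
      ← EReal.coe_add, ← EReal.coe_add, EReal.coe_le_coe_iff] at h1
    rw [Fintype.sum_option, Fintype.sum_option, hMnone lamstar hlscenter, hMnone lam hb]
    linarith
  -- the argmax value sets are convex
  have hTSi : ∀ i : I, ∀ z ∈ T i, z ∈ Si i := by
    intro i z hz
    rw [hTmem] at hz
    rw [hSi]
    exact ⟨fun k _ => (hz.1 k).1, hz.2.1, fun k _ => hz.2.2 k⟩
  have hVset : ∀ i : I,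
      wF (some i) '' {y ∈ AF (some i) | φ (some i) lamstar y = M (some i) lamstar}
        = {w : K → ℝ | ∃ xb ∈ Sistar i lamstar, w = fun k => vi i xb.1 xb.2 k} := by
    intro i
    obtain ⟨y0, hy0A, hy0max, hy0M⟩ := hMatt (some i) lamstar
    have hprojSi : ∀ z, z ∈ Si i → projm i z ∈ T i := by
      intro z hz
      rw [hSi] at hz
      exact hprojT i z hz.1 hz.2.1 hz.2.2
    ext wv
    constructor
    · rintro ⟨z, ⟨hzA, hzM⟩, rfl⟩
      rw [hAF_some] at hzA
      refine ⟨z, ?_, ?_⟩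
      · rw [hSistar]
        refine ⟨hTSi i z hzA, fun yb hyb => ?_⟩
        rw [← hφ_some i lamstar yb, ← hφ_some i lamstar z]
        calc φ (some i) lamstar yb = φ (some i) lamstar (projm i yb) := (hprojφ i lamstar yb).symm
        _ ≤ φ (some i) lamstar y0 := hy0max _ (by rw [hAF_some]; exact hprojSi yb hyb)
        _ = M (some i) lamstar := hy0M.symm
        _ = φ (some i) lamstar z := hzM.symm
      · funext k
        rw [hwF_some, hvi]
    · rintro ⟨xb, hxb, rfl⟩
      rw [hSistar] at hxb
      obtain ⟨hxbSi, hxbmax⟩ := hxb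
      have hTproj : projm i xb ∈ T i := hprojSi xb hxbSi
      have hy0T : y0 ∈ T i := by rw [← hAF_some]; exact hy0A
      have hφproj : φ (some i) lamstar (projm i xb) = M (some i) lamstar := by
        apply le_antisymm
        · rw [hy0M]; exact hy0max _ (by rw [hAF_some]; exact hTproj)
        · rw [hy0M, hprojφ]
          rw [hφ_some i lamstar y0, hφ_some i lamstar xb]
          exact hxbmax y0 (hTSi i y0 hy0T)
      refine ⟨projm i xb, ⟨by rw [hAF_some]; exact hTproj, hφproj⟩, ?_⟩
      funext k
      rw [hwF_some, hvi]
      by_cases hk : (i, k) ∈ E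
      · rw [if_pos hk, if_pos hk, hproj1, hproj2, if_pos hk, if_pos hk]
      · rw [if_neg hk, if_neg hk]
  have hconvkey : ∀ o : Option I,
      Convex ℝ (wF o '' {y ∈ AF o | φ o lamstar y = M o lamstar}) := by
    intro o
    cases o with
    | some i => rw [hVset i]; exact hVconv i
    | none =>
      have hub : ∀ z ∈ AF none, φ none lamstar z ≤ M none lamstar := by
        obtain ⟨y0, hy0A, hy0max, hy0M⟩ := hMatt none lamstar
        intro z hz
        rw [hy0M]
        exact hy0max z hz
      have hArgeq : {y ∈ AF none | φ none lamstar y = M none lamstar}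
          = AF none ∩ {y | y ∈ Set.univ ∧ M none lamstar ≤ φ none lamstar y} := by
        ext z
        simp only [Set.mem_inter_iff, Set.mem_setOf_eq, Set.mem_univ, true_and]
        constructor
        · rintro ⟨h1, h2⟩; exact ⟨h1, h2.ge⟩
        · rintro ⟨h1, h2⟩; exact ⟨h1, le_antisymm (hub z h1) h2⟩
      have hconc : ConcaveOn ℝ Set.univ (fun y : (K → ℝ) × (K → ℝ) => φ none lamstar y) := by
        refine ⟨convex_univ, ?_⟩
        intro x _ z _ a b ha hb hab
        dsimp only
        rw [hφ_none, hφ_none, hφ_none]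
        have hu2 := hu.2 (Set.mem_univ x.1) (Set.mem_univ z.1) ha hb hab
        have hsum : ∑ k, lamstar k * (a • x + b • z).1 k
            = a * (∑ k, lamstar k * x.1 k) + b * (∑ k, lamstar k * z.1 k) := by
          rw [Finset.mul_sum, Finset.mul_sum, ← Finset.sum_add_distrib]
          refine Finset.sum_congr rfl (fun k _ => ?_)
          simp only [Prod.fst_add, Prod.smul_fst, Pi.add_apply, Pi.smul_apply, smul_eq_mul]
          ring
        have huu : a • u x.1 + b • u z.1 ≤ u ((a • x + b • z).1) := by
          have : (a • x + b • z).1 = a • x.1 + b • z.1 := rfl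
          rw [this]; exact hu2
        simp only [smul_eq_mul] at huu ⊢
        rw [hsum]
        linarith
      have hArgconv : Convex ℝ {y ∈ AF none | φ none lamstar y = M none lamstar} := by
        rw [hArgeq]
        apply Convex.inter
        · rw [hAF_none]
          exact (convex_closedBall _ _).prod (convex_singleton _)
        · exact hconc.convex_ge (M none lamstar)
      have himg : wF none '' {y ∈ AF none | φ none lamstar y = M none lamstar}
          = ⇑(-(LinearMap.fst ℝ (K → ℝ) (K → ℝ))) '' {y ∈ AF none | φ none lamstar y = M none lamstar} := by
        apply Set.image_congr
        intro z _
        rw [hwF_none]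
        simp
      rw [himg]
      exact hArgconv.linear_image _
  -- ====== Part 4 : apply the key lemma and conclude ======
  obtain ⟨a, haprop, hasum⟩ := key_danskin AF hAc cF wF hccont hwcont φ
    (fun o lam y => hφeq o lam y) M hMatt lamstar hminkey hconvkey
  have hwsum := hasum
  rw [Fintype.sum_option] at hwsum
  set wstar : K → ℝ := (a none).1 with hwstar
  have hwnone : wF none (a none) = -wstar := by rw [hwF_none]
  have hsum2 : ∑ i : I, wF (some i) (a (some i)) = wstar := by
    rw [hwnone, add_comm] at hwsum
    have h2 : ∑ i : I, wF (some i) (a (some i)) - wstar = 0 := by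
      rw [sub_eq_add_neg]; exact hwsum
    exact sub_eq_zero.mp h2
  set xstar : I → K → ℝ := fun i => (a (some i)).1 with hxstar
  set bstar : I → K → ℝ := fun i => (a (some i)).2 with hbstar
  have haT : ∀ i : I, a (some i) ∈ T i := fun i => by
    rw [← hAF_some]; exact (haprop (some i)).1
  have haM : ∀ i : I, φ (some i) lamstar (a (some i)) = M (some i) lamstar :=
    fun i => (haprop (some i)).2
  have hstarS : (xstar, bstar) ∈ S := by
    rw [hS]
    exact ⟨fun i k => (((hTmem i _).mp (haT i)).1 k).1,
      fun i => ((hTmem i _).mp (haT i)).2.1,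
      fun i k hk => ((hTmem i _).mp (haT i)).2.2 k⟩
  have hstarval : prof xstar bstar - ∑ k, lamstar k * v xstar bstar k
      = ∑ i : I, M (some i) lamstar := by
    rw [hdecomp]
    refine Finset.sum_congr rfl (fun i _ => ?_)
    have he : (xstar i, bstar i) = a (some i) := Prod.mk.eta
    rw [he, haM i]
  have hmaxS : ∀ xb ∈ S, prof xb.1 xb.2 - ∑ k, lamstar k * v xb.1 xb.2 k ≤
      prof xstar bstar - ∑ k, lamstar k * v xstar bstar k := by
    intro xb hxb
    rw [hstarval, hdecomp]
    exact Finset.sum_le_sum (fun i _ => hcompbound lamstar xb hxb i)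
  have hvstar : v xstar bstar = wstar := by
    funext k
    rw [← hsum2, hv]
    rw [show (∑ i ∈ Finset.univ.filter (fun i => (i, k) ∈ E),
          r i k * s i * xstar i k * ρ i (bstar i k))
        = ∑ i : I, if (i, k) ∈ E then r i k * s i * xstar i k * ρ i (bstar i k) else 0
      from Finset.sum_filter _ _]
    rw [Finset.sum_apply]
    refine Finset.sum_congr rfl (fun i _ => ?_)
    rw [hwF_some]
  have hMnstar : M none lamstar = P lamstar := hMnone lamstar hlscenter
  have hPstar : (∑ k, lamstar k * wstar k) + u wstar = P lamstar := by
    have h1 := (haprop none).2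
    rw [hφ_none, hMnstar] at h1
    exact h1
  have hFval : F xstar bstar = ∑ i : I, M (some i) lamstar + P lamstar := by
    rw [hF, hvstar]
    have h1 := hstarval
    rw [hvstar] at h1
    linarith [hPstar]
  refine ⟨xstar, bstar, hstarS, hmaxS, ?_⟩
  rw [hFval, hQ lamstar, hinner lamstar, hpP lamstar, ← EReal.coe_add]
end

section
/- Suppose ρ_i and β_i are continuous on [0, b̄_i] and β_i(b)ρ_i(b) > 0 for all b ∈ (0, b̄_i], for every i ∈ I, and p is finite on all of ℝ^K. Let λ* be a minimizer of the dual function Q over ℝ^K satisfying the Unique Solution condition: for every (i,k) ∈ E with λ*_k < 1, the maximizer of b ↦ h_i(r_{ik}(1 − λ*_k), b) over [0, b̄_i] is unique. Then there exists (x*, b*) ∈ S maximizing (x,b) ↦ π(x,b) − (λ*)ᵀ v(x,b) over S such that Q(λ*) = F(x*, b*). -/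
open scoped BigOperators Classical
open Filter Topology

lemma ereal_iSup_eq {α : Type*} (f : α → ℝ) (w0 : α) (hmax : ∀ w, f w ≤ f w0) :
    (⨆ w, ((f w : ℝ) : EReal)) = ((f w0 : ℝ) : EReal) :=
  le_antisymm (iSup_le fun w => EReal.coe_le_coe_iff.mpr (hmax w))
    (le_iSup (fun w => ((f w : ℝ) : EReal)) w0)

lemma ereal_biSup_eq {α : Type*} (f : α → ℝ) (C : Set α) (y0 : α) (h0 : y0 ∈ C)
    (hmax : ∀ y ∈ C, f y ≤ f y0) :
    (⨆ y ∈ C, ((f y : ℝ) : EReal)) = ((f y0 : ℝ) : EReal) :=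
  le_antisymm (iSup₂_le fun y hy => EReal.coe_le_coe_iff.mpr (hmax y hy))
    (le_iSup₂_of_le y0 h0 le_rfl)

lemma attain_max {K : Type*} [Fintype K] (g : (K → ℝ) → ℝ) (hg : Continuous g)
    (c Cst : ℝ) (hc : 0 < c) (hbd : ∀ w, g w ≤ Cst - c * ∑ k, |w k|) :
    ∃ w0, ∀ w, g w ≤ g w0 := by
  set R : ℝ := (max (Cst - g 0) 0) / c + 1 with hRdef
  have hR0 : 0 < R := by positivity
  have hbox : IsCompact (Set.pi Set.univ fun _ : K => Set.Icc (-R) R) :=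
    isCompact_univ_pi fun _ => isCompact_Icc
  have h0box : (0 : K → ℝ) ∈ Set.pi Set.univ fun _ : K => Set.Icc (-R) R := by
    intro k _
    constructor
    · simpa using hR0.le
    · simpa using hR0.le
  obtain ⟨w0, hw0mem, hw0max⟩ := hbox.exists_isMaxOn ⟨0, h0box⟩ hg.continuousOn
  have hg0 : g 0 ≤ g w0 := hw0max h0box
  refine ⟨w0, fun w => ?_⟩
  by_cases hw : w ∈ Set.pi Set.univ fun _ : K => Set.Icc (-R) R
  · exact hw0max hw
  · have hex : ∃ k, R < |w k| := by
      by_contra hcon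
      push_neg at hcon
      exact hw fun k _ => abs_le.mp (hcon k)
    obtain ⟨k, hk⟩ := hex
    have hsum : R < ∑ j, |w j| :=
      lt_of_lt_of_le hk (Finset.single_le_sum (fun j _ => abs_nonneg (w j)) (Finset.mem_univ k))
    have h1 : g w ≤ Cst - c * ∑ j, |w j| := hbd w
    have h2 : max (Cst - g 0) 0 ≥ Cst - g 0 := le_max_left _ _
    have h3 : c * R = max (Cst - g 0) 0 + c := by
      rw [hRdef]; field_simp
    have h4 : c * R ≤ c * ∑ j, |w j| := mul_le_mul_of_nonneg_left hsum.le hc.le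
    linarith

lemma main_abstract {K : Type*} [Fintype K] [DecidableEq K]
    {Y : Type*} [TopologicalSpace Y] [FirstCountableTopology Y]
    (C : Set Y) (hCne : C.Nonempty) (hCcomp : IsCompact C)
    (a : Y → ℝ) (vv : Y → K → ℝ)
    (ha : ContinuousOn a C) (hvv : ∀ k, ContinuousOn (fun y => vv y k) C)
    (u : (K → ℝ) → ℝ) (hucont : Continuous u) (huconc : ConcaveOn ℝ Set.univ u)
    (lamstar : K → ℝ) (Cst : ℝ)
    (hcoer : ∀ w, (∑ k, lamstar k * w k) + u w ≤ Cst - ∑ k, |w k|)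
    (hVconv : Convex ℝ ((fun y => vv y) ''
      {y | y ∈ C ∧ ∀ y' ∈ C, a y' - ∑ k, lamstar k * vv y' k ≤ a y - ∑ k, lamstar k * vv y k}))
    (Q : (K → ℝ) → EReal)
    (hQeq : ∀ lam, Q lam = (⨆ y ∈ C, ((a y - ∑ k, lam k * vv y k : ℝ) : EReal)) +
      ⨆ w : K → ℝ, (((∑ k, lam k * w k) + u w : ℝ) : EReal))
    (hmin : ∀ lam, Q lamstar ≤ Q lam) :
    ∃ y0 ∈ C, (∀ y ∈ C, a y - ∑ k, lamstar k * vv y k ≤ a y0 - ∑ k, lamstar k * vv y0 k) ∧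
      ∀ w, (∑ k, lamstar k * w k) + u w ≤ (∑ k, lamstar k * vv y0 k) + u (vv y0) := by
  classical
  have hψscont : Continuous fun w : K → ℝ => (∑ k, lamstar k * w k) + u w :=
    (continuous_finset_sum _ fun k _ => continuous_const.mul (continuous_apply k)).add hucont
  obtain ⟨wstar, hwstar⟩ := attain_max (fun w => (∑ k, lamstar k * w k) + u w) hψscont 1 Cst
    one_pos (fun w => by rw [one_mul]; exact hcoer w)
  have hobjcont : ∀ lam : K → ℝ, ContinuousOn (fun y => a y - ∑ k, lam k * vv y k) C := by
    intro lam
    exact ha.sub (continuousOn_finset_sum _ fun k _ => continuousOn_const.mul (hvv k))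
  obtain ⟨ystar, hystarC, hystarmax'⟩ := hCcomp.exists_isMaxOn hCne (hobjcont lamstar)
  have hystarmax : ∀ y ∈ C, a y - ∑ k, lamstar k * vv y k ≤
      a ystar - ∑ k, lamstar k * vv ystar k := fun y hy => hystarmax' hy
  by_cases hexx : ∃ y0, (y0 ∈ C ∧ ∀ y' ∈ C, a y' - ∑ k, lamstar k * vv y' k ≤
      a y0 - ∑ k, lamstar k * vv y0 k) ∧
      ∀ w, (∑ k, lamstar k * w k) + u w ≤ (∑ k, lamstar k * vv y0 k) + u (vv y0)
  · obtain ⟨y0, ⟨hy0C, hy0max⟩, hwmax⟩ := hexx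
    exact ⟨y0, hy0C, hy0max, hwmax⟩
  push_neg at hexx
  exfalso
  -- the set W of maximizers of the conjugate-side problem
  set W : Set (K → ℝ) :=
    {w | ∀ w', (∑ k, lamstar k * w' k) + u w' ≤ (∑ k, lamstar k * w k) + u w} with hWdef
  have hWstar : wstar ∈ W := hwstar
  have hWclosed : IsClosed W := by
    have hW2 : W = ⋂ w', {w | (∑ k, lamstar k * w' k) + u w' ≤ (∑ k, lamstar k * w k) + u w} := by
      ext w; simp [hWdef, Set.mem_iInter, Set.mem_setOf_eq]
    rw [hW2]
    exact isClosed_iInter fun w' => isClosed_le continuous_const hψscont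
  have hWbb : ∀ w ∈ W, ∀ k, |w k| ≤ Cst - u 0 := by
    intro w hw k
    have h1 : (∑ k, lamstar k * (0:K→ℝ) k) + u 0 ≤ (∑ k, lamstar k * w k) + u w := hw 0
    have h1' : u 0 ≤ (∑ k, lamstar k * w k) + u w := by simpa using h1
    have h2 := hcoer w
    have h4 : |w k| ≤ ∑ j, |w j| :=
      Finset.single_le_sum (fun j _ => abs_nonneg (w j)) (Finset.mem_univ k)
    linarith
  have hWcomp : IsCompact W := by
    refine IsCompact.of_isClosed_subset
      (isCompact_univ_pi fun _ : K => isCompact_Icc (a := -(Cst - u 0)) (b := Cst - u 0))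
      hWclosed ?_
    intro w hw k _
    exact abs_le.mp (hWbb w hw k)
  have hWconv : Convex ℝ W := by
    intro w1 h1 w2 h2 θ τ hθ hτ hθτ
    simp only [hWdef, Set.mem_setOf_eq]
    intro w'
    have hu2 := huconc.2 (Set.mem_univ w1) (Set.mem_univ w2) hθ hτ hθτ
    have hu2' : θ * u w1 + τ * u w2 ≤ u (θ • w1 + τ • w2) := by
      simpa [smul_eq_mul] using hu2
    have hsum : (∑ k, lamstar k * (θ • w1 + τ • w2) k)
        = θ * (∑ k, lamstar k * w1 k) + τ * (∑ k, lamstar k * w2 k) := by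
      rw [Finset.mul_sum, Finset.mul_sum, ← Finset.sum_add_distrib]
      refine Finset.sum_congr rfl fun k _ => ?_
      simp only [Pi.add_apply, Pi.smul_apply, smul_eq_mul]
      ring
    have a1 : (∑ k, lamstar k * w' k) + u w' ≤ (∑ k, lamstar k * w1 k) + u w1 := h1 w'
    have a2 : (∑ k, lamstar k * w' k) + u w' ≤ (∑ k, lamstar k * w2 k) + u w2 := h2 w'
    have b1 := mul_le_mul_of_nonneg_left a1 hθ
    have b2 := mul_le_mul_of_nonneg_left a2 hτ
    have b3 : θ * ((∑ k, lamstar k * w' k) + u w') + τ * ((∑ k, lamstar k * w' k) + u w')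
        = (∑ k, lamstar k * w' k) + u w' := by rw [← add_mul, hθτ, one_mul]
    have e1 : (∑ k, lamstar k * w' k) + u w'
        ≤ θ * ((∑ k, lamstar k * w1 k) + u w1) + τ * ((∑ k, lamstar k * w2 k) + u w2) := by
      linarith
    calc (∑ k, lamstar k * w' k) + u w'
        ≤ θ * ((∑ k, lamstar k * w1 k) + u w1) + τ * ((∑ k, lamstar k * w2 k) + u w2) := e1
      _ ≤ (∑ k, lamstar k * (θ • w1 + τ • w2) k) + u (θ • w1 + τ • w2) := by
          rw [hsum]; linarith
  -- the set M of maximizers of the C-side problem, and V = vv '' M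
  set M : Set Y := {y | y ∈ C ∧ ∀ y' ∈ C,
      a y' - ∑ k, lamstar k * vv y' k ≤ a y - ∑ k, lamstar k * vv y k} with hMdef
  have hMsub : M ⊆ C := fun y hy => hy.1
  have hMcomp : IsCompact M := by
    have hCS : CompactSpace C := isCompact_iff_compactSpace.mp hCcomp
    have hrestr : Continuous fun y : C => a y.1 - ∑ k, lamstar k * vv y.1 k :=
      (hobjcont lamstar).restrict
    have hclosed : IsClosed {y : C | ∀ y' ∈ C,
        a y' - ∑ k, lamstar k * vv y' k ≤ a y.1 - ∑ k, lamstar k * vv y.1 k} := by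
      have heq : {y : C | ∀ y' ∈ C,
          a y' - ∑ k, lamstar k * vv y' k ≤ a y.1 - ∑ k, lamstar k * vv y.1 k}
          = ⋂ (y' : Y) (_ : y' ∈ C),
            {y : C | a y' - ∑ k, lamstar k * vv y' k ≤ a y.1 - ∑ k, lamstar k * vv y.1 k} := by
        ext y; simp
      rw [heq]
      exact isClosed_iInter fun y' => isClosed_iInter fun _ =>
        isClosed_le continuous_const hrestr
    have himg : M = Subtype.val '' {y : C | ∀ y' ∈ C,
        a y' - ∑ k, lamstar k * vv y' k ≤ a y.1 - ∑ k, lamstar k * vv y.1 k} := by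
      ext y
      constructor
      · rintro ⟨hyC, hymax⟩; exact ⟨⟨y, hyC⟩, hymax, rfl⟩
      · rintro ⟨⟨y', hy'C⟩, hy'max, rfl⟩; exact ⟨hy'C, hy'max⟩
    rw [himg]
    exact hclosed.isCompact.image continuous_subtype_val
  have hvvPi : ContinuousOn (fun y => vv y) C := continuousOn_pi.mpr hvv
  have hVcomp : IsCompact ((fun y => vv y) '' M) := hMcomp.image_of_continuousOn (hvvPi.mono hMsub)
  have hdisj : Disjoint ((fun y => vv y) '' M) W := by
    rw [Set.disjoint_left]
    rintro w ⟨y, hyM, rfl⟩ hwW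
    obtain ⟨w', hw'⟩ := hexx y ⟨hyM.1, hyM.2⟩
    exact absurd (hwW w') (not_le.mpr hw')
  obtain ⟨f, c1, c2, hfV, hc12, hfW⟩ :=
    geometric_hahn_banach_compact_closed hVconv hVcomp hWconv hWclosed hdisj
  set dvec : K → ℝ := fun k => f (fun j => if k = j then (1:ℝ) else 0) with hdvec
  have hfdot : ∀ w : K → ℝ, f w = ∑ k, w k * dvec k := by
    intro w
    conv_lhs => rw [pi_eq_sum_univ w]
    rw [map_sum]
    exact Finset.sum_congr rfl fun k _ => by rw [map_smul]; simp [hdvec, smul_eq_mul]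
  set Md : ℝ := ∑ k, |dvec k| with hMddef
  have hMd0 : 0 ≤ Md := Finset.sum_nonneg fun k _ => abs_nonneg _
  have hdotbd : ∀ w : K → ℝ, |∑ k, dvec k * w k| ≤ Md * ∑ k, |w k| := by
    intro w
    calc |∑ k, dvec k * w k| ≤ ∑ k, |dvec k * w k| := Finset.abs_sum_le_sum_abs _ _
      _ ≤ ∑ k, Md * |w k| := Finset.sum_le_sum fun k _ => by
          rw [abs_mul]
          exact mul_le_mul_of_nonneg_right
            (Finset.single_le_sum (fun j _ => abs_nonneg (dvec j)) (Finset.mem_univ k))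
            (abs_nonneg _)
      _ = Md * ∑ k, |w k| := (Finset.mul_sum _ _ _).symm
  set t : ℕ → ℝ := fun n => (1 / (2 * (Md + 1))) * (1 / (n + 1 : ℝ)) with htdef
  have hMd1 : (0:ℝ) < Md + 1 := by linarith
  have htpos : ∀ n, 0 < t n := by
    intro n
    rw [htdef]
    have hn1 : (0:ℝ) < (n:ℝ) + 1 := by positivity
    positivity
  have htMd : ∀ n, t n * Md ≤ 1 / 2 := by
    intro n
    have h1 : (1 / ((n:ℝ) + 1)) ≤ 1 := by
      rw [div_le_one (by positivity)]
      linarith [(Nat.cast_nonneg n : (0:ℝ) ≤ (n:ℝ))]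
    have key : t n ≤ 1 / (2 * (Md + 1)) := by
      rw [htdef]
      calc (1 / (2 * (Md + 1))) * (1 / ((n:ℝ) + 1)) ≤ (1 / (2 * (Md + 1))) * 1 :=
            mul_le_mul_of_nonneg_left h1 (by positivity)
        _ = 1 / (2 * (Md + 1)) := by ring
    calc t n * Md ≤ (1 / (2 * (Md + 1))) * Md := mul_le_mul_of_nonneg_right key hMd0
      _ ≤ 1 / 2 := by
          rw [div_mul_eq_mul_div, div_le_iff₀ (by linarith)]
          ring_nf
          linarith
  have htlim : Filter.Tendsto t Filter.atTop (𝓝 0) := by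
    have h1 : Filter.Tendsto (fun n : ℕ => 1 / ((n:ℝ) + 1)) Filter.atTop (𝓝 0) :=
      tendsto_one_div_add_atTop_nhds_zero_nat
    have h2 := h1.const_mul (1 / (2 * (Md + 1)))
    rw [mul_zero] at h2
    exact h2
  set lamn : ℕ → K → ℝ := fun n k => lamstar k - t n * dvec k with hlamn
  have hsumlam : ∀ (n : ℕ) (w : K → ℝ), (∑ k, lamn n k * w k) =
      (∑ k, lamstar k * w k) - t n * ∑ k, dvec k * w k := by
    intro n w
    rw [Finset.mul_sum, ← Finset.sum_sub_distrib]
    refine Finset.sum_congr rfl fun k _ => ?_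
    simp only [hlamn]
    ring
  have hbdn : ∀ (n : ℕ) (w : K → ℝ),
      (∑ k, lamn n k * w k) + u w ≤ Cst - (1/2) * ∑ k, |w k| := by
    intro n w
    rw [hsumlam]
    have h1 := hcoer w
    have h2 := hdotbd w
    have h3 := htMd n
    have h4 := (htpos n).le
    have h5 : (0:ℝ) ≤ ∑ k, |w k| := Finset.sum_nonneg fun k _ => abs_nonneg _
    have h6 : - (t n * ∑ k, dvec k * w k) ≤ t n * (Md * ∑ k, |w k|) := by
      have h7 := neg_abs_le (∑ k, dvec k * w k)
      nlinarith
    have h8 : t n * (Md * ∑ k, |w k|) ≤ (1/2) * ∑ k, |w k| := by nlinarith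
    linarith
  have hψncont : ∀ n, Continuous fun w : K → ℝ => (∑ k, lamn n k * w k) + u w := fun n =>
    (continuous_finset_sum _ fun k _ => continuous_const.mul (continuous_apply k)).add hucont
  have hexw : ∀ n, ∃ w0, ∀ w, (∑ k, lamn n k * w k) + u w ≤ (∑ k, lamn n k * w0 k) + u w0 :=
    fun n => attain_max _ (hψncont n) (1/2) Cst (by norm_num) (hbdn n)
  choose wseq hwseq using hexw
  have hexy : ∀ n, ∃ y0, y0 ∈ C ∧ ∀ y ∈ C,
      a y - ∑ k, lamn n k * vv y k ≤ a y0 - ∑ k, lamn n k * vv y0 k := by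
    intro n
    obtain ⟨y0, h0, hm⟩ := hCcomp.exists_isMaxOn hCne (hobjcont (lamn n))
    exact ⟨y0, h0, fun y hy => hm hy⟩
  choose yseq hymem hymax using hexy
  have hreal : ∀ n, (a ystar - ∑ k, lamstar k * vv ystar k)
      + ((∑ k, lamstar k * wstar k) + u wstar) ≤
      (a (yseq n) - ∑ k, lamn n k * vv (yseq n) k)
      + ((∑ k, lamn n k * wseq n k) + u (wseq n)) := by
    intro n
    have e1 : (⨆ y ∈ C, ((a y - ∑ k, lamstar k * vv y k : ℝ) : EReal))
        = ((a ystar - ∑ k, lamstar k * vv ystar k : ℝ) : EReal) :=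
      ereal_biSup_eq _ C ystar hystarC hystarmax
    have e2 : (⨆ w : K → ℝ, (((∑ k, lamstar k * w k) + u w : ℝ) : EReal))
        = (((∑ k, lamstar k * wstar k) + u wstar : ℝ) : EReal) :=
      ereal_iSup_eq _ wstar hwstar
    have e3 : (⨆ y ∈ C, ((a y - ∑ k, lamn n k * vv y k : ℝ) : EReal))
        = ((a (yseq n) - ∑ k, lamn n k * vv (yseq n) k : ℝ) : EReal) :=
      ereal_biSup_eq _ C (yseq n) (hymem n) (hymax n)
    have e4 : (⨆ w : K → ℝ, (((∑ k, lamn n k * w k) + u w : ℝ) : EReal))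
        = (((∑ k, lamn n k * wseq n k) + u (wseq n) : ℝ) : EReal) :=
      ereal_iSup_eq _ (wseq n) (hwseq n)
    have hm := hmin (lamn n)
    rw [hQeq lamstar, hQeq (lamn n), e1, e2, e3, e4, ← EReal.coe_add, ← EReal.coe_add] at hm
    exact EReal.coe_le_coe_iff.mp hm
  have hkey : ∀ n, ∑ k, dvec k * wseq n k ≤ ∑ k, dvec k * vv (yseq n) k := by
    intro n
    have h1 : a (yseq n) - ∑ k, lamn n k * vv (yseq n) k
        = (a (yseq n) - ∑ k, lamstar k * vv (yseq n) k)
          + t n * ∑ k, dvec k * vv (yseq n) k := by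
      rw [hsumlam]; ring
    have h2 : a (yseq n) - ∑ k, lamstar k * vv (yseq n) k ≤
        a ystar - ∑ k, lamstar k * vv ystar k := hystarmax _ (hymem n)
    have h3 : (∑ k, lamn n k * wseq n k) + u (wseq n)
        = ((∑ k, lamstar k * wseq n k) + u (wseq n)) - t n * ∑ k, dvec k * wseq n k := by
      rw [hsumlam]; ring
    have h4 : (∑ k, lamstar k * wseq n k) + u (wseq n)
        ≤ (∑ k, lamstar k * wstar k) + u wstar := hwstar _
    have h5 := hreal n
    by_contra hcon
    push_neg at hcon
    have h6 := mul_lt_mul_of_pos_left hcon (htpos n)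
    rw [h1, h3] at h5
    linarith
  have hwbd : ∀ n, wseq n ∈ Set.pi Set.univ
      fun _ : K => Set.Icc (-(2*(Cst - u 0))) (2*(Cst - u 0)) := by
    intro n k _
    have h1 : (∑ k, lamn n k * (0:K→ℝ) k) + u 0
        ≤ (∑ k, lamn n k * wseq n k) + u (wseq n) := hwseq n 0
    have h1' : u 0 ≤ (∑ k, lamn n k * wseq n k) + u (wseq n) := by simpa using h1
    have h2 := hbdn n (wseq n)
    have h4 : |wseq n k| ≤ ∑ j, |wseq n j| :=
      Finset.single_le_sum (fun j _ => abs_nonneg (wseq n j)) (Finset.mem_univ k)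
    have h5 : (0:ℝ) ≤ ∑ j, |wseq n j| := Finset.sum_nonneg fun j _ => abs_nonneg (wseq n j)
    refine abs_le.mp ?_
    linarith
  obtain ⟨y0, hy0C, φ, hφ, hyconv⟩ := hCcomp.tendsto_subseq hymem
  obtain ⟨w0, hw0box, σ, hσ, hwconv⟩ :=
    (isCompact_univ_pi fun _ : K => isCompact_Icc).tendsto_subseq (fun n => hwbd (φ n))
  set m : ℕ → ℕ := fun n => φ (σ n) with hmdef
  have hmtend : Filter.Tendsto m Filter.atTop Filter.atTop := (hφ.comp hσ).tendsto_atTop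
  have hyconv2 : Filter.Tendsto (fun n => yseq (m n)) Filter.atTop (𝓝 y0) :=
    hyconv.comp hσ.tendsto_atTop
  have hwconv2 : Filter.Tendsto (fun n => wseq (m n)) Filter.atTop (𝓝 w0) := hwconv
  have htm : Filter.Tendsto (fun n => t (m n)) Filter.atTop (𝓝 0) := htlim.comp hmtend
  have hyC2 : ∀ n, yseq (m n) ∈ C := fun n => hymem (m n)
  have htow : Filter.Tendsto (fun n => yseq (m n)) Filter.atTop (𝓝[C] y0) :=
    tendsto_nhdsWithin_of_tendsto_nhds_of_eventually_within _ hyconv2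
      (Filter.Eventually.of_forall hyC2)
  have hvvlim : ∀ k, Filter.Tendsto (fun n => vv (yseq (m n)) k) Filter.atTop (𝓝 (vv y0 k)) :=
    fun k => ((hvv k) y0 hy0C).tendsto.comp htow
  have halim : Filter.Tendsto (fun n => a (yseq (m n))) Filter.atTop (𝓝 (a y0)) :=
    (ha y0 hy0C).tendsto.comp htow
  have hwklim : ∀ k, Filter.Tendsto (fun n => wseq (m n) k) Filter.atTop (𝓝 (w0 k)) :=
    fun k => ((continuous_apply k).tendsto w0).comp hwconv2
  have hulim : Filter.Tendsto (fun n => u (wseq (m n))) Filter.atTop (𝓝 (u w0)) :=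
    (hucont.tendsto w0).comp hwconv2
  have hdvlim : Filter.Tendsto (fun n => ∑ k, dvec k * vv (yseq (m n)) k) Filter.atTop
      (𝓝 (∑ k, dvec k * vv y0 k)) := tendsto_finset_sum _ fun k _ => (hvvlim k).const_mul _
  have hdwlim : Filter.Tendsto (fun n => ∑ k, dvec k * wseq (m n) k) Filter.atTop
      (𝓝 (∑ k, dvec k * w0 k)) := tendsto_finset_sum _ fun k _ => (hwklim k).const_mul _
  have hlamvvlim : Filter.Tendsto (fun n => ∑ k, lamstar k * vv (yseq (m n)) k) Filter.atTop
      (𝓝 (∑ k, lamstar k * vv y0 k)) := tendsto_finset_sum _ fun k _ => (hvvlim k).const_mul _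
  have hlamwlim : Filter.Tendsto (fun n => ∑ k, lamstar k * wseq (m n) k) Filter.atTop
      (𝓝 (∑ k, lamstar k * w0 k)) := tendsto_finset_sum _ fun k _ => (hwklim k).const_mul _
  have hy0max : ∀ y ∈ C, a y - ∑ k, lamstar k * vv y k ≤ a y0 - ∑ k, lamstar k * vv y0 k := by
    intro y hy
    have hn : ∀ n, (a y - ∑ k, lamstar k * vv y k) + t (m n) * ∑ k, dvec k * vv y k ≤
        (a (yseq (m n)) - ∑ k, lamstar k * vv (yseq (m n)) k)
          + t (m n) * ∑ k, dvec k * vv (yseq (m n)) k := by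
      intro n
      have h0 := hymax (m n) y hy
      have e1 : a y - ∑ k, lamn (m n) k * vv y k
          = (a y - ∑ k, lamstar k * vv y k) + t (m n) * ∑ k, dvec k * vv y k := by
        rw [hsumlam]; ring
      have e2 : a (yseq (m n)) - ∑ k, lamn (m n) k * vv (yseq (m n)) k
          = (a (yseq (m n)) - ∑ k, lamstar k * vv (yseq (m n)) k)
            + t (m n) * ∑ k, dvec k * vv (yseq (m n)) k := by
        rw [hsumlam]; ring
      rw [e1, e2] at h0
      exact h0
    have hl : Filter.Tendsto
        (fun n => (a y - ∑ k, lamstar k * vv y k) + t (m n) * ∑ k, dvec k * vv y k)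
        Filter.atTop (𝓝 ((a y - ∑ k, lamstar k * vv y k) + 0 * ∑ k, dvec k * vv y k)) :=
      tendsto_const_nhds.add (htm.mul_const _)
    have hr : Filter.Tendsto (fun n => (a (yseq (m n)) - ∑ k, lamstar k * vv (yseq (m n)) k)
        + t (m n) * ∑ k, dvec k * vv (yseq (m n)) k) Filter.atTop
        (𝓝 ((a y0 - ∑ k, lamstar k * vv y0 k) + 0 * ∑ k, dvec k * vv y0 k)) :=
      (halim.sub hlamvvlim).add (htm.mul hdvlim)
    have hle := le_of_tendsto_of_tendsto' hl hr hn
    simpa using hle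
  have hw0max : ∀ w', (∑ k, lamstar k * w' k) + u w'
      ≤ (∑ k, lamstar k * w0 k) + u w0 := by
    intro w'
    have hn : ∀ n, ((∑ k, lamstar k * w' k) + u w') - t (m n) * ∑ k, dvec k * w' k ≤
        ((∑ k, lamstar k * wseq (m n) k) + u (wseq (m n)))
          - t (m n) * ∑ k, dvec k * wseq (m n) k := by
      intro n
      have h0 := hwseq (m n) w'
      have e1 : (∑ k, lamn (m n) k * w' k) + u w'
          = ((∑ k, lamstar k * w' k) + u w') - t (m n) * ∑ k, dvec k * w' k := by
        rw [hsumlam]; ring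
      have e2 : (∑ k, lamn (m n) k * wseq (m n) k) + u (wseq (m n))
          = ((∑ k, lamstar k * wseq (m n) k) + u (wseq (m n)))
            - t (m n) * ∑ k, dvec k * wseq (m n) k := by
        rw [hsumlam]; ring
      rw [e1, e2] at h0
      exact h0
    have hl : Filter.Tendsto
        (fun n => ((∑ k, lamstar k * w' k) + u w') - t (m n) * ∑ k, dvec k * w' k)
        Filter.atTop (𝓝 (((∑ k, lamstar k * w' k) + u w') - 0 * ∑ k, dvec k * w' k)) :=
      tendsto_const_nhds.sub (htm.mul_const _)
    have hr : Filter.Tendsto (fun n => ((∑ k, lamstar k * wseq (m n) k) + u (wseq (m n)))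
        - t (m n) * ∑ k, dvec k * wseq (m n) k) Filter.atTop
        (𝓝 (((∑ k, lamstar k * w0 k) + u w0) - 0 * ∑ k, dvec k * w0 k)) :=
      (hlamwlim.add hulim).sub (htm.mul hdwlim)
    have hle := le_of_tendsto_of_tendsto' hl hr hn
    simpa using hle
  have hy0M : y0 ∈ M := ⟨hy0C, hy0max⟩
  have hsep1 : f (vv y0) < c1 := hfV _ ⟨y0, hy0M, rfl⟩
  have hw0W : w0 ∈ W := hw0max
  have hsep2 : c2 < f w0 := hfW _ hw0W
  have hle0 : ∑ k, dvec k * w0 k ≤ ∑ k, dvec k * vv y0 k :=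
    le_of_tendsto_of_tendsto' hdwlim hdvlim fun n => hkey (m n)
  have hf1 : f w0 = ∑ k, dvec k * w0 k := by
    rw [hfdot]; exact Finset.sum_congr rfl fun k _ => mul_comm _ _
  have hf2 : f (vv y0) = ∑ k, dvec k * vv y0 k := by
    rw [hfdot]; exact Finset.sum_congr rfl fun k _ => mul_comm _ _
  rw [hf1] at hsep2
  rw [hf2] at hsep1
  linarith


theorem stmt_7
    {I K : Type*} [Fintype I] [Fintype K] [DecidableEq I] [DecidableEq K]
    (E : Finset (I × K))
    (bbar : I → ℝ) (hbbar : ∀ i, 0 < bbar i)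
    (ρ β : I → ℝ → ℝ)
    (hρmono : ∀ i, MonotoneOn (ρ i) (Set.Icc 0 (bbar i)))
    (hβmono : ∀ i, MonotoneOn (β i) (Set.Icc 0 (bbar i)))
    (hρ01 : ∀ i, ∀ b ∈ Set.Icc (0:ℝ) (bbar i), ρ i b ∈ Set.Icc (0:ℝ) 1)
    (hβb : ∀ i, ∀ b ∈ Set.Icc (0:ℝ) (bbar i), β i b ∈ Set.Icc (0:ℝ) b)
    (s : I → ℝ) (hs : ∀ i, 0 < s i)
    (r : I → K → ℝ) (hr : ∀ i k, (i, k) ∈ E → 0 < r i k)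
    (h : I → ℝ → ℝ → ℝ)
    (hdef : ∀ i z b, h i z b = (z - β i b) * ρ i b)
    (hρcont : ∀ i, ContinuousOn (ρ i) (Set.Icc 0 (bbar i)))
    (hβcont : ∀ i, ContinuousOn (β i) (Set.Icc 0 (bbar i)))
    (hβρpos : ∀ i, ∀ b ∈ Set.Ioc (0:ℝ) (bbar i), 0 < β i b * ρ i b)
    (S : Set ((I → K → ℝ) × (I → K → ℝ)))
    (hS : S = {xb | (∀ i k, 0 ≤ xb.1 i k) ∧
      (∀ i, (∑ k ∈ Finset.univ.filter (fun k => (i, k) ∈ E), xb.1 i k) ≤ 1) ∧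
      (∀ i k, (i, k) ∈ E → xb.2 i k ∈ Set.Icc (0:ℝ) (bbar i))})
    (prof : (I → K → ℝ) → (I → K → ℝ) → ℝ)
    (hprof : ∀ x b, prof x b = ∑ e ∈ E, h e.1 (r e.1 e.2) (b e.1 e.2) * s e.1 * x e.1 e.2)
    (v : (I → K → ℝ) → (I → K → ℝ) → K → ℝ)
    (hv : ∀ x b k, v x b k =
      ∑ i ∈ Finset.univ.filter (fun i => (i, k) ∈ E), r i k * s i * x i k * ρ i (b i k))
    (u : (K → ℝ) → ℝ) (hu : ConcaveOn ℝ Set.univ u)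
    (p : (K → ℝ) → EReal)
    (hp : ∀ lam, p lam = ⨆ w : K → ℝ, (((∑ k, lam k * w k) + u w : ℝ) : EReal))
    (F : (I → K → ℝ) → (I → K → ℝ) → ℝ)
    (hF : ∀ x b, F x b = prof x b + u (v x b))
    (Q : (K → ℝ) → EReal)
    (hQ : ∀ lam, Q lam =
      (⨆ xb ∈ S, ((prof xb.1 xb.2 - ∑ k, lam k * v xb.1 xb.2 k : ℝ) : EReal)) + p lam)
    (hpfin : ∀ lam, p lam ≠ ⊤)
    (lamstar : K → ℝ) (hlam : ∀ lam, Q lamstar ≤ Q lam)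
    (hUS : ∀ i k, (i, k) ∈ E → lamstar k < 1 →
      ∃! b0, b0 ∈ Set.Icc (0:ℝ) (bbar i) ∧
        ∀ b ∈ Set.Icc (0:ℝ) (bbar i),
          h i (r i k * (1 - lamstar k)) b ≤ h i (r i k * (1 - lamstar k)) b0) :
    ∃ xstar bstar : I → K → ℝ, (xstar, bstar) ∈ S ∧
      (∀ xb ∈ S, prof xb.1 xb.2 - ∑ k, lamstar k * v xb.1 xb.2 k ≤
        prof xstar bstar - ∑ k, lamstar k * v xstar bstar k) ∧
      Q lamstar = ((F xstar bstar : ℝ) : EReal) := by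
  classical
  set S0 : Set ((I → K → ℝ) × (I → K → ℝ)) :=
    {xb | (∀ i k, 0 ≤ xb.1 i k) ∧
      (∀ i, (∑ k ∈ Finset.univ.filter (fun k => (i, k) ∈ E), xb.1 i k) ≤ 1) ∧
      (∀ i k, (i, k) ∈ E → xb.2 i k ∈ Set.Icc (0:ℝ) (bbar i)) ∧
      (∀ i k, (i, k) ∉ E → xb.1 i k = 0 ∧ xb.2 i k = 0)} with hS0def
  have hS0subS : S0 ⊆ S := by
    rw [hS]; intro xb hxb; exact ⟨hxb.1, hxb.2.1, hxb.2.2.1⟩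
  -- truncation
  set T : ((I → K → ℝ) × (I → K → ℝ)) → ((I → K → ℝ) × (I → K → ℝ)) :=
    fun xb => (fun i k => if (i,k) ∈ E then xb.1 i k else 0,
               fun i k => if (i,k) ∈ E then xb.2 i k else 0) with hTdef
  have hTS : ∀ xb ∈ S, T xb ∈ S0 := by
    rw [hS]
    rintro xb ⟨h1, h2, h3⟩
    refine ⟨?_, ?_, ?_, ?_⟩
    · intro i k; by_cases hik : (i,k) ∈ E <;> simp [hTdef, hik]
      · exact h1 i k
    · intro i
      have : (∑ k ∈ Finset.univ.filter (fun k => (i, k) ∈ E), (T xb).1 i k)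
          = ∑ k ∈ Finset.univ.filter (fun k => (i, k) ∈ E), xb.1 i k := by
        refine Finset.sum_congr rfl fun k hk => ?_
        have hik : (i,k) ∈ E := (Finset.mem_filter.mp hk).2
        simp [hTdef, hik]
      rw [this]; exact h2 i
    · intro i k hik; simpa [hTdef, hik] using h3 i k hik
    · intro i k hik; simp [hTdef, hik]
  have hprofT : ∀ xb, prof (T xb).1 (T xb).2 = prof xb.1 xb.2 := by
    intro xb
    rw [hprof, hprof]
    refine Finset.sum_congr rfl fun e he => ?_
    have he' : (e.1, e.2) ∈ E := by simpa using he
    simp [hTdef, he']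
  have hvT : ∀ xb k, v (T xb).1 (T xb).2 k = v xb.1 xb.2 k := by
    intro xb k
    rw [hv, hv]
    refine Finset.sum_congr rfl fun i hi => ?_
    have hik : (i,k) ∈ E := (Finset.mem_filter.mp hi).2
    simp [hTdef, hik]
  have hobjT : ∀ (lam : K → ℝ) xb, prof (T xb).1 (T xb).2 - ∑ k, lam k * v (T xb).1 (T xb).2 k
      = prof xb.1 xb.2 - ∑ k, lam k * v xb.1 xb.2 k := by
    intro lam xb
    rw [hprofT]
    congr 1
    exact Finset.sum_congr rfl fun k _ => by rw [hvT]
  -- S0 nonempty and compact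
  have hS0ne : S0.Nonempty := by
    refine ⟨((fun _ _ => 0), (fun _ _ => 0)), ?_, ?_, ?_, ?_⟩
    · intro i k; exact le_refl 0
    · intro i; simp
    · intro i k _; exact ⟨le_refl 0, (hbbar i).le⟩
    · intro i k _; exact ⟨rfl, rfl⟩
  have hevalx : ∀ (i : I) (k : K),
      Continuous fun y : (I → K → ℝ) × (I → K → ℝ) => y.1 i k :=
    fun i k => (continuous_apply k).comp ((continuous_apply i).comp continuous_fst)
  have hevalb : ∀ (i : I) (k : K),
      Continuous fun y : (I → K → ℝ) × (I → K → ℝ) => y.2 i k :=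
    fun i k => (continuous_apply k).comp ((continuous_apply i).comp continuous_snd)
  have hS0closed : IsClosed S0 := by
    have hrep : S0 = (⋂ (i : I), ⋂ (k : K), {xb : (I → K → ℝ) × (I → K → ℝ) | 0 ≤ xb.1 i k}) ∩
        ((⋂ (i : I), {xb : (I → K → ℝ) × (I → K → ℝ) |
            (∑ k ∈ Finset.univ.filter (fun k => (i, k) ∈ E), xb.1 i k) ≤ 1}) ∩
         ((⋂ (i : I), ⋂ (k : K), {xb : (I → K → ℝ) × (I → K → ℝ) |
            (i, k) ∈ E → xb.2 i k ∈ Set.Icc (0:ℝ) (bbar i)}) ∩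
          (⋂ (i : I), ⋂ (k : K), {xb : (I → K → ℝ) × (I → K → ℝ) |
            (i, k) ∉ E → xb.1 i k = 0 ∧ xb.2 i k = 0}))) := by
      ext xb
      simp only [hS0def, Set.mem_setOf_eq, Set.mem_inter_iff, Set.mem_iInter]
    rw [hrep]
    refine IsClosed.inter ?_ (IsClosed.inter ?_ (IsClosed.inter ?_ ?_))
    · exact isClosed_iInter fun i => isClosed_iInter fun k =>
        isClosed_le continuous_const (hevalx i k)
    · exact isClosed_iInter fun i => isClosed_le
        (continuous_finset_sum _ fun k _ => hevalx i k) continuous_const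
    · refine isClosed_iInter fun i => isClosed_iInter fun k => ?_
      by_cases hik : (i,k) ∈ E
      · have hq : {xb : (I → K → ℝ) × (I → K → ℝ) | (i, k) ∈ E → xb.2 i k ∈ Set.Icc (0:ℝ) (bbar i)}
            = (fun xb : (I → K → ℝ) × (I → K → ℝ) => xb.2 i k) ⁻¹' (Set.Icc 0 (bbar i)) := by
          ext xb; simp [hik]
        rw [hq]
        exact IsClosed.preimage (hevalb i k) isClosed_Icc
      · have hq : {xb : (I → K → ℝ) × (I → K → ℝ) | (i, k) ∈ E → xb.2 i k ∈ Set.Icc (0:ℝ) (bbar i)}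
            = Set.univ := by ext xb; simp [hik]
        rw [hq]; exact isClosed_univ
    · refine isClosed_iInter fun i => isClosed_iInter fun k => ?_
      by_cases hik : (i,k) ∈ E
      · have hq : {xb : (I → K → ℝ) × (I → K → ℝ) | (i, k) ∉ E → xb.1 i k = 0 ∧ xb.2 i k = 0}
            = Set.univ := by ext xb; simp [hik]
        rw [hq]; exact isClosed_univ
      · have hq : {xb : (I → K → ℝ) × (I → K → ℝ) | (i, k) ∉ E → xb.1 i k = 0 ∧ xb.2 i k = 0}
            = {xb : (I → K → ℝ) × (I → K → ℝ) | xb.1 i k = 0}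
              ∩ {xb : (I → K → ℝ) × (I → K → ℝ) | xb.2 i k = 0} := by
          ext xb; simp [hik]
        rw [hq]
        exact (isClosed_eq (hevalx i k) continuous_const).inter
          (isClosed_eq (hevalb i k) continuous_const)
  have hS0comp : IsCompact S0 := by
    have hbox : IsCompact
        ((Set.pi Set.univ fun _ : I => Set.pi Set.univ fun _ : K => Set.Icc (0:ℝ) 1) ×ˢ
         (Set.pi Set.univ fun i : I => Set.pi Set.univ fun _ : K => Set.Icc (0:ℝ) (bbar i))) :=
      (isCompact_univ_pi fun _ => isCompact_univ_pi fun _ => isCompact_Icc).prod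
        (isCompact_univ_pi fun i => isCompact_univ_pi fun _ => isCompact_Icc)
    refine IsCompact.of_isClosed_subset hbox hS0closed ?_
    intro xb hxb
    refine ⟨?_, ?_⟩
    · intro i _
      intro k _
      refine ⟨hxb.1 i k, ?_⟩
      by_cases hik : (i,k) ∈ E
      · have h1 : xb.1 i k ≤ ∑ k' ∈ Finset.univ.filter (fun k' => (i, k') ∈ E), xb.1 i k' :=
          Finset.single_le_sum (fun k' _ => hxb.1 i k')
            (Finset.mem_filter.mpr ⟨Finset.mem_univ k, hik⟩)
        exact h1.trans (hxb.2.1 i)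
      · rw [(hxb.2.2.2 i k hik).1]; norm_num
    · intro i _
      intro k _
      by_cases hik : (i,k) ∈ E
      · exact hxb.2.2.1 i k hik
      · rw [(hxb.2.2.2 i k hik).2]
        exact ⟨le_refl 0, (hbbar i).le⟩
  -- continuity of objective pieces on S0
  have hρcomp : ∀ i k, (i,k) ∈ E →
      ContinuousOn (fun y : (I → K → ℝ) × (I → K → ℝ) => ρ i (y.2 i k)) S0 := by
    intro i k hik
    exact (hρcont i).comp (hevalb i k).continuousOn (fun y hy => hy.2.2.1 i k hik)
  have hβcomp : ∀ i k, (i,k) ∈ E →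
      ContinuousOn (fun y : (I → K → ℝ) × (I → K → ℝ) => β i (y.2 i k)) S0 := by
    intro i k hik
    exact (hβcont i).comp (hevalb i k).continuousOn (fun y hy => hy.2.2.1 i k hik)
  have haC : ContinuousOn (fun y : (I → K → ℝ) × (I → K → ℝ) => prof y.1 y.2) S0 := by
    have hform : (fun y : (I → K → ℝ) × (I → K → ℝ) => prof y.1 y.2)
        = fun y => ∑ e ∈ E,
          (r e.1 e.2 - β e.1 (y.2 e.1 e.2)) * ρ e.1 (y.2 e.1 e.2) * s e.1 * y.1 e.1 e.2 := by
      funext y; rw [hprof]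
      exact Finset.sum_congr rfl fun e _ => by rw [hdef]
    rw [hform]
    refine continuousOn_finset_sum _ fun e he => ?_
    have he' : (e.1, e.2) ∈ E := by simpa using he
    exact (((continuousOn_const.sub (hβcomp e.1 e.2 he')).mul (hρcomp e.1 e.2 he')).mul
      continuousOn_const).mul (hevalx e.1 e.2).continuousOn
  have hvvcont : ∀ k, ContinuousOn
      (fun y : (I → K → ℝ) × (I → K → ℝ) => v y.1 y.2 k) S0 := by
    intro k
    have hform : (fun y : (I → K → ℝ) × (I → K → ℝ) => v y.1 y.2 k)
        = fun y => ∑ i ∈ Finset.univ.filter (fun i => (i,k) ∈ E),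
            r i k * s i * y.1 i k * ρ i (y.2 i k) := by
      funext y; rw [hv]
    rw [hform]
    refine continuousOn_finset_sum _ fun i hi => ?_
    have hik : (i, k) ∈ E := (Finset.mem_filter.mp hi).2
    exact ((continuousOn_const.mul (hevalx i k).continuousOn).mul (hρcomp i k hik))
  -- u is continuous
  have hucont : Continuous u := by
    exact continuousOn_univ.mp (hu.continuousOn isOpen_univ)
  -- coercivity constant
  have hpreal : ∀ mu : K → ℝ, ∀ w : K → ℝ, (∑ k, mu k * w k) + u w ≤ (p mu).toReal := by
    intro mu w
    have hle : (((∑ k, mu k * w k) + u w : ℝ) : EReal) ≤ p mu := by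
      rw [hp]; exact le_iSup (fun w => (((∑ k, mu k * w k) + u w : ℝ) : EReal)) w
    have hbot : p mu ≠ ⊥ := by
      intro hb; rw [hb, le_bot_iff] at hle; exact (EReal.coe_ne_bot _) hle
    rw [← EReal.coe_toReal (hpfin mu) hbot] at hle
    exact EReal.coe_le_coe_iff.mp hle
  have hcoerex : ∃ Cst : ℝ, ∀ w : K → ℝ,
      (∑ k, lamstar k * w k) + u w ≤ Cst - ∑ k, |w k| := by
    refine ⟨(Finset.univ : Finset (K → Bool)).sup' ⟨fun _ => true, Finset.mem_univ _⟩
      (fun σb => (p (fun k => lamstar k + (if σb k then 1 else -1))).toReal), fun w => ?_⟩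
    set σb : K → Bool := fun k => decide (0 ≤ w k) with hσbdef
    have h1 : (∑ k, (lamstar k + (if σb k then 1 else -1)) * w k) + u w
        ≤ (p (fun k => lamstar k + (if σb k then 1 else -1))).toReal :=
      hpreal (fun k => lamstar k + (if σb k then 1 else -1)) w
    have h2 : (p (fun k => lamstar k + (if σb k then 1 else -1))).toReal
        ≤ (Finset.univ : Finset (K → Bool)).sup' ⟨fun _ => true, Finset.mem_univ _⟩
          (fun σb => (p (fun k => lamstar k + (if σb k then 1 else -1))).toReal) :=
      Finset.le_sup' (fun σb : K → Bool => (p (fun k => lamstar k + (if σb k then 1 else -1))).toReal) (Finset.mem_univ σb)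
    have h3 : (∑ k, (lamstar k + (if σb k then 1 else -1)) * w k)
        = (∑ k, lamstar k * w k) + ∑ k, |w k| := by
      rw [← Finset.sum_add_distrib]
      refine Finset.sum_congr rfl fun k _ => ?_
      by_cases hk : 0 ≤ w k
      · rw [abs_of_nonneg hk]
        simp only [hσbdef, hk, decide_eq_true_eq, if_pos]
        ring
      · push_neg at hk
        rw [abs_of_neg hk]
        have hd : (decide (0 ≤ w k)) = false := decide_eq_false (not_le.mpr hk)
        simp only [hσbdef, hd, Bool.false_eq_true, if_false]
        ring
    rw [h3] at h1
    linarith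
  obtain ⟨Cst, hcoer⟩ := hcoerex
  -- sum exchange
  have hswap : ∀ (g : I → K → ℝ),
      (∑ k, ∑ i ∈ Finset.univ.filter (fun i => (i, k) ∈ E), g i k) = ∑ e ∈ E, g e.1 e.2 := by
    intro g
    calc (∑ k, ∑ i ∈ Finset.univ.filter (fun i => (i, k) ∈ E), g i k)
        = ∑ k, ∑ i, if (i, k) ∈ E then g i k else 0 :=
          Finset.sum_congr rfl fun k _ => Finset.sum_filter _ _
      _ = ∑ i, ∑ k, if (i, k) ∈ E then g i k else 0 := Finset.sum_comm
      _ = ∑ e : I × K, if (e.1, e.2) ∈ E then g e.1 e.2 else 0 :=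
          (Fintype.sum_prod_type (f := fun e : I × K => if (e.1, e.2) ∈ E then g e.1 e.2 else 0)).symm
      _ = ∑ e ∈ Finset.univ ∩ E, g e.1 e.2 := by
          simp only [Prod.mk.eta]
          exact Finset.sum_ite_mem _ _ _
      _ = ∑ e ∈ E, g e.1 e.2 := by rw [Finset.univ_inter]
  have hobjdec : ∀ y : (I → K → ℝ) × (I → K → ℝ),
      prof y.1 y.2 - ∑ k, lamstar k * v y.1 y.2 k
      = ∑ e ∈ E, s e.1 * y.1 e.1 e.2 *
          ((r e.1 e.2 * (1 - lamstar e.2) - β e.1 (y.2 e.1 e.2)) * ρ e.1 (y.2 e.1 e.2)) := by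
    intro y
    rw [hprof]
    have h1 : ∑ k, lamstar k * v y.1 y.2 k
        = ∑ e ∈ E, lamstar e.2 * (r e.1 e.2 * s e.1 * y.1 e.1 e.2 * ρ e.1 (y.2 e.1 e.2)) := by
      rw [← hswap (fun i k => lamstar k * (r i k * s i * y.1 i k * ρ i (y.2 i k)))]
      refine Finset.sum_congr rfl fun k _ => ?_
      rw [hv, Finset.mul_sum]
    rw [h1, ← Finset.sum_sub_distrib]
    refine Finset.sum_congr rfl fun e he => ?_
    rw [hdef]
    ring
  -- canonical bids
  set B : I → K → ℝ := fun i k =>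
    if hc : (i, k) ∈ E ∧ lamstar k < 1 then (hUS i k hc.1 hc.2).choose else 0 with hBdef
  have hKEY : ∀ y : (I → K → ℝ) × (I → K → ℝ), y ∈ S0 →
      (∀ y' ∈ S0, prof y'.1 y'.2 - ∑ k, lamstar k * v y'.1 y'.2 k
        ≤ prof y.1 y.2 - ∑ k, lamstar k * v y.1 y.2 k) →
      ∀ i k, (i, k) ∈ E → 0 < y.1 i k → y.2 i k = B i k := by
    intro y hyS0 hymax i k hik hx
    have hbIcc : y.2 i k ∈ Set.Icc (0:ℝ) (bbar i) := hyS0.2.2.1 i k hik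
    have hsplit : ∀ z : (I → K → ℝ) × (I → K → ℝ),
        (∑ e ∈ E, s e.1 * z.1 e.1 e.2 *
          ((r e.1 e.2 * (1 - lamstar e.2) - β e.1 (z.2 e.1 e.2)) * ρ e.1 (z.2 e.1 e.2)))
        = s i * z.1 i k * ((r i k * (1 - lamstar k) - β i (z.2 i k)) * ρ i (z.2 i k))
          + ∑ e ∈ E.erase (i, k), s e.1 * z.1 e.1 e.2 *
            ((r e.1 e.2 * (1 - lamstar e.2) - β e.1 (z.2 e.1 e.2)) * ρ e.1 (z.2 e.1 e.2)) :=
      fun z => (Finset.add_sum_erase E _ hik).symm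
    have hbmax : ∀ b' ∈ Set.Icc (0:ℝ) (bbar i),
        (r i k * (1 - lamstar k) - β i b') * ρ i b'
        ≤ (r i k * (1 - lamstar k) - β i (y.2 i k)) * ρ i (y.2 i k) := by
      intro b' hb'
      set y' : (I → K → ℝ) × (I → K → ℝ) :=
        (y.1, fun i' k' => if i' = i ∧ k' = k then b' else y.2 i' k') with hy'def
      have hy'b : ∀ i' k', ¬(i' = i ∧ k' = k) → y'.2 i' k' = y.2 i' k' := by
        intro i' k' hne; simp only [hy'def]; rw [if_neg hne]
      have hy'bik : y'.2 i k = b' := by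
        simp [hy'def]
      have hy'S0 : y' ∈ S0 := by
        refine ⟨hyS0.1, hyS0.2.1, ?_, ?_⟩
        · intro i' k' hik'
          by_cases hc : i' = i ∧ k' = k
          · obtain ⟨rfl, rfl⟩ := hc
            rw [hy'bik]; exact hb'
          · rw [hy'b i' k' hc]; exact hyS0.2.2.1 i' k' hik'
        · intro i' k' hik'
          have hc : ¬(i' = i ∧ k' = k) := by
            rintro ⟨rfl, rfl⟩; exact hik' hik
          rw [hy'b i' k' hc]
          exact hyS0.2.2.2 i' k' hik'
      have hle := hymax y' hy'S0
      rw [hobjdec y', hobjdec y, hsplit y', hsplit y] at hle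
      have hrest : ∑ e ∈ E.erase (i, k), s e.1 * y'.1 e.1 e.2 *
            ((r e.1 e.2 * (1 - lamstar e.2) - β e.1 (y'.2 e.1 e.2)) * ρ e.1 (y'.2 e.1 e.2))
          = ∑ e ∈ E.erase (i, k), s e.1 * y.1 e.1 e.2 *
            ((r e.1 e.2 * (1 - lamstar e.2) - β e.1 (y.2 e.1 e.2)) * ρ e.1 (y.2 e.1 e.2)) := by
        refine Finset.sum_congr rfl fun e he => ?_
        have hne : ¬(e.1 = i ∧ e.2 = k) := by
          rintro ⟨h1, h2⟩
          exact (Finset.mem_erase.mp he).1 (Prod.ext h1 h2)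
        rw [hy'b e.1 e.2 hne]
      rw [hrest, hy'bik] at hle
      have hxx : y'.1 i k = y.1 i k := rfl
      rw [hxx] at hle
      have hpos : 0 < s i * y.1 i k := mul_pos (hs i) hx
      have hle2 : s i * y.1 i k * ((r i k * (1 - lamstar k) - β i b') * ρ i b')
          ≤ s i * y.1 i k * ((r i k * (1 - lamstar k) - β i (y.2 i k)) * ρ i (y.2 i k)) := by
        linarith
      exact le_of_mul_le_mul_left hle2 hpos
    by_cases hlt : lamstar k < 1
    · have hspec := (hUS i k hik hlt).choose_spec
      have hBik : B i k = (hUS i k hik hlt).choose := by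
        rw [hBdef]; exact dif_pos ⟨hik, hlt⟩
      rw [hBik]
      refine hspec.2 (y.2 i k) ⟨hbIcc, ?_⟩
      intro b hb
      rw [hdef, hdef]
      exact hbmax b hb
    · push_neg at hlt
      have hBik : B i k = 0 := by
        rw [hBdef]
        exact dif_neg (by rintro ⟨_, hc2⟩; exact absurd hc2 (not_lt.mpr hlt))
      rw [hBik]
      have hGnn : 0 ≤ (r i k * (1 - lamstar k) - β i (y.2 i k)) * ρ i (y.2 i k) := by
        set y'' : (I → K → ℝ) × (I → K → ℝ) :=
          ((fun i' k' => if i' = i ∧ k' = k then 0 else y.1 i' k'), y.2) with hy''def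
        have hy''x : ∀ i' k', ¬(i' = i ∧ k' = k) → y''.1 i' k' = y.1 i' k' := by
          intro i' k' hne; simp only [hy''def]; rw [if_neg hne]
        have hy''xik : y''.1 i k = 0 := by
          simp [hy''def]
        have hy''S0 : y'' ∈ S0 := by
          refine ⟨?_, ?_, hyS0.2.2.1, ?_⟩
          · intro i' k'
            by_cases hc : i' = i ∧ k' = k
            · obtain ⟨rfl, rfl⟩ := hc; rw [hy''xik]
            · rw [hy''x i' k' hc]; exact hyS0.1 i' k'
          · intro i'
            refine le_trans (Finset.sum_le_sum ?_) (hyS0.2.1 i')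
            intro k' hk'
            by_cases hc : i' = i ∧ k' = k
            · obtain ⟨rfl, rfl⟩ := hc; rw [hy''xik]; exact hyS0.1 _ _
            · rw [hy''x i' k' hc]
          · intro i' k' hik'
            have hc : ¬(i' = i ∧ k' = k) := by rintro ⟨rfl, rfl⟩; exact hik' hik
            rw [hy''x i' k' hc]
            exact hyS0.2.2.2 i' k' hik'
        have hle := hymax y'' hy''S0
        rw [hobjdec y'', hobjdec y, hsplit y'', hsplit y] at hle
        have hrest : ∑ e ∈ E.erase (i, k), s e.1 * y''.1 e.1 e.2 *
              ((r e.1 e.2 * (1 - lamstar e.2) - β e.1 (y''.2 e.1 e.2)) * ρ e.1 (y''.2 e.1 e.2))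
            = ∑ e ∈ E.erase (i, k), s e.1 * y.1 e.1 e.2 *
              ((r e.1 e.2 * (1 - lamstar e.2) - β e.1 (y.2 e.1 e.2)) * ρ e.1 (y.2 e.1 e.2)) := by
          refine Finset.sum_congr rfl fun e he => ?_
          have hne : ¬(e.1 = i ∧ e.2 = k) := by
            rintro ⟨h1, h2⟩
            exact (Finset.mem_erase.mp he).1 (Prod.ext h1 h2)
          rw [hy''x e.1 e.2 hne]
        have hb2 : y''.2 i k = y.2 i k := rfl
        rw [hrest, hy''xik, hb2] at hle
        have hpos : 0 < s i * y.1 i k := mul_pos (hs i) hx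
        by_contra hneg
        push_neg at hneg
        nlinarith
      by_contra hbne
      have hbpos : 0 < y.2 i k := lt_of_le_of_ne hbIcc.1 (Ne.symm hbne)
      have hβρ := hβρpos i (y.2 i k) ⟨hbpos, hbIcc.2⟩
      have hρnn : 0 ≤ ρ i (y.2 i k) := (hρ01 i _ hbIcc).1
      have hβnn : 0 ≤ β i (y.2 i k) := (hβb i _ hbIcc).1
      have hρpos : 0 < ρ i (y.2 i k) := by
        rcases hρnn.lt_or_eq with h1 | h1
        · exact h1
        · exfalso; rw [← h1] at hβρ; simp at hβρ
      have hβpos : 0 < β i (y.2 i k) := by nlinarith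
      have hrle : r i k * (1 - lamstar k) ≤ 0 :=
        mul_nonpos_of_nonneg_of_nonpos (hr i k hik).le (by linarith)
      have hGneg : (r i k * (1 - lamstar k) - β i (y.2 i k)) * ρ i (y.2 i k) < 0 :=
        mul_neg_of_neg_of_pos (by linarith) hρpos
      linarith
  have hVconv : Convex ℝ ((fun y : (I → K → ℝ) × (I → K → ℝ) => v y.1 y.2) ''
      {y | y ∈ S0 ∧ ∀ y' ∈ S0, prof y'.1 y'.2 - ∑ k, lamstar k * v y'.1 y'.2 k
        ≤ prof y.1 y.2 - ∑ k, lamstar k * v y.1 y.2 k}) := by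
    rintro w1 ⟨y1, ⟨hy1S, hy1max⟩, rfl⟩ w2 ⟨y2, ⟨hy2S, hy2max⟩, rfl⟩ θ τ hθ hτ hθτ
    set ymix : (I → K → ℝ) × (I → K → ℝ) :=
      (fun i k => θ * y1.1 i k + τ * y2.1 i k,
       fun i k => if y1.1 i k ≠ 0 then y1.2 i k else y2.2 i k) with hymixdef
    have hmix1 : ∀ i k, y1.1 i k ≠ 0 → ymix.2 i k = y1.2 i k := by
      intro i k h1; simp only [hymixdef]; rw [if_pos h1]
    have hmix2 : ∀ i k, y1.1 i k = 0 → ymix.2 i k = y2.2 i k := by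
      intro i k h1; simp only [hymixdef]; rw [if_neg (by simp [h1])]
    have hxmix : ∀ i k, ymix.1 i k = θ * y1.1 i k + τ * y2.1 i k := fun i k => rfl
    have hmixS0 : ymix ∈ S0 := by
      refine ⟨?_, ?_, ?_, ?_⟩
      · intro i k
        exact add_nonneg (mul_nonneg hθ (hy1S.1 i k)) (mul_nonneg hτ (hy2S.1 i k))
      · intro i
        have hsum : (∑ k ∈ Finset.univ.filter (fun k => (i, k) ∈ E), ymix.1 i k)
            = θ * (∑ k ∈ Finset.univ.filter (fun k => (i, k) ∈ E), y1.1 i k)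
              + τ * (∑ k ∈ Finset.univ.filter (fun k => (i, k) ∈ E), y2.1 i k) := by
          rw [Finset.mul_sum, Finset.mul_sum, ← Finset.sum_add_distrib]
        rw [hsum]
        have b1 := hy1S.2.1 i
        have b2 := hy2S.2.1 i
        nlinarith
      · intro i k hik
        by_cases h1 : y1.1 i k = 0
        · rw [hmix2 i k h1]; exact hy2S.2.2.1 i k hik
        · rw [hmix1 i k h1]; exact hy1S.2.2.1 i k hik
      · intro i k hik
        constructor
        · have e1 := (hy1S.2.2.2 i k hik).1
          have e2 := (hy2S.2.2.2 i k hik).1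
          rw [hxmix i k, e1, e2]; ring
        · by_cases h1 : y1.1 i k = 0
          · rw [hmix2 i k h1]; exact (hy2S.2.2.2 i k hik).2
          · exact absurd (hy1S.2.2.2 i k hik).1 h1
    have hedge : ∀ i k, (i, k) ∈ E → ∀ Φ : ℝ → ℝ,
        ymix.1 i k * Φ (ymix.2 i k)
          = θ * (y1.1 i k * Φ (y1.2 i k)) + τ * (y2.1 i k * Φ (y2.2 i k)) := by
      intro i k hik Φ
      rw [hxmix i k]
      by_cases h1 : y1.1 i k = 0
      · by_cases h2 : y2.1 i k = 0
        · rw [h1, h2]; ring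
        · rw [hmix2 i k h1, h1]; ring
      · by_cases h2 : y2.1 i k = 0
        · rw [hmix1 i k h1, h2]; ring
        · have hb1 : y1.2 i k = B i k := hKEY y1 hy1S hy1max i k hik
            (lt_of_le_of_ne (hy1S.1 i k) (Ne.symm h1))
          have hb2 : y2.2 i k = B i k := hKEY y2 hy2S hy2max i k hik
            (lt_of_le_of_ne (hy2S.1 i k) (Ne.symm h2))
          rw [hmix1 i k h1, hb1, hb2]; ring
    have hvmix : ∀ k, v ymix.1 ymix.2 k = θ * v y1.1 y1.2 k + τ * v y2.1 y2.2 k := by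
      intro k
      rw [hv, hv, hv, Finset.mul_sum, Finset.mul_sum, ← Finset.sum_add_distrib]
      refine Finset.sum_congr rfl fun i hi => ?_
      have hik : (i, k) ∈ E := (Finset.mem_filter.mp hi).2
      have hq := hedge i k hik (fun b => ρ i b)
      calc r i k * s i * ymix.1 i k * ρ i (ymix.2 i k)
          = r i k * s i * (ymix.1 i k * ρ i (ymix.2 i k)) := by ring
        _ = r i k * s i * (θ * (y1.1 i k * ρ i (y1.2 i k))
              + τ * (y2.1 i k * ρ i (y2.2 i k))) := by rw [hq]
        _ = θ * (r i k * s i * y1.1 i k * ρ i (y1.2 i k))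
              + τ * (r i k * s i * y2.1 i k * ρ i (y2.2 i k)) := by ring
    have hobjmix : prof ymix.1 ymix.2 - ∑ k, lamstar k * v ymix.1 ymix.2 k
        = θ * (prof y1.1 y1.2 - ∑ k, lamstar k * v y1.1 y1.2 k)
          + τ * (prof y2.1 y2.2 - ∑ k, lamstar k * v y2.1 y2.2 k) := by
      rw [hobjdec ymix, hobjdec y1, hobjdec y2, Finset.mul_sum, Finset.mul_sum,
        ← Finset.sum_add_distrib]
      refine Finset.sum_congr rfl fun e he => ?_
      have he' : (e.1, e.2) ∈ E := by simpa using he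
      have hq := hedge e.1 e.2 he'
        (fun b => (r e.1 e.2 * (1 - lamstar e.2) - β e.1 b) * ρ e.1 b)
      calc s e.1 * ymix.1 e.1 e.2 *
            ((r e.1 e.2 * (1 - lamstar e.2) - β e.1 (ymix.2 e.1 e.2)) * ρ e.1 (ymix.2 e.1 e.2))
          = s e.1 * (ymix.1 e.1 e.2 *
            ((r e.1 e.2 * (1 - lamstar e.2) - β e.1 (ymix.2 e.1 e.2)) * ρ e.1 (ymix.2 e.1 e.2))) := by
            ring
        _ = s e.1 * (θ * (y1.1 e.1 e.2 *
              ((r e.1 e.2 * (1 - lamstar e.2) - β e.1 (y1.2 e.1 e.2)) * ρ e.1 (y1.2 e.1 e.2)))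
            + τ * (y2.1 e.1 e.2 *
              ((r e.1 e.2 * (1 - lamstar e.2) - β e.1 (y2.2 e.1 e.2)) * ρ e.1 (y2.2 e.1 e.2)))) := by
            rw [hq]
        _ = θ * (s e.1 * y1.1 e.1 e.2 *
              ((r e.1 e.2 * (1 - lamstar e.2) - β e.1 (y1.2 e.1 e.2)) * ρ e.1 (y1.2 e.1 e.2)))
            + τ * (s e.1 * y2.1 e.1 e.2 *
              ((r e.1 e.2 * (1 - lamstar e.2) - β e.1 (y2.2 e.1 e.2)) * ρ e.1 (y2.2 e.1 e.2))) := by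
            ring
    have heq12 : prof y2.1 y2.2 - ∑ k, lamstar k * v y2.1 y2.2 k
        = prof y1.1 y1.2 - ∑ k, lamstar k * v y1.1 y1.2 k :=
      le_antisymm (hy1max y2 hy2S) (hy2max y1 hy1S)
    refine ⟨ymix, ⟨hmixS0, ?_⟩, ?_⟩
    · intro y' hy'
      have h0 := hy1max y' hy'
      rw [hobjmix, heq12]
      have h1 : θ * (prof y1.1 y1.2 - ∑ k, lamstar k * v y1.1 y1.2 k)
          + τ * (prof y1.1 y1.2 - ∑ k, lamstar k * v y1.1 y1.2 k)
          = prof y1.1 y1.2 - ∑ k, lamstar k * v y1.1 y1.2 k := by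
        rw [← add_mul, hθτ, one_mul]
      linarith
    · funext k
      simp only [Pi.add_apply, Pi.smul_apply, smul_eq_mul]
      exact hvmix k
  -- rewrite Q
  have hQeq' : ∀ lam : K → ℝ, Q lam =
      (⨆ y ∈ S0, ((prof y.1 y.2 - ∑ k, lam k * v y.1 y.2 k : ℝ) : EReal)) +
      ⨆ w : K → ℝ, (((∑ k, lam k * w k) + u w : ℝ) : EReal) := by
    intro lam
    rw [hQ lam, hp lam]
    congr 1
    apply le_antisymm
    · refine iSup₂_le fun y hy => ?_
      have heq : prof y.1 y.2 - ∑ k, lam k * v y.1 y.2 k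
          = prof (T y).1 (T y).2 - ∑ k, lam k * v (T y).1 (T y).2 k := (hobjT lam y).symm
      calc ((prof y.1 y.2 - ∑ k, lam k * v y.1 y.2 k : ℝ) : EReal)
          = ((prof (T y).1 (T y).2 - ∑ k, lam k * v (T y).1 (T y).2 k : ℝ) : EReal) := by
            rw [heq]
        _ ≤ _ := le_iSup₂_of_le (T y) (hTS y hy) le_rfl
    · exact iSup₂_le fun y hy => le_iSup₂_of_le y (hS0subS hy) le_rfl
  obtain ⟨y0, hy0S0, hy0max, hy0w⟩ := main_abstract S0 hS0ne hS0comp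
    (fun y => prof y.1 y.2) (fun y => v y.1 y.2) haC hvvcont u hucont hu lamstar Cst hcoer
    hVconv Q hQeq' hlam
  refine ⟨y0.1, y0.2, hS0subS hy0S0, ?_, ?_⟩
  · intro xb hxb
    calc prof xb.1 xb.2 - ∑ k, lamstar k * v xb.1 xb.2 k
        = prof (T xb).1 (T xb).2 - ∑ k, lamstar k * v (T xb).1 (T xb).2 k := (hobjT lamstar xb).symm
      _ ≤ prof y0.1 y0.2 - ∑ k, lamstar k * v y0.1 y0.2 k := hy0max (T xb) (hTS xb hxb)
  · have e1 : (⨆ y ∈ S0, ((prof y.1 y.2 - ∑ k, lamstar k * v y.1 y.2 k : ℝ) : EReal))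
        = ((prof y0.1 y0.2 - ∑ k, lamstar k * v y0.1 y0.2 k : ℝ) : EReal) :=
      ereal_biSup_eq _ S0 y0 hy0S0 hy0max
    have e2 : (⨆ w : K → ℝ, (((∑ k, lamstar k * w k) + u w : ℝ) : EReal))
        = (((∑ k, lamstar k * v y0.1 y0.2 k) + u (v y0.1 y0.2) : ℝ) : EReal) :=
      ereal_iSup_eq _ (v y0.1 y0.2) hy0w
    rw [hQeq' lamstar, e1, e2, ← EReal.coe_add]
    exact congrArg _ (by rw [hF]; ring)
end

section
/- Suppose ρ_i and β_i are continuous on [0, b̄_i] and β_i(b)ρ_i(b) > 0 for all b ∈ (0, b̄_i], for every i ∈ I. Let λ ∈ ℝ^K satisfy the Unique Solution condition: for every (i,k) ∈ E with λ_k < 1, the maximizer of b ↦ h_i(r_{ik}(1 − λ_k), b) over [0, b̄_i] is unique. Then for every i ∈ I the set V_i := { v_i(x_i, b_i) : (x_i, b_i) ∈ S_i*(λ) } ⊆ ℝ^K is convex. -/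
open scoped BigOperators Classical

private lemma sum_diff_single {K : Type*} [DecidableEq K] (F : Finset K) (k : K) (hk : k ∈ F)
    (f g : K → ℝ) (hfg : ∀ j ∈ F, j ≠ k → f j = g j) :
    ∑ j ∈ F, f j - ∑ j ∈ F, g j = f k - g k := by
  rw [← Finset.add_sum_erase F f hk, ← Finset.add_sum_erase F g hk,
    Finset.sum_congr rfl (fun j hj => hfg j (Finset.mem_of_mem_erase hj) (Finset.ne_of_mem_erase hj))]
  ring

theorem stmt_9
    {I K : Type*} [Fintype I] [Fintype K] [DecidableEq I] [DecidableEq K]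
    (E : Finset (I × K))
    (bbar : I → ℝ) (hbbar : ∀ i, 0 < bbar i)
    (ρ β : I → ℝ → ℝ)
    (hρmono : ∀ i, MonotoneOn (ρ i) (Set.Icc 0 (bbar i)))
    (hβmono : ∀ i, MonotoneOn (β i) (Set.Icc 0 (bbar i)))
    (hρ01 : ∀ i, ∀ b ∈ Set.Icc (0:ℝ) (bbar i), ρ i b ∈ Set.Icc (0:ℝ) 1)
    (hβb : ∀ i, ∀ b ∈ Set.Icc (0:ℝ) (bbar i), β i b ∈ Set.Icc (0:ℝ) b)
    (s : I → ℝ) (hs : ∀ i, 0 < s i)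
    (r : I → K → ℝ) (hr : ∀ i k, (i, k) ∈ E → 0 < r i k)
    (h : I → ℝ → ℝ → ℝ)
    (hdef : ∀ i z b, h i z b = (z - β i b) * ρ i b)
    (hρcont : ∀ i, ContinuousOn (ρ i) (Set.Icc 0 (bbar i)))
    (hβcont : ∀ i, ContinuousOn (β i) (Set.Icc 0 (bbar i)))
    (hβρpos : ∀ i, ∀ b ∈ Set.Ioc (0:ℝ) (bbar i), 0 < β i b * ρ i b)
    (Si : I → Set ((K → ℝ) × (K → ℝ)))
    (hSi : ∀ i, Si i = {xb | (∀ k, (i, k) ∈ E → 0 ≤ xb.1 k) ∧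
      (∑ k ∈ Finset.univ.filter (fun k => (i, k) ∈ E), xb.1 k) ≤ 1 ∧
      (∀ k, (i, k) ∈ E → xb.2 k ∈ Set.Icc (0:ℝ) (bbar i))})
    (obji : I → (K → ℝ) → (K → ℝ) → (K → ℝ) → ℝ)
    (hobji : ∀ i lam x b, obji i lam x b =
      ∑ k ∈ Finset.univ.filter (fun k => (i, k) ∈ E), h i (r i k * (1 - lam k)) (b k) * s i * x k)
    (Sistar : I → (K → ℝ) → Set ((K → ℝ) × (K → ℝ)))
    (hSistar : ∀ i lam, Sistar i lam =
      {xb | xb ∈ Si i ∧ ∀ yb ∈ Si i, obji i lam yb.1 yb.2 ≤ obji i lam xb.1 xb.2})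
    (vi : I → (K → ℝ) → (K → ℝ) → K → ℝ)
    (hvi : ∀ i x b k, vi i x b k = if (i, k) ∈ E then r i k * s i * x k * ρ i (b k) else 0)
    (lam : K → ℝ)
    (hUS : ∀ i k, (i, k) ∈ E → lam k < 1 →
      ∃! b0, b0 ∈ Set.Icc (0:ℝ) (bbar i) ∧
        ∀ b ∈ Set.Icc (0:ℝ) (bbar i),
          h i (r i k * (1 - lam k)) b ≤ h i (r i k * (1 - lam k)) b0) :
    ∀ i, Convex ℝ
      {w : K → ℝ | ∃ xb ∈ Sistar i lam, w = fun k => vi i xb.1 xb.2 k} := by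
  intro i
  intro w1 hw1 w2 hw2 t u ht hu htu
  obtain ⟨xb1, hxb1, rfl⟩ := hw1
  obtain ⟨xb2, hxb2, rfl⟩ := hw2
  rw [hSistar] at hxb1 hxb2
  obtain ⟨hS1, hopt1⟩ := hxb1
  obtain ⟨hS2, hopt2⟩ := hxb2
  have hbnonneg : (0:ℝ) ≤ bbar i := (hbbar i).le
  have hρnn : ∀ b ∈ Set.Icc (0:ℝ) (bbar i), 0 ≤ ρ i b := fun b hb => (hρ01 i b hb).1
  -- canonical bids
  have hBex : ∀ k : K, ∃ Bk : ℝ, Bk ∈ Set.Icc (0:ℝ) (bbar i) ∧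
      (((i,k) ∈ E ∧ lam k < 1) →
        (∀ b ∈ Set.Icc (0:ℝ) (bbar i),
          h i (r i k * (1 - lam k)) b ≤ h i (r i k * (1 - lam k)) Bk) ∧
        (∀ b' , b' ∈ Set.Icc (0:ℝ) (bbar i) →
          (∀ b ∈ Set.Icc (0:ℝ) (bbar i),
            h i (r i k * (1 - lam k)) b ≤ h i (r i k * (1 - lam k)) b') → b' = Bk)) ∧
      (¬((i,k) ∈ E ∧ lam k < 1) → Bk = 0) := by
    intro k
    by_cases hk : (i,k) ∈ E ∧ lam k < 1
    · obtain ⟨b0, hb0, huniq⟩ := hUS i k hk.1 hk.2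
      exact ⟨b0, hb0.1, fun _ => ⟨hb0.2, fun b' hb' hmax => huniq b' ⟨hb', hmax⟩⟩,
        fun hc => absurd hk hc⟩
    · exact ⟨0, ⟨le_refl _, hbnonneg⟩, fun hc => absurd hc hk, fun _ => rfl⟩
  choose B hBmem hBspec hBzero using hBex
  -- key lemma: at any optimum, if x_k * ρ(b_k) ≠ 0 then b_k = B k
  have key : ∀ xb : (K → ℝ) × (K → ℝ), xb ∈ Si i →
      (∀ yb ∈ Si i, obji i lam yb.1 yb.2 ≤ obji i lam xb.1 xb.2) →
      ∀ k, (i,k) ∈ E → xb.1 k * ρ i (xb.2 k) ≠ 0 → xb.2 k = B k := by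
    intro xb hmem hopt k hkE hq
    have hmem' := hmem
    rw [hSi] at hmem'
    obtain ⟨hxnn, hxsum, hbmem⟩ := hmem'
    have hbk : xb.2 k ∈ Set.Icc (0:ℝ) (bbar i) := hbmem k hkE
    have hρk : 0 ≤ ρ i (xb.2 k) := hρnn _ hbk
    have hxk : 0 < xb.1 k := by
      rcases lt_or_eq_of_le (hxnn k hkE) with h' | h'
      · exact h'
      · exact absurd (by rw [← h']; ring) hq
    have hρkpos : 0 < ρ i (xb.2 k) := by
      rcases lt_or_eq_of_le hρk with h' | h'
      · exact h'
      · exact absurd (by rw [← h']; ring) hq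
    have hkF : k ∈ Finset.univ.filter (fun k => (i, k) ∈ E) :=
      Finset.mem_filter.mpr ⟨Finset.mem_univ k, hkE⟩
    -- step A: b_k maximizes h
    have hmax : ∀ b' ∈ Set.Icc (0:ℝ) (bbar i),
        h i (r i k * (1 - lam k)) b' ≤ h i (r i k * (1 - lam k)) (xb.2 k) := by
      intro b' hb'
      have hfeas : (xb.1, Function.update xb.2 k b') ∈ Si i := by
        rw [hSi]
        refine ⟨hxnn, hxsum, ?_⟩
        intro k' hk'
        show Function.update xb.2 k b' k' ∈ Set.Icc (0:ℝ) (bbar i)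
        by_cases hkk : k' = k
        · subst hkk; simpa using hb'
        · rw [Function.update_of_ne hkk]; exact hbmem k' hk'
      have hle : obji i lam xb.1 (Function.update xb.2 k b') ≤ obji i lam xb.1 xb.2 :=
        hopt _ hfeas
      rw [hobji, hobji] at hle
      have hdiff := sum_diff_single _ k hkF
        (fun k' => h i (r i k' * (1 - lam k')) (Function.update xb.2 k b' k') * s i * xb.1 k')
        (fun k' => h i (r i k' * (1 - lam k')) (xb.2 k') * s i * xb.1 k')
        (fun j _ hjk => by simp [Function.update_of_ne hjk])
      simp only [Function.update_self] at hdiff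
      have hmul : h i (r i k * (1 - lam k)) b' * s i * xb.1 k ≤
          h i (r i k * (1 - lam k)) (xb.2 k) * s i * xb.1 k := by linarith
      exact le_of_mul_le_mul_right (le_of_mul_le_mul_right hmul hxk) (hs i)
    -- step B: 0 ≤ h at b_k
    have hge0 : 0 ≤ h i (r i k * (1 - lam k)) (xb.2 k) := by
      have hfeas : (Function.update xb.1 k 0, xb.2) ∈ Si i := by
        rw [hSi]
        refine ⟨?_, ?_, hbmem⟩
        · intro k' hk'
          show (0:ℝ) ≤ Function.update xb.1 k 0 k'
          by_cases hkk : k' = k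
          · subst hkk; simp
          · rw [Function.update_of_ne hkk]; exact hxnn k' hk'
        · refine le_trans (Finset.sum_le_sum ?_) hxsum
          intro j hj
          show Function.update xb.1 k 0 j ≤ xb.1 j
          by_cases hkk : j = k
          · subst hkk; rw [Function.update_self]; exact hxnn j ((Finset.mem_filter.mp hj).2)
          · rw [Function.update_of_ne hkk]
      have hle : obji i lam (Function.update xb.1 k 0) xb.2 ≤ obji i lam xb.1 xb.2 :=
        hopt _ hfeas
      rw [hobji, hobji] at hle
      have hdiff := sum_diff_single _ k hkF
        (fun k' => h i (r i k' * (1 - lam k')) (xb.2 k') * s i * Function.update xb.1 k 0 k')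
        (fun k' => h i (r i k' * (1 - lam k')) (xb.2 k') * s i * xb.1 k')
        (fun j _ hjk => by simp [Function.update_of_ne hjk])
      simp only [Function.update_self, mul_zero] at hdiff
      have hmul : 0 * (s i * xb.1 k) ≤
          h i (r i k * (1 - lam k)) (xb.2 k) * (s i * xb.1 k) := by nlinarith
      exact le_of_mul_le_mul_right hmul (mul_pos (hs i) hxk)
    -- step C
    by_cases hlt : lam k < 1
    · exact (hBspec k ⟨hkE, hlt⟩).2 (xb.2 k) hbk hmax
    · have hBk0 : B k = 0 := hBzero k (fun hc => hlt hc.2)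
      have hz : r i k * (1 - lam k) ≤ 0 := by
        have hr' := hr i k hkE
        have : (1:ℝ) - lam k ≤ 0 := by linarith [not_lt.mp hlt]
        nlinarith
      have hβk := hβb i (xb.2 k) hbk
      have hh := hge0
      rw [hdef] at hh
      have hzβ : 0 ≤ r i k * (1 - lam k) - β i (xb.2 k) := by
        refine le_of_mul_le_mul_right ?_ hρkpos
        rw [zero_mul]; exact hh
      have hβ0 : β i (xb.2 k) = 0 := le_antisymm (by linarith) hβk.1
      have hnotIoc : xb.2 k ∉ Set.Ioc (0:ℝ) (bbar i) := by
        intro hc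
        have := hβρpos i _ hc
        rw [hβ0, zero_mul] at this
        exact lt_irrefl _ this
      have hb0 : xb.2 k = 0 := by
        by_contra hne
        exact hnotIoc ⟨lt_of_le_of_ne hbk.1 (Ne.symm hne), hbk.2⟩
      rw [hb0, hBk0]
  have key1 := key xb1 hS1 hopt1
  have key2 := key xb2 hS2 hopt2
  have hS1' := hS1
  have hS2' := hS2
  rw [hSi] at hS1' hS2'
  obtain ⟨hx1nn, hx1sum, hb1mem⟩ := hS1'
  obtain ⟨hx2nn, hx2sum, hb2mem⟩ := hS2'
  have hρBnn : ∀ k, 0 ≤ ρ i (B k) := fun k => hρnn _ (hBmem k)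
  -- the combined point
  set x : K → ℝ := fun k =>
    if ((i,k) ∈ E ∧ ρ i (B k) ≠ 0) then
      (t * (xb1.1 k * ρ i (xb1.2 k)) + u * (xb2.1 k * ρ i (xb2.2 k))) / ρ i (B k)
    else 0 with hxdef
  have hzero1 : ∀ k, (i,k) ∈ E → ρ i (B k) = 0 → xb1.1 k * ρ i (xb1.2 k) = 0 := by
    intro k hk hρB
    by_contra hne
    have heq := key1 k hk hne
    rw [heq, hρB, mul_zero] at hne
    exact hne rfl
  have hzero2 : ∀ k, (i,k) ∈ E → ρ i (B k) = 0 → xb2.1 k * ρ i (xb2.2 k) = 0 := by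
    intro k hk hρB
    by_contra hne
    have heq := key2 k hk hne
    rw [heq, hρB, mul_zero] at hne
    exact hne rfl
  have hP1 : ∀ k, (i,k) ∈ E →
      x k * ρ i (B k) = t * (xb1.1 k * ρ i (xb1.2 k)) + u * (xb2.1 k * ρ i (xb2.2 k)) := by
    intro k hk
    by_cases hρB : ρ i (B k) = 0
    · simp only [hxdef]
      rw [if_neg (fun hc => hc.2 hρB), hzero1 k hk hρB, hzero2 k hk hρB, hρB]
      ring
    · simp only [hxdef]
      rw [if_pos ⟨hk, hρB⟩, div_mul_cancel₀ _ hρB]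
  have hxnn : ∀ k, 0 ≤ x k := by
    intro k
    simp only [hxdef]
    split_ifs with hc
    · refine div_nonneg (add_nonneg ?_ ?_) (hρBnn k)
      · exact mul_nonneg ht (mul_nonneg (hx1nn k hc.1) (hρnn _ (hb1mem k hc.1)))
      · exact mul_nonneg hu (mul_nonneg (hx2nn k hc.1) (hρnn _ (hb2mem k hc.1)))
    · exact le_refl 0
  have hxle : ∀ k, (i,k) ∈ E → x k ≤ t * xb1.1 k + u * xb2.1 k := by
    intro k hk
    by_cases hρB : ρ i (B k) = 0
    · simp only [hxdef]
      rw [if_neg (fun hc => hc.2 hρB)]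
      exact add_nonneg (mul_nonneg ht (hx1nn k hk)) (mul_nonneg hu (hx2nn k hk))
    · have hρBpos : 0 < ρ i (B k) := lt_of_le_of_ne (hρBnn k) (Ne.symm hρB)
      simp only [hxdef]
      rw [if_pos ⟨hk, hρB⟩, div_le_iff₀ hρBpos]
      have hle1 : xb1.1 k * ρ i (xb1.2 k) ≤ xb1.1 k * ρ i (B k) := by
        by_cases hq : xb1.1 k * ρ i (xb1.2 k) = 0
        · rw [hq]; exact mul_nonneg (hx1nn k hk) (hρBnn k)
        · rw [key1 k hk hq]
      have hle2 : xb2.1 k * ρ i (xb2.2 k) ≤ xb2.1 k * ρ i (B k) := by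
        by_cases hq : xb2.1 k * ρ i (xb2.2 k) = 0
        · rw [hq]; exact mul_nonneg (hx2nn k hk) (hρBnn k)
        · rw [key2 k hk hq]
      nlinarith [mul_le_mul_of_nonneg_left hle1 ht, mul_le_mul_of_nonneg_left hle2 hu]
  have hfeas : ((x, B) : (K → ℝ) × (K → ℝ)) ∈ Si i := by
    rw [hSi]
    refine ⟨fun k _ => hxnn k, ?_, fun k _ => hBmem k⟩
    calc ∑ k ∈ Finset.univ.filter (fun k => (i, k) ∈ E), x k
        ≤ ∑ k ∈ Finset.univ.filter (fun k => (i, k) ∈ E), (t * xb1.1 k + u * xb2.1 k) :=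
          Finset.sum_le_sum (fun k hk => hxle k ((Finset.mem_filter.mp hk).2))
      _ = t * (∑ k ∈ Finset.univ.filter (fun k => (i, k) ∈ E), xb1.1 k)
          + u * (∑ k ∈ Finset.univ.filter (fun k => (i, k) ∈ E), xb2.1 k) := by
          rw [Finset.sum_add_distrib, Finset.mul_sum, Finset.mul_sum]
      _ ≤ t * 1 + u * 1 := add_le_add (mul_le_mul_of_nonneg_left hx1sum ht)
          (mul_le_mul_of_nonneg_left hx2sum hu)
      _ = 1 := by rw [mul_one, mul_one, htu]
  have hterm : ∀ k ∈ Finset.univ.filter (fun k => (i, k) ∈ E),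
      h i (r i k * (1 - lam k)) (B k) * s i * x k
      = t * (h i (r i k * (1 - lam k)) (xb1.2 k) * s i * xb1.1 k)
        + u * (h i (r i k * (1 - lam k)) (xb2.2 k) * s i * xb2.1 k) := by
    intro k hk
    have hkE : (i,k) ∈ E := (Finset.mem_filter.mp hk).2
    have e1 : (r i k * (1 - lam k) - β i (xb1.2 k)) * (xb1.1 k * ρ i (xb1.2 k))
        = (r i k * (1 - lam k) - β i (B k)) * (xb1.1 k * ρ i (xb1.2 k)) := by
      by_cases hq : xb1.1 k * ρ i (xb1.2 k) = 0
      · rw [hq, mul_zero, mul_zero]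
      · rw [key1 k hkE hq]
    have e2 : (r i k * (1 - lam k) - β i (xb2.2 k)) * (xb2.1 k * ρ i (xb2.2 k))
        = (r i k * (1 - lam k) - β i (B k)) * (xb2.1 k * ρ i (xb2.2 k)) := by
      by_cases hq : xb2.1 k * ρ i (xb2.2 k) = 0
      · rw [hq, mul_zero, mul_zero]
      · rw [key2 k hkE hq]
    have hP := hP1 k hkE
    rw [hdef, hdef, hdef]
    linear_combination (s i * (r i k * (1 - lam k) - β i (B k))) * hP
      - (s i * t) * e1 - (s i * u) * e2
  have hobjnew : obji i lam x B
      = t * obji i lam xb1.1 xb1.2 + u * obji i lam xb2.1 xb2.2 := by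
    rw [hobji, hobji, hobji, Finset.mul_sum, Finset.mul_sum, ← Finset.sum_add_distrib]
    exact Finset.sum_congr rfl hterm
  have hobjeq : obji i lam xb2.1 xb2.2 = obji i lam xb1.1 xb1.2 :=
    le_antisymm (hopt1 xb2 hS2) (hopt2 xb1 hS1)
  have hobjopt : obji i lam x B = obji i lam xb1.1 xb1.2 := by
    rw [hobjnew, hobjeq]
    linear_combination (obji i lam xb1.1 xb1.2) * htu
  refine ⟨(x, B), ?_, ?_⟩
  · rw [hSistar]
    exact ⟨hfeas, fun yb hyb => by
      have : obji i lam ((x, B) : (K → ℝ) × (K → ℝ)).1 ((x, B) : (K → ℝ) × (K → ℝ)).2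
          = obji i lam xb1.1 xb1.2 := hobjopt
      rw [this]; exact hopt1 yb hyb⟩
  · funext k
    simp only [Pi.add_apply, Pi.smul_apply, smul_eq_mul]
    rw [hvi, hvi, hvi]
    by_cases hk : (i,k) ∈ E
    · rw [if_pos hk, if_pos hk, if_pos hk]
      have hP := hP1 k hk
      linear_combination (-(r i k * s i)) * hP
    · rw [if_neg hk, if_neg hk, if_neg hk]
      ring
end

section
/- Let b̄ > 0 and let ρ, β : [0, b̄] → ℝ be nondecreasing and differentiable with β(0) = 0, ρ'(b) > 0 for all b ∈ [0, b̄], and g(b) := (ρ(b)β(b))'/ρ'(b) strictly increasing on (0, b̄]. Fix r > 0 and define h(b) = (r − β(b))ρ(b) for b ∈ [0, b̄]. Then h has a unique maximizer b* on [0, b̄], given by b* = b̄ if g(b̄) ≤ r, and b* = inf{ b ∈ (0, b̄] : g(b) > r } otherwise. -/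
open scoped BigOperators Classical

theorem stmt_12
    (bbar : ℝ) (hbbar : 0 < bbar)
    (ρ β dρ dβ : ℝ → ℝ)
    (hρmono : MonotoneOn ρ (Set.Icc 0 bbar))
    (hβmono : MonotoneOn β (Set.Icc 0 bbar))
    (hβ0 : β 0 = 0)
    (hρd : ∀ b ∈ Set.Icc (0:ℝ) bbar, HasDerivWithinAt ρ (dρ b) (Set.Icc 0 bbar) b)
    (hβd : ∀ b ∈ Set.Icc (0:ℝ) bbar, HasDerivWithinAt β (dβ b) (Set.Icc 0 bbar) b)
    (hdρpos : ∀ b ∈ Set.Icc (0:ℝ) bbar, 0 < dρ b)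
    (g : ℝ → ℝ) (hg : ∀ b, g b = (dρ b * β b + ρ b * dβ b) / dρ b)
    (hgmono : StrictMonoOn g (Set.Ioc 0 bbar))
    (r : ℝ) (hr : 0 < r)
    (h : ℝ → ℝ) (hh : ∀ b, h b = (r - β b) * ρ b)
    (bstar : ℝ)
    (hbstar : bstar = if g bbar ≤ r then bbar
      else sInf {b | b ∈ Set.Ioc (0:ℝ) bbar ∧ r < g b}) :
    bstar ∈ Set.Icc (0:ℝ) bbar ∧ (∀ b ∈ Set.Icc (0:ℝ) bbar, h b ≤ h bstar) ∧
      ∀ b ∈ Set.Icc (0:ℝ) bbar, (∀ b' ∈ Set.Icc (0:ℝ) bbar, h b' ≤ h b) → b = bstar := by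
  have hfun : h = fun b => (r - β b) * ρ b := funext hh
  set dh : ℝ → ℝ := fun b => (r - β b) * dρ b - ρ b * dβ b with hdh
  -- h has derivative dh within Icc
  have hhd : ∀ b ∈ Set.Icc (0:ℝ) bbar, HasDerivWithinAt h (dh b) (Set.Icc 0 bbar) b := by
    intro b hb
    rw [hfun]
    have := (((hβd b hb).const_sub r).fun_mul (hρd b hb))
    convert this using 1
    show (r - β b) * dρ b - ρ b * dβ b = _; ring
    all_goals rfl
  -- sign of dh vs g
  have hsign : ∀ b ∈ Set.Icc (0:ℝ) bbar, dh b = dρ b * (r - g b) := by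
    intro b hb
    have hdρ := hdρpos b hb
    rw [hg b, hdh]
    field_simp
    ring
  have hcont : ContinuousOn h (Set.Icc 0 bbar) :=
    fun b hb => (hhd b hb).continuousWithinAt
  -- key facts
  have hbsmem : bstar ∈ Set.Icc (0:ℝ) bbar ∧
      (∀ b, 0 < b → b < bstar → g b < r) ∧
      (∀ b, bstar < b → b ≤ bbar → r < g b) := by
    by_cases hc : g bbar ≤ r
    · rw [hbstar, if_pos hc]
      refine ⟨⟨le_of_lt hbbar, le_refl _⟩, ?_, ?_⟩
      · intro b hb0 hbb
        exact lt_of_lt_of_le (hgmono ⟨hb0, hbb.le⟩ ⟨hbbar, le_refl _⟩ hbb) hc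
      · intro b hb1 hb2; linarith
    · rw [hbstar, if_neg hc]
      push_neg at hc
      set S : Set ℝ := {b | b ∈ Set.Ioc (0:ℝ) bbar ∧ r < g b} with hS
      have hSne : S.Nonempty := ⟨bbar, ⟨hbbar, le_refl _⟩, hc⟩
      have hSbdd : BddBelow S := ⟨0, fun x hx => hx.1.1.le⟩
      have h0le : 0 ≤ sInf S := le_csInf hSne fun x hx => hx.1.1.le
      have hlebbar : sInf S ≤ bbar := csInf_le hSbdd ⟨⟨hbbar, le_refl _⟩, hc⟩
      refine ⟨⟨h0le, hlebbar⟩, ?_, ?_⟩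
      · intro b hb0 hblt
        by_contra hcon
        push_neg at hcon
        set b' := (b + sInf S) / 2 with hb'
        have hbb' : b < b' := by simp [hb']; linarith
        have hb'lt : b' < sInf S := by simp [hb']; linarith
        have hb'bbar : b' ≤ bbar := le_trans hb'lt.le hlebbar
        have hb'S : b' ∈ S := by
          refine ⟨⟨lt_trans hb0 hbb', hb'bbar⟩, ?_⟩
          calc r ≤ g b := hcon
            _ < g b' := hgmono ⟨hb0, le_trans (le_of_lt hbb') hb'bbar⟩
                ⟨lt_trans hb0 hbb', hb'bbar⟩ hbb'
        exact absurd (csInf_le hSbdd hb'S) (not_le.mpr hb'lt)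
      · intro b hb1 hb2
        obtain ⟨s, hsS, hsb⟩ := exists_lt_of_csInf_lt hSne hb1
        calc r < g s := hsS.2
          _ < g b := hgmono hsS.1 ⟨lt_trans hsS.1.1 hsb, hb2⟩ hsb
  obtain ⟨hbsIcc, hlt, hgt⟩ := hbsmem
  obtain ⟨hbs0, hbsb⟩ := hbsIcc
  -- h strictly monotone on [0, bstar]
  have hmono1 : StrictMonoOn h (Set.Icc 0 bstar) := by
    have hsub : Set.Icc (0:ℝ) bstar ⊆ Set.Icc 0 bbar := Set.Icc_subset_Icc le_rfl hbsb
    apply strictMonoOn_of_hasDerivWithinAt_pos (f' := dh) (convex_Icc _ _)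
      (hcont.mono hsub)
    · intro x hx
      rw [interior_Icc] at hx
      exact (hhd x (hsub (Set.Ioo_subset_Icc_self hx))).mono
        (by rw [interior_Icc]; exact Set.Ioo_subset_Icc_self.trans hsub)
    · intro x hx
      rw [interior_Icc] at hx
      have hxI : x ∈ Set.Icc (0:ℝ) bbar := hsub (Set.Ioo_subset_Icc_self hx)
      rw [hsign x hxI]
      exact mul_pos (hdρpos x hxI) (by linarith [hlt x hx.1 hx.2])
  -- h strictly antitone on [bstar, bbar]
  have hanti : StrictAntiOn h (Set.Icc bstar bbar) := by
    have hsub : Set.Icc bstar bbar ⊆ Set.Icc 0 bbar := Set.Icc_subset_Icc hbs0 le_rfl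
    apply strictAntiOn_of_hasDerivWithinAt_neg (f' := dh) (convex_Icc _ _)
      (hcont.mono hsub)
    · intro x hx
      rw [interior_Icc] at hx
      exact (hhd x (hsub (Set.Ioo_subset_Icc_self hx))).mono
        (by rw [interior_Icc]; exact Set.Ioo_subset_Icc_self.trans hsub)
    · intro x hx
      rw [interior_Icc] at hx
      have hxI : x ∈ Set.Icc (0:ℝ) bbar := hsub (Set.Ioo_subset_Icc_self hx)
      rw [hsign x hxI]
      have := hgt x hx.1 hx.2.le
      nlinarith [hdρpos x hxI]
  have hmax : ∀ b ∈ Set.Icc (0:ℝ) bbar, h b ≤ h bstar := by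
    intro b hb
    rcases le_or_gt b bstar with hle | hlt'
    · exact hmono1.monotoneOn ⟨hb.1, hle⟩ ⟨hbs0, le_rfl⟩ hle
    · exact (hanti ⟨le_rfl, hbsb⟩ ⟨hlt'.le, hb.2⟩ hlt').le
  refine ⟨⟨hbs0, hbsb⟩, hmax, ?_⟩
  intro b hb hbmax
  by_contra hne
  have h1 : h bstar ≤ h b := hbmax bstar ⟨hbs0, hbsb⟩
  rcases lt_or_gt_of_ne hne with hlt' | hgt'
  · exact absurd h1 (not_le.mpr (hmono1 ⟨hb.1, hlt'.le⟩ ⟨hbs0, le_rfl⟩ hlt'))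
  · exact absurd h1 (not_le.mpr (hanti ⟨le_rfl, hbsb⟩ ⟨hgt'.le, hb.2⟩ hgt'))
end
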